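/- arXiv:2202.01113 — 9 statements merged into one kernel-verified Lean document; each statement's English description precedes it below -/
import Mathlib

section
/- Let {v^k}, {α^k}, {p^k} be nonnegative adapted random scalar sequences and {q^k} a deterministic nonnegative scalar sequence such that Σ_{k=0}^∞ α^k < ∞ almost surely, Σ_{k=0}^∞ q^k = ∞, Σ_{k=0}^∞ p^k < ∞ almost surely, and E[v^{k+1} | 𝓕^k] ≤ (1 + α^k − q^k) v^k + p^k almost surely for all k ≥ 0. Then Σ_{k=0}^∞ q^k v^k < ∞ and lim_{k→∞} v^k = 0 hold almost surely. -/
open MeasureTheory Filter Topology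


section RSAux

variable {Ω : Type*}

noncomputable def rsA (α : ℕ → Ω → ℝ) (k : ℕ) (ω : Ω) : ℝ :=
  ∏ j ∈ Finset.range k, (1 + α j ω)

noncomputable def rsW (α v : ℕ → Ω → ℝ) (k : ℕ) (ω : Ω) : ℝ :=
  (rsA α k ω)⁻¹ * v k ω

noncomputable def rsS (p : ℕ → Ω → ℝ) (k : ℕ) (ω : Ω) : ℝ :=
  ∑ j ∈ Finset.range k, p j ω

noncomputable def rst (α v : ℕ → Ω → ℝ) (q : ℕ → ℝ) (j : ℕ) (ω : Ω) : ℝ :=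
  q j * ((rsA α (j+1) ω)⁻¹ * v j ω)

noncomputable def rsT (α v : ℕ → Ω → ℝ) (q : ℕ → ℝ) (k : ℕ) (ω : Ω) : ℝ :=
  ∑ j ∈ Finset.range k, rst α v q j ω

noncomputable def rsZ (α v p : ℕ → Ω → ℝ) (q : ℕ → ℝ) (k : ℕ) (ω : Ω) : ℝ :=
  rsW α v k ω - rsS p k ω + rsT α v q k ω

def rsC (p : ℕ → Ω → ℝ) (a : ℝ) (k : ℕ) : Set Ω :=
  {ω | ∀ i ≤ k, rsS p (i+1) ω ≤ a}

noncomputable def rsY (α v p : ℕ → Ω → ℝ) (q : ℕ → ℝ) (a : ℝ) (k : ℕ) (ω : Ω) : ℝ :=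
  rsZ α v p q 0 ω + ∑ j ∈ Finset.range k,
    (rsC p a j).indicator (fun ω' => rsZ α v p q (j+1) ω' - rsZ α v p q j ω') ω

lemma rs_one_le_prod (ab : ℕ → ℝ) (h : ∀ j, 0 ≤ ab j) (k : ℕ) :
    1 ≤ ∏ j ∈ Finset.range k, (1 + ab j) := by
  induction k with
  | zero => simp
  | succ k ih =>
    rw [Finset.prod_range_succ]
    nlinarith [h k]

end RSAux

/-- Pathwise lower bound for the pre-stopped process. -/
lemma rs_aux_lb (Z S : ℕ → ℝ) (a : ℝ) (ha : 0 ≤ a) (hS0 : S 0 = 0)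
    (hZS : ∀ m, -(S m) ≤ Z m) (Y : ℕ → ℝ) (hY0 : Y 0 = Z 0)
    (hYstep : ∀ k, Y (k+1) = Y k +
      (if ∀ i ≤ k, S (i+1) ≤ a then Z (k+1) - Z k else 0)) :
    ∀ k, -a ≤ Y k := by
  have key : ∀ k, ((∀ j < k, ∀ i ≤ j, S (i+1) ≤ a) ∧ Y k = Z k) ∨
      (-a ≤ Y k ∧ ∃ j < k, ¬(∀ i ≤ j, S (i+1) ≤ a)) := by
    intro k
    induction k with
    | zero => exact Or.inl ⟨by omega, hY0⟩
    | succ k ih =>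
      rcases ih with ⟨h1, h2⟩ | ⟨h1, j, hj, h2⟩
      · by_cases hc : ∀ i ≤ k, S (i+1) ≤ a
        · left
          refine ⟨?_, by rw [hYstep k, if_pos hc, h2]; ring⟩
          intro j hj
          rcases Nat.lt_succ_iff_lt_or_eq.mp hj with h | h
          · exact h1 j h
          · subst h; exact hc
        · right
          refine ⟨?_, k, Nat.lt_succ_self k, hc⟩
          rw [hYstep k, if_neg hc, add_zero, h2]
          refine le_trans ?_ (hZS k)
          have hSk : S k ≤ a := by
            rcases Nat.eq_zero_or_pos k with h | h
            · rw [h, hS0]; exact ha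
            · obtain ⟨m, rfl⟩ := Nat.exists_eq_add_of_lt h
              simp only [Nat.zero_add] at *
              exact h1 m (Nat.lt_succ_self m) m le_rfl
          linarith
      · have hc : ¬(∀ i ≤ k, S (i+1) ≤ a) := fun h => h2 fun i hi => h i (hi.trans hj.le)
        right
        refine ⟨?_, j, hj.trans (Nat.lt_succ_self k), h2⟩
        rw [hYstep k, if_neg hc, add_zero]; exact h1
  intro k
  rcases key k with ⟨h1, h2⟩ | ⟨h1, _⟩
  · rw [h2]
    refine le_trans ?_ (hZS k)
    have hSk : S k ≤ a := by
      rcases Nat.eq_zero_or_pos k with h | h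
      · rw [h, hS0]; exact ha
      · obtain ⟨m, rfl⟩ := Nat.exists_eq_add_of_lt h
        simp only [Nat.zero_add] at *
        exact h1 m (Nat.lt_succ_self m) m le_rfl
    linarith
  · exact h1

/-- On paths where the partial sums of `p` stay `≤ a`, the pre-stopped process equals `Z`. -/
lemma rs_aux_eq (Z S : ℕ → ℝ) (a : ℝ) (Y : ℕ → ℝ) (hY0 : Y 0 = Z 0)
    (hYstep : ∀ k, Y (k+1) = Y k +
      (if ∀ i ≤ k, S (i+1) ≤ a then Z (k+1) - Z k else 0))
    (hS : ∀ i, S (i+1) ≤ a) : ∀ k, Y k = Z k := by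
  intro k
  induction k with
  | zero => exact hY0
  | succ k ih =>
    rw [hYstep k, if_pos fun i _ => hS i, ih]; ring

/-- Pathwise conclusion of the Robbins–Siegmund lemma, given convergence of the
compensated process. -/
lemma rs_aux_final (vb ab pb q : ℕ → ℝ)
    (hv : ∀ k, 0 ≤ vb k) (hα : ∀ k, 0 ≤ ab k) (hp : ∀ k, 0 ≤ pb k)
    (hq : ∀ k, 0 ≤ q k) (hαs : Summable ab) (hps : Summable pb)
    (hqd : ¬ Summable q) (c : ℝ)
    (hZ : Tendsto (fun k => (∏ j ∈ Finset.range k, (1 + ab j))⁻¹ * vb k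
        - (∑ j ∈ Finset.range k, pb j)
        + ∑ j ∈ Finset.range k, q j * ((∏ i ∈ Finset.range (j+1), (1 + ab i))⁻¹ * vb j))
      atTop (𝓝 c)) :
    Summable (fun k => q k * vb k) ∧ Tendsto vb atTop (𝓝 0) := by
  set A : ℕ → ℝ := fun k => ∏ j ∈ Finset.range k, (1 + ab j) with hA
  have hA1 : ∀ k, 1 ≤ A k := by
    intro k
    show (1:ℝ) ≤ ∏ j ∈ Finset.range k, (1 + ab j)
    induction k with
    | zero => simp
    | succ k ih =>
      rw [Finset.prod_range_succ]
      nlinarith [hα k]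
  have hApos : ∀ k, 0 < A k := fun k => lt_of_lt_of_le one_pos (hA1 k)
  have hAle : ∀ k, A k ≤ Real.exp (∑' j, ab j) := by
    intro k
    calc A k ≤ ∏ j ∈ Finset.range k, Real.exp (ab j) := by
          apply Finset.prod_le_prod
          · intro j _; linarith [hα j]
          · intro j _; exact Real.add_one_le_exp (ab j) |>.trans_eq' (by ring_nf)
      _ = Real.exp (∑ j ∈ Finset.range k, ab j) := by rw [Real.exp_sum]
      _ ≤ Real.exp (∑' j, ab j) := by
          apply Real.exp_le_exp.mpr
          exact Summable.sum_le_tsum _ (fun j _ => hα j) hαs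
  set M := Real.exp (∑' j, ab j) with hM
  have hAmono : Monotone A := by
    apply monotone_nat_of_le_succ
    intro k
    rw [hA]
    simp only [Finset.prod_range_succ]
    nlinarith [hApos k, hα k]
  have hAbdd : BddAbove (Set.range A) := ⟨M, by rintro x ⟨k, rfl⟩; exact hAle k⟩
  have hAtend : Tendsto A atTop (𝓝 (⨆ k, A k)) := tendsto_atTop_ciSup hAmono hAbdd
  set LA := ⨆ k, A k with hLA
  have hLA1 : 1 ≤ LA := le_ciSup_of_le hAbdd 0 (hA1 0)
  -- partial sums of pb converge
  have hStend : Tendsto (fun k => ∑ j ∈ Finset.range k, pb j) atTop (𝓝 (∑' j, pb j)) :=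
    hps.hasSum.tendsto_sum_nat
  -- hence W + T converges
  set W : ℕ → ℝ := fun k => (A k)⁻¹ * vb k with hW
  set t : ℕ → ℝ := fun j => q j * ((A (j+1))⁻¹ * vb j) with ht
  set T : ℕ → ℝ := fun k => ∑ j ∈ Finset.range k, t j with hT
  have hUtend : Tendsto (fun k => W k + T k) atTop (𝓝 (c + ∑' j, pb j)) := by
    have := hZ.add hStend
    convert this using 2 with k
    · ring
  have hWnn : ∀ k, 0 ≤ W k := fun k =>
    mul_nonneg (inv_nonneg.mpr (hApos k).le) (hv k)
  have htnn : ∀ j, 0 ≤ t j := fun j =>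
    mul_nonneg (hq j) (mul_nonneg (inv_nonneg.mpr (hApos (j+1)).le) (hv j))
  have hTmono : Monotone T := by
    apply monotone_nat_of_le_succ
    intro k
    rw [hT]
    simp only [Finset.sum_range_succ]
    linarith [htnn k]
  -- T is bounded above
  obtain ⟨B, hB⟩ : ∃ B, ∀ k, W k + T k ≤ B := by
    obtain ⟨B, hB⟩ := (hUtend.bddAbove_range).imp (fun B hB => hB)
    exact ⟨B, fun k => hB ⟨k, rfl⟩⟩
  have hTbdd : ∀ k, T k ≤ B := fun k => le_trans (by linarith [hWnn k]) (hB k)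
  have hts : Summable t := summable_of_sum_range_le htnn hTbdd
  have hTtend : Tendsto T atTop (𝓝 (∑' j, t j)) := hts.hasSum.tendsto_sum_nat
  have hWtend : Tendsto W atTop (𝓝 (c + (∑' j, pb j) - ∑' j, t j)) := by
    have := hUtend.sub hTtend
    convert this using 2 with k
    · ring
  -- Summability of q * vb
  have hqv_sum : Summable (fun k => q k * vb k) := by
    refine Summable.of_nonneg_of_le (fun k => mul_nonneg (hq k) (hv k))
      (fun k => ?_) (hts.mul_left M)
    have hne : A (k+1) ≠ 0 := (hApos (k+1)).ne'
    have h1 : q k * vb k = t k * A (k+1) := by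
      rw [ht]
      field_simp
    rw [h1]
    calc t k * A (k+1) ≤ t k * M := by
          exact mul_le_mul_of_nonneg_left (hAle (k+1)) (htnn k)
      _ = M * t k := by ring
  refine ⟨hqv_sum, ?_⟩
  -- vb k = A k * W k converges to LA * LW
  set LW := c + (∑' j, pb j) - ∑' j, t j with hLW
  have hvb_eq : ∀ k, vb k = A k * W k := by
    intro k
    rw [hW, ← mul_assoc, mul_inv_cancel₀ (hApos k).ne', one_mul]
  have hvtend : Tendsto vb atTop (𝓝 (LA * LW)) := by
    rw [funext hvb_eq]
    exact hAtend.mul hWtend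
  have hLWnn : 0 ≤ LW := le_of_tendsto_of_tendsto' tendsto_const_nhds hWtend
    (fun k => hWnn k)
  -- The limit must be zero
  have hL0 : LA * LW = 0 := by
    by_contra h
    have hLpos : 0 < LA * LW :=
      lt_of_le_of_ne (mul_nonneg (by linarith) hLWnn) (Ne.symm h)
    set L := LA * LW with hLdef
    have hev : ∀ᶠ k in atTop, L / 2 ≤ vb k :=
      hvtend.eventually (eventually_ge_nhds (by linarith))
    obtain ⟨N, hN⟩ := hev.exists_forall_of_atTop
    apply hqd
    rw [← summable_nat_add_iff N]
    refine Summable.of_nonneg_of_le (fun k => hq _) (fun k => ?_)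
      (((summable_nat_add_iff N).mpr hqv_sum).mul_left (2 / L))
    have h1 : L / 2 ≤ vb (k + N) := hN (k + N) (Nat.le_add_left N k)
    have h3 : q (k+N) * (L/2) ≤ q (k+N) * vb (k+N) :=
      mul_le_mul_of_nonneg_left h1 (hq _)
    rw [div_mul_eq_mul_div, le_div_iff₀ hLpos]
    linarith
  rw [hL0] at hvtend
  exact hvtend

/-- Robbins–Siegmund type lemma (Lemma 2 of the paper): if nonnegative adapted
random sequences satisfy `E[v^{k+1} | 𝓕^k] ≤ (1 + α^k − q^k) v^k + p^k` a.s. with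
`Σ α^k < ∞` a.s., `Σ p^k < ∞` a.s. and the deterministic sequence `q` satisfying
`Σ q^k = ∞`, then `Σ q^k v^k < ∞` and `v^k → 0` almost surely. -/
theorem stmt0
    {Ω : Type*} {m0 : MeasurableSpace Ω} {μ : Measure Ω} [IsProbabilityMeasure μ]
    (𝓕 : Filtration ℕ m0)
    (v α p : ℕ → Ω → ℝ) (q : ℕ → ℝ)
    (hv_adapted : Adapted 𝓕 v)
    (hα_adapted : Adapted 𝓕 α)
    (hp_adapted : Adapted 𝓕 p)
    (hv_int : ∀ k, Integrable (v k) μ)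
    (hα_int : ∀ k, Integrable (α k) μ)
    (hp_int : ∀ k, Integrable (p k) μ)
    (hv_nonneg : ∀ k, ∀ᵐ ω ∂μ, 0 ≤ v k ω)
    (hα_nonneg : ∀ k, ∀ᵐ ω ∂μ, 0 ≤ α k ω)
    (hp_nonneg : ∀ k, ∀ᵐ ω ∂μ, 0 ≤ p k ω)
    (hq_nonneg : ∀ k, 0 ≤ q k)
    (hα_sum : ∀ᵐ ω ∂μ, Summable (fun k => α k ω))
    (hq_div : ¬ Summable q)
    (hp_sum : ∀ᵐ ω ∂μ, Summable (fun k => p k ω))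
    (hrec : ∀ k, ∀ᵐ ω ∂μ,
      (μ[v (k+1) | 𝓕 k]) ω ≤ (1 + α k ω - q k) * v k ω + p k ω) :
    ∀ᵐ ω ∂μ, Summable (fun k => q k * v k ω) ∧
      Tendsto (fun k => v k ω) atTop (𝓝 (0 : ℝ)) := by
  classical
  -- global a.e. nonnegativity events
  have hGv : ∀ᵐ ω ∂μ, ∀ j, 0 ≤ v j ω := ae_all_iff.mpr hv_nonneg
  have hGα : ∀ᵐ ω ∂μ, ∀ j, 0 ≤ α j ω := ae_all_iff.mpr hα_nonneg
  have hGp : ∀ᵐ ω ∂μ, ∀ j, 0 ≤ p j ω := ae_all_iff.mpr hp_nonneg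
  -- measurability of A
  have hα_measn : ∀ j n, j ≤ n → Measurable[𝓕 n] (α j) := fun j n h =>
    (hα_adapted j).mono (𝓕.mono h) le_rfl
  have hv_measn : ∀ j n, j ≤ n → Measurable[𝓕 n] (v j) := fun j n h =>
    (hv_adapted j).mono (𝓕.mono h) le_rfl
  have hp_measn : ∀ j n, j ≤ n → Measurable[𝓕 n] (p j) := fun j n h =>
    (hp_adapted j).mono (𝓕.mono h) le_rfl
  have hA_meas : ∀ k n, k ≤ n + 1 → Measurable[𝓕 n] (rsA α k) := by
    intro k n hk
    apply Finset.measurable_prod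
    intro j hj
    rw [Finset.mem_range] at hj
    exact measurable_const.add (hα_measn j n (by omega))
  have hA_meas0 : ∀ k, Measurable (rsA α k) :=
    fun k => (hA_meas k k (by omega)).mono (𝓕.le k) le_rfl
  have hS_measn : ∀ k n, k ≤ n + 1 → Measurable[𝓕 n] (rsS p k) := by
    intro k n hk
    apply Finset.measurable_sum
    intro j hj
    rw [Finset.mem_range] at hj
    exact hp_measn j n (by omega)
  have hW_measn : ∀ k n, k ≤ n → Measurable[𝓕 n] (rsW α v k) := fun k n h =>
    ((hA_meas k n (by omega)).inv).mul (hv_measn k n h)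
  have ht_measn : ∀ j n, j ≤ n → Measurable[𝓕 n] (rst α v q j) := fun j n h =>
    (measurable_const.mul (((hA_meas (j+1) n (by omega)).inv).mul (hv_measn j n h)))
  have hT_measn : ∀ k n, k ≤ n → Measurable[𝓕 n] (rsT α v q k) := by
    intro k n h
    apply Finset.measurable_sum
    intro j hj
    rw [Finset.mem_range] at hj
    exact ht_measn j n (by omega)
  have hZ_measn : ∀ k n, k ≤ n → Measurable[𝓕 n] (rsZ α v p q k) := fun k n h =>
    (((hW_measn k n h).sub (hS_measn k n (by omega))).add (hT_measn k n h))
  -- a.e. bound 1 ≤ A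
  have hA1 : ∀ᵐ ω ∂μ, ∀ k, 1 ≤ rsA α k ω := by
    filter_upwards [hGα] with ω hω
    intro k
    exact rs_one_le_prod (fun j => α j ω) hω k
  -- integrability
  have hAinv_v_int : ∀ k j, Integrable (fun ω => (rsA α k ω)⁻¹ * v j ω) μ := by
    intro k j
    have hm : AEStronglyMeasurable (fun ω => (rsA α k ω)⁻¹ * v j ω) μ :=
      (((hA_meas0 k).inv).mul
        ((hv_adapted j).mono (𝓕.le j) le_rfl)).aestronglyMeasurable
    refine (hv_int j).mono hm ?_
    filter_upwards [hA1] with ω h1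
    have hApos : (0:ℝ) < rsA α k ω := lt_of_lt_of_le one_pos (h1 k)
    rw [norm_mul, Real.norm_eq_abs, Real.norm_eq_abs, abs_inv, abs_of_pos hApos]
    calc (rsA α k ω)⁻¹ * |v j ω| ≤ 1 * |v j ω| := by
          apply mul_le_mul_of_nonneg_right _ (abs_nonneg _)
          exact inv_le_one_of_one_le₀ (h1 k)
      _ = |v j ω| := one_mul _
  have hW_int : ∀ k, Integrable (rsW α v k) μ := fun k => hAinv_v_int k k
  have ht_int : ∀ j, Integrable (rst α v q j) μ := fun j =>
    (hAinv_v_int (j+1) j).const_mul (q j)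
  have hS_int : ∀ k, Integrable (rsS p k) μ := fun k =>
    integrable_finset_sum _ (fun j _ => hp_int j)
  have hT_int : ∀ k, Integrable (rsT α v q k) μ := fun k =>
    integrable_finset_sum _ (fun j _ => ht_int j)
  have hZ_int : ∀ k, Integrable (rsZ α v p q k) μ := fun k =>
    ((hW_int k).sub (hS_int k)).add (hT_int k)
  have hD_int : ∀ k, Integrable (fun ω => rsZ α v p q (k+1) ω - rsZ α v p q k ω) μ :=
    fun k => (hZ_int (k+1)).sub (hZ_int k)
  -- the key conditional expectation inequality
  have hcond : ∀ k, μ[fun ω => rsZ α v p q (k+1) ω - rsZ α v p q k ω | 𝓕 k]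
      ≤ᵐ[μ] (0 : Ω → ℝ) := by
    intro k
    set B : Ω → ℝ := fun ω => rst α v q k ω - p k ω - rsW α v k ω with hB
    have hB_meas : StronglyMeasurable[𝓕 k] B :=
      (((ht_measn k k le_rfl).sub (hp_measn k k le_rfl)).sub
        (hW_measn k k le_rfl)).stronglyMeasurable
    have hB_int : Integrable B μ := ((ht_int k).sub (hp_int k)).sub (hW_int k)
    have hf_meas : StronglyMeasurable[𝓕 k] (fun ω => (rsA α (k+1) ω)⁻¹) :=
      ((hA_meas (k+1) k le_rfl).inv).stronglyMeasurable
    have hfg_int : Integrable ((fun ω => (rsA α (k+1) ω)⁻¹) * v (k+1)) μ :=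
      hAinv_v_int (k+1) (k+1)
    have hDeq : (fun ω => rsZ α v p q (k+1) ω - rsZ α v p q k ω)
        = (fun ω => (rsA α (k+1) ω)⁻¹) * v (k+1) + B := by
      funext ω
      simp only [rsZ, rsW, rsS, rsT, Pi.add_apply, Pi.mul_apply,
        Finset.sum_range_succ, hB]
      ring
    have h1 : μ[(fun ω => (rsA α (k+1) ω)⁻¹) * v (k+1) + B | 𝓕 k]
        =ᵐ[μ] μ[(fun ω => (rsA α (k+1) ω)⁻¹) * v (k+1) | 𝓕 k] + μ[B | 𝓕 k] :=
      condExp_add hfg_int hB_int _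
    have h2 : μ[(fun ω => (rsA α (k+1) ω)⁻¹) * v (k+1) | 𝓕 k]
        =ᵐ[μ] (fun ω => (rsA α (k+1) ω)⁻¹) * μ[v (k+1) | 𝓕 k] :=
      condExp_mul_of_stronglyMeasurable_left hf_meas hfg_int (hv_int (k+1))
    have h3 : μ[B | 𝓕 k] = B := condExp_of_stronglyMeasurable (𝓕.le k) hB_meas hB_int
    rw [hDeq]
    filter_upwards [h1, h2, hrec k, hA1, hGv, hGα, hGp] with ω e1 e2 erec eA ev eα ep
    rw [Pi.zero_apply, e1, Pi.add_apply, e2, Pi.mul_apply]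
    have e3 : (μ[B | 𝓕 k]) ω = B ω := congrFun h3 ω
    rw [e3]
    have hApos : (0:ℝ) < rsA α k ω := lt_of_lt_of_le one_pos (eA k)
    have hbpos : (0:ℝ) < 1 + α k ω := by linarith [eα k]
    have hAsucc : rsA α (k+1) ω = rsA α k ω * (1 + α k ω) := by
      simp [rsA, Finset.prod_range_succ]
    have hfnn : (0:ℝ) ≤ (rsA α (k+1) ω)⁻¹ :=
      inv_nonneg.mpr (by nlinarith)
    have step1 : (rsA α (k+1) ω)⁻¹ * (μ[v (k+1) | 𝓕 k]) ω
        ≤ (rsA α (k+1) ω)⁻¹ * ((1 + α k ω - q k) * v k ω + p k ω) :=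
      mul_le_mul_of_nonneg_left erec hfnn
    have hinvle : (rsA α (k+1) ω)⁻¹ ≤ 1 := inv_le_one_of_one_le₀ (eA (k+1))
    have e4 : (rsA α (k+1) ω)⁻¹ * ((1 + α k ω - q k) * v k ω + p k ω)
        = (rsA α k ω)⁻¹ * v k ω - q k * ((rsA α (k+1) ω)⁻¹ * v k ω)
          + (rsA α (k+1) ω)⁻¹ * p k ω := by
      rw [hAsucc]
      field_simp
    have e5 : (rsA α (k+1) ω)⁻¹ * p k ω ≤ p k ω := by
      nlinarith [ep k]
    have hBval : B ω = q k * ((rsA α (k+1) ω)⁻¹ * v k ω) - p k ω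
        - (rsA α k ω)⁻¹ * v k ω := by
      simp only [hB, rst, rsW]
    linarith [step1]
  -- measurability of the events C
  have hC_meas : ∀ (a : ℝ) k, MeasurableSet[𝓕 k] (rsC p a k) := by
    intro a k
    have : rsC p a k = ⋂ i ∈ Finset.range (k+1), {ω | rsS p (i+1) ω ≤ a} := by
      ext ω
      simp [rsC, Nat.lt_succ_iff]
    rw [this]
    refine Finset.measurableSet_biInter _ (fun i hi => ?_)
    rw [Finset.mem_range] at hi
    exact measurableSet_le (hS_measn (i+1) k (by omega)) measurable_const
  -- the pre-stopped process Y is a supermartingale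
  have hYstep : ∀ (a : ℝ) k, rsY α v p q a (k+1) = rsY α v p q a k
      + (rsC p a k).indicator
        (fun ω' => rsZ α v p q (k+1) ω' - rsZ α v p q k ω') := by
    intro a k
    funext ω
    simp only [rsY, Finset.sum_range_succ, Pi.add_apply]
    ring
  have hYstep_pt : ∀ (a : ℝ) k (ω : Ω), rsY α v p q a (k+1) ω = rsY α v p q a k ω
      + (if (∀ i ≤ k, rsS p (i+1) ω ≤ a)
          then rsZ α v p q (k+1) ω - rsZ α v p q k ω else 0) := by
    intro a k ω
    have hstep := congrFun (hYstep a k) ω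
    rw [hstep, Pi.add_apply]
    congr 1
    rw [Set.indicator_apply]
    by_cases hcc : ∀ i ≤ k, rsS p (i+1) ω ≤ a
    · rw [if_pos (show ω ∈ rsC p a k from hcc), if_pos hcc]
    · rw [if_neg (show ω ∉ rsC p a k from hcc), if_neg hcc]
  have hY_int : ∀ (a : ℝ) k, Integrable (rsY α v p q a k) μ := by
    intro a k
    apply Integrable.add
    · exact hZ_int 0
    · apply integrable_finset_sum
      intro j _
      exact (hD_int j).indicator ((𝓕.le j) _ (hC_meas a j))
  have hY_meas : ∀ (a : ℝ) k, Measurable[𝓕 k] (rsY α v p q a k) := by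
    intro a k
    apply Measurable.add
    · exact (hZ_measn 0 k (by omega))
    · apply Finset.measurable_sum
      intro j hj
      rw [Finset.mem_range] at hj
      have hjk : j + 1 ≤ k := by omega
      exact (((hZ_measn (j+1) k hjk).sub (hZ_measn j k (by omega))).indicator
        ((𝓕.mono (by omega : j ≤ k)) _ (hC_meas a j)))
  have hY_sup : ∀ (a : ℝ), Supermartingale (rsY α v p q a) 𝓕 μ := by
    intro a
    apply supermartingale_nat (fun k => (hY_meas a k).stronglyMeasurable)
      (fun k => hY_int a k)
    intro k
    rw [hYstep a k]
    have h1 : μ[rsY α v p q a k + (rsC p a k).indicator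
          (fun ω' => rsZ α v p q (k+1) ω' - rsZ α v p q k ω') | 𝓕 k]
        =ᵐ[μ] μ[rsY α v p q a k | 𝓕 k] + μ[(rsC p a k).indicator
          (fun ω' => rsZ α v p q (k+1) ω' - rsZ α v p q k ω') | 𝓕 k] :=
      condExp_add (hY_int a k) ((hD_int k).indicator ((𝓕.le k) _ (hC_meas a k))) _
    have h2 : μ[rsY α v p q a k | 𝓕 k] = rsY α v p q a k :=
      condExp_of_stronglyMeasurable (𝓕.le k) (hY_meas a k).stronglyMeasurable
        (hY_int a k)
    have h3 : μ[(rsC p a k).indicator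
          (fun ω' => rsZ α v p q (k+1) ω' - rsZ α v p q k ω') | 𝓕 k]
        =ᵐ[μ] (rsC p a k).indicator
          (μ[fun ω' => rsZ α v p q (k+1) ω' - rsZ α v p q k ω' | 𝓕 k]) :=
      condExp_indicator (hD_int k) (hC_meas a k)
    filter_upwards [h1, h3, hcond k] with ω e1 e3 ec
    rw [e1, h2, Pi.add_apply, e3]
    have : (rsC p a k).indicator
        (μ[fun ω' => rsZ α v p q (k+1) ω' - rsZ α v p q k ω' | 𝓕 k]) ω ≤ 0 := by
      rw [Set.indicator_apply]
      split
      · exact ec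
      · exact le_rfl
    linarith
  -- a.e. lower bound on Y for a ≥ 0
  have hYlb : ∀ (a : ℝ), 0 ≤ a → ∀ᵐ ω ∂μ, ∀ k, -a ≤ rsY α v p q a k ω := by
    intro a ha
    filter_upwards [hA1, hGv, hGp] with ω eA ev ep
    have hZS : ∀ m, -(rsS p m ω) ≤ rsZ α v p q m ω := by
      intro m
      have hW : 0 ≤ rsW α v m ω :=
        mul_nonneg (inv_nonneg.mpr (le_trans zero_le_one (eA m))) (ev m)
      have hT : 0 ≤ rsT α v q m ω := by
        apply Finset.sum_nonneg
        intro j _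
        exact mul_nonneg (hq_nonneg j)
          (mul_nonneg (inv_nonneg.mpr (le_trans zero_le_one (eA (j+1)))) (ev j))
      simp only [rsZ]
      linarith
    refine rs_aux_lb (fun m => rsZ α v p q m ω) (fun m => rsS p m ω) a ha
      (by simp [rsS]) hZS (fun k => rsY α v p q a k ω) (by simp [rsY])
      (fun k => hYstep_pt a k ω)
  -- L¹ bound and convergence of Y
  have hYconv : ∀ (a : ℕ), ∀ᵐ ω ∂μ,
      ∃ c, Tendsto (fun n => rsY α v p q (a : ℝ) n ω) atTop (𝓝 c) := by
    intro a
    have ha : (0:ℝ) ≤ (a : ℝ) := Nat.cast_nonneg a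
    have hY0 : rsY α v p q (a : ℝ) 0 = v 0 := by
      funext ω
      simp [rsY, rsZ, rsW, rsS, rsT, rsA]
    have hmean : ∀ n, ∫ ω, rsY α v p q (a : ℝ) n ω ∂μ ≤ ∫ ω, v 0 ω ∂μ := by
      intro n
      have := (hY_sup (a : ℝ)).setIntegral_le (Nat.zero_le n) (MeasurableSet.univ)
      rw [Measure.restrict_univ, hY0] at this
      exact this
    set R : NNReal := (∫ ω, v 0 ω ∂μ + 2 * a).toNNReal with hR
    have hbdd : ∀ n, eLpNorm (rsY α v p q (a : ℝ) n) 1 μ ≤ (R : ENNReal) := by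
      intro n
      have hib : ∀ᵐ ω ∂μ, ‖rsY α v p q (a : ℝ) n ω‖ ≤ rsY α v p q (a : ℝ) n ω + 2 * a := by
        filter_upwards [hYlb (a : ℝ) ha] with ω hω
        have := hω n
        rw [Real.norm_eq_abs]
        rw [abs_le]
        constructor <;> linarith
      have hint1 : ∫ ω, ‖rsY α v p q (a : ℝ) n ω‖ ∂μ
          ≤ ∫ ω, v 0 ω ∂μ + 2 * a := by
        calc ∫ ω, ‖rsY α v p q (a:ℝ) n ω‖ ∂μ
            ≤ ∫ ω, (rsY α v p q (a:ℝ) n ω + 2 * a) ∂μ :=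
              integral_mono_ae (hY_int _ n).norm
                ((hY_int _ n).add (integrable_const _)) hib
          _ = (∫ ω, rsY α v p q (a:ℝ) n ω ∂μ) + 2 * a := by
              rw [integral_add (hY_int _ n) (integrable_const _), integral_const]
              simp
          _ ≤ ∫ ω, v 0 ω ∂μ + 2 * a := by linarith [hmean n]
      rw [eLpNorm_one_eq_lintegral_enorm,
        ← ofReal_integral_norm_eq_lintegral_enorm (hY_int _ n)]
      rw [hR]
      exact ENNReal.ofReal_le_ofReal hint1
    have hsub : Submartingale (-(rsY α v p q (a : ℝ))) 𝓕 μ := (hY_sup (a : ℝ)).neg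
    have hbdd' : ∀ n, eLpNorm ((-(rsY α v p q (a : ℝ))) n) 1 μ ≤ (R : ENNReal) := by
      intro n
      rw [Pi.neg_apply, eLpNorm_neg]
      exact hbdd n
    filter_upwards [hsub.exists_ae_tendsto_of_bdd hbdd'] with ω ⟨c, hc⟩
    refine ⟨-c, ?_⟩
    have h2 := hc.neg
    simp only [Pi.neg_apply, neg_neg] at h2
    exact h2
  -- Assemble
  have hYconv_all : ∀ᵐ ω ∂μ, ∀ (a : ℕ),
      ∃ c, Tendsto (fun n => rsY α v p q (a : ℝ) n ω) atTop (𝓝 c) :=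
    ae_all_iff.mpr hYconv
  filter_upwards [hYconv_all, hGv, hGα, hGp, hα_sum, hp_sum] with ω hYc ev eα ep eαs eps
  obtain ⟨a, ha⟩ := exists_nat_ge (∑' j, p j ω)
  have hSle : ∀ i, rsS p (i+1) ω ≤ (a : ℝ) := by
    intro i
    refine le_trans ?_ ha
    exact Summable.sum_le_tsum _ (fun j _ => ep j) eps
  obtain ⟨c, hc⟩ := hYc a
  have hYZ : ∀ k, rsY α v p q (a : ℝ) k ω = rsZ α v p q k ω := by
    refine rs_aux_eq (fun m => rsZ α v p q m ω) (fun m => rsS p m ω) (a : ℝ)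
      (fun k => rsY α v p q (a : ℝ) k ω) (by simp [rsY])
      (fun k => hYstep_pt (a : ℝ) k ω) hSle
  have hZc : Tendsto (fun k => rsZ α v p q k ω) atTop (𝓝 c) := by
    rw [← funext hYZ]
    exact hc
  exact rs_aux_final (fun k => v k ω) (fun k => α k ω) (fun k => p k ω) q
    ev eα ep hq_nonneg eαs eps hq_div c hZc
end

section
/- Let φ : ℝ^d → ℝ be continuous and suppose its set of minimizers Z* = argmin_{z∈ℝ^d} φ(z) is nonempty. Let {z^k} ⊂ ℝ^d be an adapted random sequence, {α^k} and {β^k} nonnegative adapted random scalar sequences with Σ_{k=0}^∞ α^k < ∞ and Σ_{k=0}^∞ β^k < ∞ almost surely, and {η^k} a deterministic nonnegative sequence with Σ_{k=0}^∞ η^k = ∞. If for every z* ∈ Z* and every k ≥ 0 one has E[‖z^{k+1} − z*‖² | 𝓕^k] ≤ (1 + α^k)‖z^k − z*‖² − η^k (φ(z^k) − φ(z*)) + β^k almost surely, then almost surely the sequence {z^k} converges to some (random) point of Z*. -/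
open MeasureTheory Filter Topology


section RSaux
variable {Ω : Type*}

/-- product A_k = ∏_{j<k} (1+α_j) -/
noncomputable def Ap (α : ℕ → Ω → ℝ) (k : ℕ) (ω : Ω) : ℝ :=
  ∏ j ∈ Finset.range k, (1 + α j ω)

lemma Ap_succ (α : ℕ → Ω → ℝ) (k : ℕ) (ω : Ω) :
    Ap α (k+1) ω = Ap α k ω * (1 + α k ω) := Finset.prod_range_succ _ _

lemma one_le_Ap {α : ℕ → Ω → ℝ} (hα : ∀ k ω, 0 ≤ α k ω) (k : ℕ) (ω : Ω) :
    1 ≤ Ap α k ω :=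
by
  rw [Ap]
  calc (1:ℝ) = ∏ _j ∈ Finset.range k, (1:ℝ) := by simp
    _ ≤ ∏ j ∈ Finset.range k, (1 + α j ω) := by
        apply Finset.prod_le_prod (fun j _ => zero_le_one)
        intro j _
        have := hα j ω; linarith

lemma Ap_pos {α : ℕ → Ω → ℝ} (hα : ∀ k ω, 0 ≤ α k ω) (k : ℕ) (ω : Ω) :
    0 < Ap α k ω := lt_of_lt_of_le one_pos (one_le_Ap hα k ω)

lemma Ap_mono {α : ℕ → Ω → ℝ} (hα : ∀ k ω, 0 ≤ α k ω) (ω : Ω) :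
    Monotone (fun k => Ap α k ω) := by
  apply monotone_nat_of_le_succ
  intro k
  rw [Ap_succ]
  nth_rewrite 1 [← mul_one (Ap α k ω)]
  apply mul_le_mul_of_nonneg_left (by have := hα k ω; linarith) (Ap_pos hα k ω).le

lemma Ap_le_exp {α : ℕ → Ω → ℝ} (hα : ∀ k ω, 0 ≤ α k ω) (k : ℕ) (ω : Ω) :
    Ap α k ω ≤ Real.exp (∑ j ∈ Finset.range k, α j ω) := by
  rw [Real.exp_sum]
  apply Finset.prod_le_prod (fun j _ => by have := hα j ω; linarith)
  intro j _
  have := Real.add_one_le_exp (α j ω)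
  linarith

lemma Ap_inv_le_one {α : ℕ → Ω → ℝ} (hα : ∀ k ω, 0 ≤ α k ω) (k : ℕ) (ω : Ω) :
    (Ap α k ω)⁻¹ ≤ 1 := by
  rw [inv_le_one_iff₀]
  right; exact one_le_Ap hα k ω

lemma Ap_inv_nonneg {α : ℕ → Ω → ℝ} (hα : ∀ k ω, 0 ≤ α k ω) (k : ℕ) (ω : Ω) :
    0 ≤ (Ap α k ω)⁻¹ := inv_nonneg.mpr (Ap_pos hα k ω).le

variable {m0 : MeasurableSpace Ω}

lemma Ap_sm (𝓕 : Filtration ℕ m0) {α : ℕ → Ω → ℝ} (hα : ∀ k, StronglyMeasurable[𝓕 k] (α k))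
    (k : ℕ) : StronglyMeasurable[𝓕 k] (Ap α (k+1)) := by
  have : ∀ n, n ≤ k + 1 → StronglyMeasurable[𝓕 k] (Ap α n) := by
    intro n hn
    induction n with
    | zero =>
      have he : Ap α 0 = fun (_ : Ω) => (1:ℝ) := by funext ω; simp [Ap]
      rw [he]; exact stronglyMeasurable_const
    | succ m ih =>
      have h1 : StronglyMeasurable[𝓕 k] (Ap α m) := ih (by omega)
      have h2 : StronglyMeasurable[𝓕 k] (α m) := (hα m).mono (𝓕.mono (by omega))
      have he : Ap α (m+1) = fun ω => Ap α m ω * (1 + α m ω) := funext (Ap_succ α m)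
      rw [he]
      exact h1.mul (stronglyMeasurable_const.add h2)
  exact this (k+1) le_rfl

lemma Ap_sm' (𝓕 : Filtration ℕ m0) {α : ℕ → Ω → ℝ} (hα : ∀ k, StronglyMeasurable[𝓕 k] (α k))
    (k : ℕ) : StronglyMeasurable[𝓕 k] (Ap α k) := by
  cases k with
  | zero =>
    have he : Ap α 0 = fun (_ : Ω) => (1:ℝ) := by funext ω; simp [Ap]
    rw [he]; exact stronglyMeasurable_const
  | succ m => exact (Ap_sm 𝓕 hα m).mono (𝓕.mono (Nat.le_succ m))

end RSaux

section RS
variable {Ω : Type*} {m0 : MeasurableSpace Ω} {μ : Measure Ω}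

lemma rs_lemma [IsProbabilityMeasure μ] (𝓕 : Filtration ℕ m0)
    (V D α β : ℕ → Ω → ℝ) (η : ℕ → ℝ)
    (hV_adp : ∀ k, StronglyMeasurable[𝓕 k] (V k))
    (hD_adp : ∀ k, StronglyMeasurable[𝓕 k] (D k))
    (hα_adp : ∀ k, StronglyMeasurable[𝓕 k] (α k))
    (hβ_adp : ∀ k, StronglyMeasurable[𝓕 k] (β k))
    (hV_int : ∀ k, Integrable (V k) μ)
    (hβ_int : ∀ k, Integrable (β k) μ)
    (hV0 : ∀ k ω, 0 ≤ V k ω) (hD0 : ∀ k ω, 0 ≤ D k ω)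
    (hα0 : ∀ k ω, 0 ≤ α k ω) (hβ0 : ∀ k ω, 0 ≤ β k ω)
    (hη0 : ∀ k, 0 ≤ η k)
    (hα_sum : ∀ᵐ ω ∂μ, Summable fun k => α k ω)
    (hβ_sum : ∀ᵐ ω ∂μ, Summable fun k => β k ω)
    (hrec : ∀ k, ∀ᵐ ω ∂μ,
      (μ[V (k+1)|𝓕 k]) ω ≤ (1 + α k ω) * V k ω - η k * D k ω + β k ω) :
    ∀ᵐ ω ∂μ, (∃ L, Tendsto (fun k => V k ω) atTop (𝓝 L))
      ∧ Summable (fun k => η k * D k ω) := by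
  classical
  set W : ℕ → Ω → ℝ := fun k ω => (Ap α k ω)⁻¹ * V k ω with hWdef
  set G : ℕ → Ω → ℝ := fun k ω => (Ap α (k+1) ω)⁻¹ * (η k * D k ω) with hGdef
  set Bt : ℕ → Ω → ℝ := fun k ω => (Ap α (k+1) ω)⁻¹ * β k ω with hBtdef
  set SG : ℕ → Ω → ℝ := fun k ω => ∑ j ∈ Finset.range k, G j ω with hSGdef
  set SB : ℕ → Ω → ℝ := fun k ω => ∑ j ∈ Finset.range k, Bt j ω with hSBdef
  set X : ℕ → Ω → ℝ := fun k ω => W k ω + SG k ω - SB k ω with hXdef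
  -- identity  (Ap α (k+1) ω)⁻¹ * (1 + α k ω) = (Ap α k ω)⁻¹
  have hid : ∀ k ω, (Ap α (k+1) ω)⁻¹ * (1 + α k ω) = (Ap α k ω)⁻¹ := by
    intro k ω
    have h1 : (0:ℝ) < 1 + α k ω := by have := hα0 k ω; linarith
    rw [Ap_succ, mul_inv, mul_assoc, inv_mul_cancel₀ h1.ne', mul_one]
  -- a.e. bound on G
  have hGbd : ∀ k, ∀ᵐ ω ∂μ, η k * D k ω ≤ (1 + α k ω) * V k ω + β k ω := by
    intro k
    have h0 : 0 ≤ᵐ[μ] μ[V (k+1)|𝓕 k] :=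
      condExp_nonneg (Eventually.of_forall (fun ω => hV0 (k+1) ω))
    filter_upwards [h0, hrec k] with ω h0ω hrω
    simp only [Pi.zero_apply] at h0ω
    linarith
  -- measurability
  have hW_sm : ∀ k, StronglyMeasurable[𝓕 k] (W k) :=
    fun k => ((Ap_sm' 𝓕 hα_adp k).measurable.inv.stronglyMeasurable).mul (hV_adp k)
  have hG_sm : ∀ k, StronglyMeasurable[𝓕 k] (G k) :=
    fun k => ((Ap_sm 𝓕 hα_adp k).measurable.inv.stronglyMeasurable).mul
      (stronglyMeasurable_const.mul (hD_adp k))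
  have hBt_sm : ∀ k, StronglyMeasurable[𝓕 k] (Bt k) :=
    fun k => ((Ap_sm 𝓕 hα_adp k).measurable.inv.stronglyMeasurable).mul (hβ_adp k)
  have hSG_sm : ∀ k n, n ≤ k + 1 → StronglyMeasurable[𝓕 k] (SG n) := by
    intro k n hn
    have : StronglyMeasurable[𝓕 k] (fun ω => ∑ j ∈ Finset.range n, G j ω) := by
      apply Finset.stronglyMeasurable_fun_sum
      intro j hj
      have hj' : j ≤ k := by simp only [Finset.mem_range] at hj; omega
      exact (hG_sm j).mono (𝓕.mono hj')
    exact this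
  have hSB_sm : ∀ k n, n ≤ k + 1 → StronglyMeasurable[𝓕 k] (SB n) := by
    intro k n hn
    have : StronglyMeasurable[𝓕 k] (fun ω => ∑ j ∈ Finset.range n, Bt j ω) := by
      apply Finset.stronglyMeasurable_fun_sum
      intro j hj
      have hj' : j ≤ k := by simp only [Finset.mem_range] at hj; omega
      exact (hBt_sm j).mono (𝓕.mono hj')
    exact this
  have hX_sm : ∀ k, StronglyMeasurable[𝓕 k] (X k) := by
    intro k
    exact ((hW_sm k).add (hSG_sm k k (by omega))).sub (hSB_sm k k (by omega))
  -- integrability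
  have hW_int : ∀ k, Integrable (W k) μ := by
    intro k
    apply (hV_int k).mono' (((hW_sm k).mono (𝓕.le k)).aestronglyMeasurable)
    apply Eventually.of_forall
    intro ω
    have h1 := Ap_inv_le_one hα0 k ω
    have h2 := Ap_inv_nonneg hα0 k ω
    have h3 := hV0 k ω
    have hWval : W k ω = (Ap α k ω)⁻¹ * V k ω := rfl
    rw [Real.norm_eq_abs, hWval, abs_of_nonneg (by positivity)]
    nlinarith
  have hG_int : ∀ k, Integrable (G k) μ := by
    intro k
    apply Integrable.mono' ((hV_int k).add (hβ_int k))
      (((hG_sm k).mono (𝓕.le k)).aestronglyMeasurable)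
    filter_upwards [hGbd k] with ω hb
    have h1 := Ap_inv_le_one hα0 (k+1) ω
    have h2 := Ap_inv_nonneg hα0 (k+1) ω
    have h3 := hD0 k ω
    have h4 := hη0 k
    have h5 := hV0 k ω
    have h6 := hβ0 k ω
    have h7 := hα0 k ω
    have hGval : G k ω = (Ap α (k+1) ω)⁻¹ * (η k * D k ω) := rfl
    rw [Real.norm_eq_abs, hGval, abs_of_nonneg (by positivity)]
    have key : (Ap α (k+1) ω)⁻¹ * (η k * D k ω) ≤
        (Ap α (k+1) ω)⁻¹ * ((1 + α k ω) * V k ω + β k ω) :=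
      mul_le_mul_of_nonneg_left hb h2
    have key2 : (Ap α (k+1) ω)⁻¹ * ((1 + α k ω) * V k ω + β k ω)
        = (Ap α k ω)⁻¹ * V k ω + (Ap α (k+1) ω)⁻¹ * β k ω := by
      rw [← hid k ω]; ring
    have h8 := Ap_inv_le_one hα0 k ω
    have h9 := Ap_inv_nonneg hα0 k ω
    have e1 : (Ap α k ω)⁻¹ * V k ω ≤ V k ω := by nlinarith
    have e2 : (Ap α (k+1) ω)⁻¹ * β k ω ≤ β k ω := by nlinarith
    have := key.trans_eq key2
    show (Ap α (k+1) ω)⁻¹ * (η k * D k ω) ≤ V k ω + β k ω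
    linarith
  have hBt_int : ∀ k, Integrable (Bt k) μ := by
    intro k
    apply Integrable.mono' (hβ_int k).norm
      (((hBt_sm k).mono (𝓕.le k)).aestronglyMeasurable)
    apply Eventually.of_forall
    intro ω
    have h1 := Ap_inv_le_one hα0 (k+1) ω
    have h2 := Ap_inv_nonneg hα0 (k+1) ω
    have hBval : Bt k ω = (Ap α (k+1) ω)⁻¹ * β k ω := rfl
    rw [Real.norm_eq_abs, Real.norm_eq_abs, hBval, abs_mul, abs_of_nonneg h2]
    nth_rewrite 2 [← one_mul |β k ω|]
    exact mul_le_mul_of_nonneg_right h1 (abs_nonneg _)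
  have hSG_int : ∀ k, Integrable (SG k) μ := by
    intro k
    have : Integrable (fun ω => ∑ j ∈ Finset.range k, G j ω) μ :=
      integrable_finset_sum _ (fun j _ => hG_int j)
    exact this
  have hSB_int : ∀ k, Integrable (SB k) μ := by
    intro k
    have : Integrable (fun ω => ∑ j ∈ Finset.range k, Bt j ω) μ :=
      integrable_finset_sum _ (fun j _ => hBt_int j)
    exact this
  have hX_int : ∀ k, Integrable (X k) μ :=
    fun k => ((hW_int k).add (hSG_int k)).sub (hSB_int k)
  -- supermartingale inequality
  have hXsuper : ∀ k, μ[X (k+1)|𝓕 k] ≤ᵐ[μ] X k := by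
    intro k
    -- decompose X (k+1)
    have hXeq : X (k+1) = fun ω => W (k+1) ω + (SG (k+1) ω - SB (k+1) ω) := by
      funext ω; rw [hXdef]; ring
    have hcadd : μ[X (k+1)|𝓕 k] =ᵐ[μ]
        μ[W (k+1)|𝓕 k] + μ[fun ω => SG (k+1) ω - SB (k+1) ω|𝓕 k] := by
      rw [hXeq]
      exact condExp_add (hW_int (k+1)) ((hSG_int (k+1)).sub (hSB_int (k+1))) (𝓕 k)
    have hcS : μ[fun ω => SG (k+1) ω - SB (k+1) ω|𝓕 k]
        = fun ω => SG (k+1) ω - SB (k+1) ω :=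
      condExp_of_stronglyMeasurable (𝓕.le k)
        ((hSG_sm k (k+1) le_rfl).sub (hSB_sm k (k+1) le_rfl))
        ((hSG_int (k+1)).sub (hSB_int (k+1)))
    have hcW : μ[W (k+1)|𝓕 k] =ᵐ[μ]
        (fun ω => (Ap α (k+1) ω)⁻¹) * μ[V (k+1)|𝓕 k] := by
      have : W (k+1) = (fun ω => (Ap α (k+1) ω)⁻¹) * V (k+1) := rfl
      rw [this]
      exact condExp_mul_of_stronglyMeasurable_left
        ((Ap_sm 𝓕 hα_adp k).measurable.inv.stronglyMeasurable)
        (by rw [← this]; exact hW_int (k+1)) (hV_int (k+1))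
    filter_upwards [hcadd, hcW, hrec k] with ω hA hWω hR
    simp only [Pi.add_apply] at hA
    simp only [Pi.mul_apply] at hWω
    rw [hA, hWω, hcS]
    have h2 := Ap_inv_nonneg hα0 (k+1) ω
    have hle : (Ap α (k+1) ω)⁻¹ * (μ[V (k+1)|𝓕 k]) ω ≤
        (Ap α (k+1) ω)⁻¹ * ((1 + α k ω) * V k ω - η k * D k ω + β k ω) :=
      mul_le_mul_of_nonneg_left hR h2
    have hexp : (Ap α (k+1) ω)⁻¹ * ((1 + α k ω) * V k ω - η k * D k ω + β k ω)
        = W k ω - G k ω + Bt k ω := by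
      show _ = (Ap α k ω)⁻¹ * V k ω - (Ap α (k+1) ω)⁻¹ * (η k * D k ω)
        + (Ap α (k+1) ω)⁻¹ * β k ω
      rw [← hid k ω]; ring
    have hSGs : SG (k+1) ω = SG k ω + G k ω := Finset.sum_range_succ _ _
    have hSBs : SB (k+1) ω = SB k ω + Bt k ω := Finset.sum_range_succ _ _
    show (Ap α (k+1) ω)⁻¹ * (μ[V (k+1)|𝓕 k]) ω + (SG (k+1) ω - SB (k+1) ω)
      ≤ W k ω + SG k ω - SB k ω
    linarith [hle.trans_eq hexp, hSGs, hSBs]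
  have hXadp : StronglyAdapted 𝓕 X := fun k => hX_sm k
  have hXsup : Supermartingale X 𝓕 μ := supermartingale_nat hXadp hX_int hXsuper
  -- nonnegativity of W, SG, Bt
  have hW0 : ∀ k ω, 0 ≤ W k ω :=
    fun k ω => mul_nonneg (Ap_inv_nonneg hα0 k ω) (hV0 k ω)
  have hG0 : ∀ k ω, 0 ≤ G k ω :=
    fun k ω => mul_nonneg (Ap_inv_nonneg hα0 (k+1) ω) (mul_nonneg (hη0 k) (hD0 k ω))
  have hBt0 : ∀ k ω, 0 ≤ Bt k ω :=
    fun k ω => mul_nonneg (Ap_inv_nonneg hα0 (k+1) ω) (hβ0 k ω)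
  have hSG0 : ∀ k ω, 0 ≤ SG k ω :=
    fun k ω => Finset.sum_nonneg (fun j _ => hG0 j ω)
  have hSB0 : ∀ k ω, 0 ≤ SB k ω :=
    fun k ω => Finset.sum_nonneg (fun j _ => hBt0 j ω)
  have hSBzero : ∀ ω, SB 0 ω = 0 := fun ω => Finset.sum_range_zero _
  have hXlow : ∀ m ω, - X m ω ≤ SB m ω := by
    intro m ω
    have h1 := hW0 m ω
    have h2 := hSG0 m ω
    show -(W m ω + SG m ω - SB m ω) ≤ SB m ω
    linarith
  have hSBmono : ∀ ω, Monotone (fun n => SB n ω) := by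
    intro ω
    apply monotone_nat_of_le_succ
    intro n
    have : SB (n+1) ω = SB n ω + Bt n ω := Finset.sum_range_succ _ _
    rw [this]
    linarith [hBt0 n ω]
  -- truncated convergence
  have hconvX : ∀ c : ℕ, ∀ᵐ ω ∂μ, (∀ j, SB (j+1) ω ≤ (c:ℝ)) →
      ∃ L, Tendsto (fun n => X n ω) atTop (𝓝 L) := by
    intro c
    classical
    set negX : ℕ → Ω → ℝ := fun n ω => - X n ω with hnegXdef
    set Y : ℕ → Ω → ℝ := fun n ω =>
      if h : ∃ j, (c:ℝ) < SB (j+1) ω then negX (min n (Nat.find h)) ω else negX n ω with hYdef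
    set σ : ℕ → Ω → ℕ := fun N ω =>
      if h : ∃ j, (c:ℝ) < SB (j+1) ω then min (Nat.find h) N else N with hσdef
    have hnegXsub : Submartingale negX 𝓕 μ := by
      have := hXsup.neg
      have he : negX = -X := by funext n ω; rfl
      rw [he]; exact this
    have hστ : ∀ N, IsStoppingTime 𝓕 (fun ω => WithTop.some (σ N ω)) := by
      intro N i
      simp only [WithTop.coe_le_coe]
      by_cases hNi : N ≤ i
      · have : {ω | σ N ω ≤ i} = Set.univ := by
          ext ω
          simp only [Set.mem_setOf_eq, Set.mem_univ, iff_true]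
          by_cases h : ∃ j, (c:ℝ) < SB (j+1) ω
          · simp only [hσdef, dif_pos h]; omega
          · simp only [hσdef, dif_neg h]; omega
        rw [this]
        exact MeasurableSet.univ
      · have : {ω | σ N ω ≤ i} = ⋃ j ∈ Finset.range (i+1), {ω | (c:ℝ) < SB (j+1) ω} := by
          ext ω
          simp only [Set.mem_setOf_eq, Set.mem_iUnion, Finset.mem_range]
          constructor
          · intro hσi
            by_cases h : ∃ j, (c:ℝ) < SB (j+1) ω
            · simp only [hσdef, dif_pos h] at hσi
              have hfind : Nat.find h ≤ i := by omega
              exact ⟨Nat.find h, by omega, Nat.find_spec h⟩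
            · simp only [hσdef, dif_neg h] at hσi; omega
          · rintro ⟨j, hji, hj⟩
            have h : ∃ j, (c:ℝ) < SB (j+1) ω := ⟨j, hj⟩
            simp only [hσdef, dif_pos h]
            have : Nat.find h ≤ j := Nat.find_min' h hj
            omega
        rw [this]
        apply MeasurableSet.biUnion (Finset.countable_toSet _)
        intro j hj
        simp only [Finset.coe_range, Set.mem_Iio] at hj
        have hsm : StronglyMeasurable[𝓕 i] (SB (j+1)) :=
          (hSB_sm j (j+1) le_rfl).mono (𝓕.mono (by omega))
        exact measurableSet_lt measurable_const hsm.measurable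
    -- Y as stopped processes
    have hYst : ∀ N n, n ≤ N → Y n = stoppedProcess negX (fun ω => WithTop.some (σ N ω)) n := by
      intro N n hn
      funext ω
      rw [MeasureTheory.stoppedProcess, ← WithTop.coe_min]
      show _ = negX (min n (σ N ω)) ω
      by_cases h : ∃ j, (c:ℝ) < SB (j+1) ω
      · simp only [hYdef, hσdef, dif_pos h]
        congr 1
        omega
      · simp only [hYdef, hσdef, dif_neg h]
        congr 1
        omega
    have hYsub : Submartingale Y 𝓕 μ := by
      apply submartingale_nat
      · intro n
        rw [hYst n n le_rfl]
        exact (hnegXsub.stoppedProcess (hστ n)).stronglyAdapted n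
      · intro n
        rw [hYst n n le_rfl]
        exact (hnegXsub.stoppedProcess (hστ n)).integrable n
      · intro n
        have hsub := (hnegXsub.stoppedProcess (hστ (n+1))).2.1 n (n+1) (by omega)
        rw [hYst (n+1) n (by omega), hYst (n+1) (n+1) le_rfl]
        exact hsub
    -- bound above
    have hYbd : ∀ n ω, Y n ω ≤ (c:ℝ) := by
      intro n ω
      by_cases h : ∃ j, (c:ℝ) < SB (j+1) ω
      · simp only [hYdef, dif_pos h]
        refine (hXlow _ ω).trans ?_
        set m := min n (Nat.find h) with hm
        have hmle : m ≤ Nat.find h := min_le_right _ _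
        match hmeq : m, hmle with
        | 0, _ => rw [hSBzero ω]; positivity
        | (j+1), hle =>
          have hjlt : j < Nat.find h := by omega
          have := Nat.find_min h hjlt
          linarith [not_lt.mp this]
      · simp only [hYdef, dif_neg h]
        push_neg at h
        refine (hXlow n ω).trans ?_
        cases n with
        | zero => rw [hSBzero ω]; positivity
        | succ j => exact h j
    -- L¹ bound
    have hR0 : (0:ℝ) ≤ (c:ℝ) := Nat.cast_nonneg c
    set R : ℝ := 2*(c:ℝ) - ∫ ω, Y 0 ω ∂μ with hRdef
    have hYL1 : ∀ n, eLpNorm (Y n) 1 μ ≤ ENNReal.ofReal R := by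
      intro n
      have hint : Integrable (Y n) μ := hYsub.2.2 n
      have h1 : ∫ ω, Y 0 ω ∂μ ≤ ∫ ω, Y n ω ∂μ := by
        have := hYsub.setIntegral_le (Nat.zero_le n) (MeasurableSet.univ)
        simpa [setIntegral_univ] using this
      have h2 : ∫ ω, |Y n ω| ∂μ ≤ R := by
        have hb : ∀ ω, |Y n ω| ≤ 2*(c:ℝ) - Y n ω := by
          intro ω
          have h3 := hYbd n ω
          rcases abs_cases (Y n ω) with ⟨he, _⟩ | ⟨he, _⟩ <;> rw [he] <;> linarith
        calc ∫ ω, |Y n ω| ∂μ ≤ ∫ ω, (2*(c:ℝ) - Y n ω) ∂μ :=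
              integral_mono hint.abs ((integrable_const _).sub hint) hb
          _ = 2*(c:ℝ) - ∫ ω, Y n ω ∂μ := by
              rw [integral_sub (integrable_const _) hint, integral_const]
              simp
          _ ≤ R := by rw [hRdef]; linarith
      rw [eLpNorm_one_eq_lintegral_enorm, ← ofReal_integral_norm_eq_lintegral_enorm hint]
      apply ENNReal.ofReal_le_ofReal
      simpa [Real.norm_eq_abs] using h2
    have hYconv : ∀ᵐ ω ∂μ, ∃ ℓ, Tendsto (fun n => Y n ω) atTop (𝓝 ℓ) := by
      refine hYsub.exists_ae_tendsto_of_bdd (R := R.toNNReal) ?_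
      intro n
      have := hYL1 n
      rwa [ENNReal.ofReal] at this
    filter_upwards [hYconv] with ω hω hSBb
    obtain ⟨ℓ, hℓ⟩ := hω
    have hnot : ¬ ∃ j, (c:ℝ) < SB (j+1) ω := by
      push_neg
      exact fun j => hSBb j
    have hYX : ∀ n, Y n ω = - X n ω := fun n => by simp only [hYdef, dif_neg hnot]; rfl
    refine ⟨-ℓ, ?_⟩
    have hneg : Tendsto (fun n => - Y n ω) atTop (𝓝 (-ℓ)) := hℓ.neg
    have he : (fun n => X n ω) = fun n => - Y n ω := by
      funext n; rw [hYX n]; ring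
    rw [he]
    exact hneg
  -- all paths: X converges a.e.
  have hXae : ∀ᵐ ω ∂μ, ∃ L, Tendsto (fun n => X n ω) atTop (𝓝 L) := by
    have hall := ae_all_iff.mpr hconvX
    filter_upwards [hall, hβ_sum] with ω hω hβω
    have ht0 : 0 ≤ ∑' k, β k ω := tsum_nonneg (fun k => hβ0 k ω)
    refine hω (Nat.ceil (∑' k, β k ω)) (fun j => ?_)
    have h1 : SB (j+1) ω ≤ ∑ i ∈ Finset.range (j+1), β i ω := by
      apply Finset.sum_le_sum
      intro i _
      have h1 := Ap_inv_le_one hα0 (i+1) ω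
      have h2 := Ap_inv_nonneg hα0 (i+1) ω
      have h3 := hβ0 i ω
      show (Ap α (i+1) ω)⁻¹ * β i ω ≤ β i ω
      nlinarith
    have h2 : ∑ i ∈ Finset.range (j+1), β i ω ≤ ∑' k, β k ω :=
      Summable.sum_le_tsum _ (fun i _ => hβ0 i ω) hβω
    have h3 := Nat.le_ceil (∑' k, β k ω)
    linarith
  -- pathwise extraction
  filter_upwards [hXae, hα_sum, hβ_sum] with ω hXω hαω hβω
  obtain ⟨L, hL⟩ := hXω
  have hAmono : Monotone (fun n => Ap α n ω) := Ap_mono hα0 ω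
  have hAbd : BddAbove (Set.range (fun n => Ap α n ω)) := by
    refine ⟨Real.exp (∑' k, α k ω), ?_⟩
    rintro x ⟨n, rfl⟩
    calc Ap α n ω ≤ Real.exp (∑ j ∈ Finset.range n, α j ω) := Ap_le_exp hα0 n ω
      _ ≤ Real.exp (∑' k, α k ω) :=
          Real.exp_le_exp.mpr (Summable.sum_le_tsum _ (fun i _ => hα0 i ω) hαω)
  have hAtend : Tendsto (fun n => Ap α n ω) atTop (𝓝 (⨆ n, Ap α n ω)) :=
    tendsto_atTop_ciSup hAmono hAbd
  have hAle : ∀ n, Ap α n ω ≤ ⨆ n, Ap α n ω := fun n => le_ciSup hAbd n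
  -- SB convergence
  have hBtβ : ∀ i, Bt i ω ≤ β i ω := by
    intro i
    have h1 := Ap_inv_le_one hα0 (i+1) ω
    have h2 := Ap_inv_nonneg hα0 (i+1) ω
    have h3 := hβ0 i ω
    show (Ap α (i+1) ω)⁻¹ * β i ω ≤ β i ω
    nlinarith
  have hBtsum : Summable (fun i => Bt i ω) :=
    Summable.of_nonneg_of_le (fun i => hBt0 i ω) hBtβ hβω
  have hSBtend : Tendsto (fun n => SB n ω) atTop (𝓝 (∑' i, Bt i ω)) :=
    hBtsum.hasSum.tendsto_sum_nat
  -- SG convergence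
  have hSGmono : Monotone (fun n => SG n ω) := by
    apply monotone_nat_of_le_succ
    intro n
    have : SG (n+1) ω = SG n ω + G n ω := Finset.sum_range_succ _ _
    rw [this]
    linarith [hG0 n ω]
  have hSGbdd : BddAbove (Set.range fun n => SG n ω) := by
    obtain ⟨bX, hbX⟩ := hL.bddAbove_range
    obtain ⟨bB, hbB⟩ := hSBtend.bddAbove_range
    refine ⟨bX + bB, ?_⟩
    rintro x ⟨n, rfl⟩
    have h1 : X n ω ≤ bX := hbX ⟨n, rfl⟩
    have h2 : SB n ω ≤ bB := hbB ⟨n, rfl⟩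
    have h3 := hW0 n ω
    have hx : X n ω = W n ω + SG n ω - SB n ω := rfl
    show SG n ω ≤ bX + bB
    linarith
  have hSGtend : Tendsto (fun n => SG n ω) atTop (𝓝 (⨆ n, SG n ω)) :=
    tendsto_atTop_ciSup hSGmono hSGbdd
  -- W and V convergence
  have hWtend : Tendsto (fun n => W n ω) atTop
      (𝓝 (L - (⨆ n, SG n ω) + ∑' i, Bt i ω)) := by
    have he : (fun n => W n ω) = fun n => X n ω - SG n ω + SB n ω := by
      funext n
      have hx : X n ω = W n ω + SG n ω - SB n ω := rfl
      linarith
    rw [he]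
    exact (hL.sub hSGtend).add hSBtend
  constructor
  · refine ⟨(L - (⨆ n, SG n ω) + ∑' i, Bt i ω) * (⨆ n, Ap α n ω), ?_⟩
    have hmul := hWtend.mul hAtend
    have he : (fun n => W n ω * Ap α n ω) = fun n => V n ω := by
      funext n
      show (Ap α n ω)⁻¹ * V n ω * Ap α n ω = V n ω
      have hne := (Ap_pos hα0 n ω).ne'
      field_simp
    rw [he] at hmul
    exact hmul
  · have hGsummable : Summable (fun k => G k ω) := by
      apply summable_of_sum_range_le (fun k => hG0 k ω) (c := ⨆ n, SG n ω)
      intro n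
      exact le_ciSup hSGbdd n
    apply Summable.of_nonneg_of_le (fun k => mul_nonneg (hη0 k) (hD0 k ω)) ?_
      (hGsummable.mul_right (⨆ n, Ap α n ω))
    intro k
    have hidk : η k * D k ω = G k ω * Ap α (k+1) ω := by
      show _ = (Ap α (k+1) ω)⁻¹ * (η k * D k ω) * Ap α (k+1) ω
      have hne := (Ap_pos hα0 (k+1) ω).ne'
      field_simp
    rw [hidk]
    exact mul_le_mul_of_nonneg_left (hAle (k+1)) (hG0 k ω)


end RS


lemma det_lemma {d : ℕ} (φ : EuclideanSpace ℝ (Fin d) → ℝ) (hφ : Continuous φ)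
    (Zs : Set (EuclideanSpace ℝ (Fin d))) (hZs : Zs = {z | ∀ w, φ z ≤ φ w})
    (T : Set (EuclideanSpace ℝ (Fin d))) (hT : T ⊆ Zs) (hTd : Zs ⊆ closure T)
    (zs₀ : EuclideanSpace ℝ (Fin d)) (h0 : zs₀ ∈ Zs)
    (x : ℕ → EuclideanSpace ℝ (Fin d))
    (η : ℕ → ℝ) (hη0 : ∀ k, 0 ≤ η k) (hη_div : ¬ Summable η)
    (hconv : ∀ zs ∈ T, ∃ L, Tendsto (fun k => ‖x k - zs‖^2) atTop (𝓝 L))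
    (hsum : Summable (fun k => η k * (φ (x k) - φ zs₀))) :
    ∃ zs ∈ Zs, Tendsto x atTop (𝓝 zs) := by
  have hTne : T.Nonempty := by
    rcases Set.eq_empty_or_nonempty T with h | h
    · exfalso
      have := hTd h0
      rw [h, closure_empty] at this
      exact this
    · exact h
  -- norm convergence for each zs ∈ T
  have hconv' : ∀ zs ∈ T, ∃ L, Tendsto (fun k => ‖x k - zs‖) atTop (𝓝 L) := by
    intro zs hzs
    obtain ⟨L, hL⟩ := hconv zs hzs
    exact ⟨Real.sqrt L, by
      have : (fun k => ‖x k - zs‖) = fun k => Real.sqrt (‖x k - zs‖^2) := by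
        funext k; rw [Real.sqrt_sq (norm_nonneg _)]
      rw [this]
      exact (Real.continuous_sqrt.continuousAt).tendsto.comp hL⟩
  obtain ⟨z₁, hz₁⟩ := hTne
  obtain ⟨L₁, hL₁⟩ := hconv' z₁ hz₁
  -- boundedness of x
  have hbd : ∃ r : ℝ, ∀ k, x k ∈ Metric.closedBall z₁ r := by
    obtain ⟨r, hr⟩ := (hL₁.bddAbove_range).imp (fun r hr => hr)
    exact ⟨r, fun k => by
      simp only [Metric.mem_closedBall, dist_eq_norm]
      exact hr ⟨k, rfl⟩⟩
  obtain ⟨r, hr⟩ := hbd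
  -- Δ nonneg
  have hΔ0 : ∀ k, 0 ≤ φ (x k) - φ zs₀ := by
    intro k
    have := (hZs ▸ h0) (x k)
    linarith
  -- frequently small Δ
  have hfreq : ∀ n : ℕ, ∃ᶠ k in atTop, φ (x k) - φ zs₀ < 1 / (n + 1) := by
    intro n
    by_contra h
    rw [Filter.not_frequently] at h
    simp only [not_lt] at h
    rw [Filter.eventually_atTop] at h
    obtain ⟨N, hN⟩ := h
    apply hη_div
    have hsum' : Summable (fun k => η (k + N) * (φ (x (k + N)) - φ zs₀)) :=
      (summable_nat_add_iff N).mpr hsum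
    have : Summable (fun k => η (k + N)) := by
      apply Summable.of_nonneg_of_le (fun k => hη0 _) (fun k => ?_) (hsum'.mul_left ((n:ℝ)+1))
      have h1 : 1 / ((n:ℝ) + 1) ≤ φ (x (k + N)) - φ zs₀ := hN _ (Nat.le_add_left N k)
      have h2 : 0 < (n:ℝ) + 1 := by positivity
      calc η (k + N) = ((n:ℝ)+1) * (η (k+N) * (1/((n:ℝ)+1))) := by field_simp
        _ ≤ ((n:ℝ)+1) * (η (k+N) * (φ (x (k + N)) - φ zs₀)) := by
            apply mul_le_mul_of_nonneg_left _ (le_of_lt h2)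
            exact mul_le_mul_of_nonneg_left h1 (hη0 _)
    exact (summable_nat_add_iff N).mp this
  obtain ⟨ψ, hψmono, hψ⟩ := Filter.extraction_forall_of_frequently hfreq
  have hψΔ : Tendsto (fun n => φ (x (ψ n)) - φ zs₀) atTop (𝓝 0) := by
    apply squeeze_zero (fun n => hΔ0 _) (fun n => le_of_lt (hψ n))
    exact tendsto_one_div_add_atTop_nhds_zero_nat
  -- compactness: subsequence of x ∘ ψ converging
  obtain ⟨a, _, ρ, hρmono, hρ⟩ := tendsto_subseq_of_bounded
    (Metric.isBounded_closedBall (x := z₁) (r := r)) (fun n => hr (ψ n))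
  -- φ a = φ zs₀
  have hφa : φ a = φ zs₀ := by
    have h1 : Tendsto (fun n => φ (x (ψ (ρ n))) - φ zs₀) atTop (𝓝 0) :=
      hψΔ.comp hρmono.tendsto_atTop
    have h2 : Tendsto (fun n => φ (x (ψ (ρ n))) - φ zs₀) atTop (𝓝 (φ a - φ zs₀)) := by
      have := (hφ.continuousAt (x := a)).tendsto.comp hρ
      exact this.sub_const _
    have := tendsto_nhds_unique h2 h1
    linarith
  have haZ : a ∈ Zs := by
    rw [hZs]
    intro w
    rw [hφa]
    exact (hZs ▸ h0) w
  refine ⟨a, haZ, ?_⟩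
  -- show x → a
  rw [tendsto_iff_dist_tendsto_zero]
  rw [Metric.tendsto_atTop]
  intro ε hε
  have haT : a ∈ closure T := hTd haZ
  obtain ⟨zt, hztT, hztd⟩ := Metric.mem_closure_iff.mp haT (ε/4) (by positivity)
  obtain ⟨L', hL'⟩ := hconv' zt hztT
  have hsub : Tendsto (fun n => ‖x (ψ (ρ n)) - zt‖) atTop (𝓝 ‖a - zt‖) := by
    have h1 : Tendsto (fun n => x (ψ (ρ n))) atTop (𝓝 a) := hρ
    exact ((continuous_norm.comp (continuous_id.sub continuous_const)).continuousAt.tendsto).comp h1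
  have hLeq : L' = ‖a - zt‖ := by
    have := hL'.comp ((hψmono.comp hρmono).tendsto_atTop)
    exact tendsto_nhds_unique this hsub
  have hLsmall : L' < ε/4 := by
    rw [hLeq, ← dist_eq_norm]
    exact hztd
  have hev : ∀ᶠ k in atTop, ‖x k - zt‖ < ε/2 := by
    have : ∀ᶠ k in atTop, ‖x k - zt‖ < L' + ε/4 :=
      hL'.eventually (Filter.Tendsto.eventually_lt_const (by linarith) tendsto_id) |>.mono (fun k hk => hk)
    filter_upwards [this] with k hk
    linarith
  rw [eventually_atTop] at hev
  obtain ⟨N, hN⟩ := hev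
  refine ⟨N, fun k hk => ?_⟩
  have h1 : dist (x k) a ≤ ‖x k - zt‖ + ‖zt - a‖ := by
    rw [dist_eq_norm]
    calc ‖x k - a‖ = ‖(x k - zt) + (zt - a)‖ := by
          congr 1; abel
      _ ≤ ‖x k - zt‖ + ‖zt - a‖ := norm_add_le _ _
  have h2 : ‖zt - a‖ < ε/4 := by
    rw [← dist_eq_norm, dist_comm]; exact hztd
  have h3 := hN k hk
  have : dist (x k) a < ε := by
    calc dist (x k) a ≤ ‖x k - zt‖ + ‖zt - a‖ := h1
      _ < ε/2 + ε/4 := by linarith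
      _ < ε := by linarith
  rwa [Real.dist_eq, sub_zero, abs_of_nonneg dist_nonneg]

/-- Lemma 3 of the paper: a stochastic sequence satisfying a Robbins–Siegmund type
recursion with respect to every minimizer of a continuous function `φ` with nonempty
minimizer set converges almost surely to some (random) minimizer. -/
theorem stmt1 {d : ℕ}
    {Ω : Type*} {m0 : MeasurableSpace Ω} {μ : Measure Ω} [IsProbabilityMeasure μ]
    (𝓕 : Filtration ℕ m0)
    (φ : EuclideanSpace ℝ (Fin d) → ℝ) (hφ : Continuous φ)
    (Zs : Set (EuclideanSpace ℝ (Fin d)))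
    (hZs : Zs = {z | ∀ w, φ z ≤ φ w}) (hZne : Zs.Nonempty)
    (z : ℕ → Ω → EuclideanSpace ℝ (Fin d)) (hz_adapted : Adapted 𝓕 z)
    (α β : ℕ → Ω → ℝ)
    (hα_adapted : Adapted 𝓕 α) (hβ_adapted : Adapted 𝓕 β)
    (hα_int : ∀ k, Integrable (α k) μ) (hβ_int : ∀ k, Integrable (β k) μ)
    (hz_int : ∀ zs ∈ Zs, ∀ k, Integrable (fun ω => ‖z k ω - zs‖ ^ 2) μ)
    (hα_nonneg : ∀ k, ∀ᵐ ω ∂μ, 0 ≤ α k ω)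
    (hβ_nonneg : ∀ k, ∀ᵐ ω ∂μ, 0 ≤ β k ω)
    (hα_sum : ∀ᵐ ω ∂μ, Summable (fun k => α k ω))
    (hβ_sum : ∀ᵐ ω ∂μ, Summable (fun k => β k ω))
    (η : ℕ → ℝ) (hη_nonneg : ∀ k, 0 ≤ η k) (hη_div : ¬ Summable η)
    (hrec : ∀ zs ∈ Zs, ∀ k, ∀ᵐ ω ∂μ,
      (μ[(fun ω' => ‖z (k+1) ω' - zs‖ ^ 2) | 𝓕 k]) ω ≤
        (1 + α k ω) * ‖z k ω - zs‖ ^ 2 - η k * (φ (z k ω) - φ zs) + β k ω) :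
    ∀ᵐ ω ∂μ, ∃ zs ∈ Zs, Tendsto (fun k => z k ω) atTop (𝓝 zs) := by
  classical
  obtain ⟨zs₀, hzs₀⟩ := hZne
  have hmin : ∀ zs ∈ Zs, ∀ w, φ zs ≤ φ w := by
    intro zs hzs
    rw [hZs] at hzs
    exact hzs
  -- countable dense subset of Zs
  obtain ⟨s, hsc, hsd⟩ := TopologicalSpace.exists_countable_dense ↥Zs
  set T : Set (EuclideanSpace ℝ (Fin d)) := Subtype.val '' s with hTdef
  have hTsub : T ⊆ Zs := by
    rintro x ⟨y, _, rfl⟩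
    exact y.2
  have hTdense : Zs ⊆ closure T := by
    intro zz hz
    have h1 : (⟨zz, hz⟩ : ↥Zs) ∈ closure s := by
      rw [hsd.closure_eq]; exact Set.mem_univ _
    have h2 : zz ∈ Subtype.val '' closure s := ⟨⟨zz, hz⟩, h1, rfl⟩
    exact (image_closure_subset_closure_image continuous_subtype_val) h2
  have hTc : T.Countable := hsc.image _
  set T' : Set (EuclideanSpace ℝ (Fin d)) := insert zs₀ T with hT'def
  have hT'c : T'.Countable := hTc.insert _
  have hT'sub : T' ⊆ Zs := by
    intro x hx
    rcases hx with rfl | hx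
    · exact hzs₀
    · exact hTsub hx
  -- modified nonneg versions of α β
  set α' : ℕ → Ω → ℝ := fun k ω => max (α k ω) 0 with hα'def
  set β' : ℕ → Ω → ℝ := fun k ω => max (β k ω) 0 with hβ'def
  -- apply RS lemma for each zs ∈ T'
  have hrs : ∀ zs ∈ T', ∀ᵐ ω ∂μ,
      (∃ L, Tendsto (fun k => ‖z k ω - zs‖^2) atTop (𝓝 L)) ∧
      Summable (fun k => η k * (φ (z k ω) - φ zs)) := by
    intro zs hzs
    have hzsZ : zs ∈ Zs := hT'sub hzs
    have hVadp : ∀ k, StronglyMeasurable[𝓕 k] (fun ω => ‖z k ω - zs‖^2) := by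
      intro k
      have h1 : StronglyMeasurable[𝓕 k] (fun ω => ‖z k ω - zs‖) :=
        ((hz_adapted k).stronglyMeasurable.sub stronglyMeasurable_const).norm
      have he : (fun ω => ‖z k ω - zs‖^2) = fun ω => ‖z k ω - zs‖ * ‖z k ω - zs‖ := by
        funext ω; rw [sq]
      rw [he]
      exact h1.mul h1
    apply rs_lemma 𝓕 (fun k ω => ‖z k ω - zs‖^2) (fun k ω => φ (z k ω) - φ zs) α' β' η
      hVadp
      (fun k => (hφ.comp_stronglyMeasurable (hz_adapted k).stronglyMeasurable).sub stronglyMeasurable_const)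
      (fun k => ((hα_adapted k).max measurable_const).stronglyMeasurable)
      (fun k => ((hβ_adapted k).max measurable_const).stronglyMeasurable)
      (fun k => hz_int zs hzsZ k)
      (fun k => (hβ_int k).pos_part)
      (fun k ω => by positivity)
      (fun k ω => by
        have := hmin zs hzsZ (z k ω)
        show (0:ℝ) ≤ φ (z k ω) - φ zs
        linarith)
      (fun k ω => le_max_right _ _)
      (fun k ω => le_max_right _ _)
      hη_nonneg
    · filter_upwards [hα_sum, ae_all_iff.mpr hα_nonneg] with ω h1 h2
      have he : (fun k => α' k ω) = fun k => α k ω := by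
        funext k; exact max_eq_left (h2 k)
      rw [he]
      exact h1
    · filter_upwards [hβ_sum, ae_all_iff.mpr hβ_nonneg] with ω h1 h2
      have he : (fun k => β' k ω) = fun k => β k ω := by
        funext k; exact max_eq_left (h2 k)
      rw [he]
      exact h1
    · intro k
      filter_upwards [hrec zs hzsZ k, hα_nonneg k, hβ_nonneg k] with ω h1 h2 h3
      have e1 : α' k ω = α k ω := max_eq_left h2
      have e2 : β' k ω = β k ω := max_eq_left h3
      rw [e1, e2]
      exact h1
  have hall := (ae_ball_iff hT'c).mpr hrs
  filter_upwards [hall] with ω hω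
  apply det_lemma φ hφ Zs hZs T hTsub hTdense zs₀ hzs₀ (fun k => z k ω) η hη_nonneg hη_div
  · intro zs hzs
    exact (hω zs (Set.mem_insert_of_mem _ hzs)).1
  · exact (hω zs₀ (Set.mem_insert _ _)).2
end

section
/- Let {v^k} be a nonnegative real sequence and set α^k = a(k+1)^{−s} and β^k = b(k+1)^{−t}, where a, b > 0, 0 < s < 1 and t > s (so that Σα^k = ∞, α^k → 0, and β^k/α^k → 0 at a polynomial rate). If there exists K ≥ 0 such that v^{k+1} ≤ (1 − α^k) v^k + β^k holds for all k ≥ K, then there exists a constant C such that v^k ≤ C · β^k/α^k = C (b/a)(k+1)^{−(t−s)} for all k ≥ 0. -/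
open Filter Topology

/-- Chung-type decay lemma (Lemma 4 of the paper), with the polynomial rates
`α^k = a (k+1)^{-s}` and `β^k = b (k+1)^{-t}`, `0 < s < 1 < ∞`, `t > s`: a
nonnegative sequence satisfying `v^{k+1} ≤ (1 − α^k) v^k + β^k` for all large `k`
satisfies `v^k ≤ C β^k / α^k` for all `k`, for some constant `C`. -/
theorem stmt2 (v : ℕ → ℝ) (hv : ∀ k, 0 ≤ v k)
    (a b s t : ℝ) (ha : 0 < a) (hb : 0 < b) (hs0 : 0 < s) (hs1 : s < 1) (hts : s < t)
    (α β : ℕ → ℝ)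
    (hα : ∀ k, α k = a * ((k : ℝ) + 1) ^ (-s))
    (hβ : ∀ k, β k = b * ((k : ℝ) + 1) ^ (-t))
    (K : ℕ) (hrec : ∀ k, K ≤ k → v (k + 1) ≤ (1 - α k) * v k + β k) :
    ∃ C : ℝ, ∀ k, v k ≤ C * (β k / α k) := by
  set p : ℝ := t - s with hpdef
  have hp0 : 0 < p := by simp [hpdef]; linarith
  have hba : (0:ℝ) < b / a := div_pos hb ha
  have hbase : ∀ k : ℕ, (0:ℝ) < (k:ℝ) + 1 := fun k => by positivity
  set r : ℕ → ℝ := fun k => (b/a) * ((k:ℝ)+1) ^ (-p) with hrdef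
  have hrpos : ∀ k, 0 < r k := fun k =>
    mul_pos hba (Real.rpow_pos_of_pos (hbase k) _)
  have hβα : ∀ k, β k / α k = r k := by
    intro k
    have h1 : ((k:ℝ)+1) ^ (-p) = ((k:ℝ)+1) ^ (-t) / ((k:ℝ)+1) ^ (-s) := by
      rw [← Real.rpow_sub (hbase k)]
      congr 1
      rw [hpdef]; ring
    have hs : ((k:ℝ)+1) ^ (-s) ≠ 0 := (Real.rpow_pos_of_pos (hbase k) _).ne'
    rw [hβ, hα, hrdef]
    simp only []
    rw [h1]
    field_simp
  have hαr : ∀ k, α k * r k = β k := by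
    intro k
    have h1 : ((k:ℝ)+1) ^ (-s) * ((k:ℝ)+1) ^ (-p) = ((k:ℝ)+1) ^ (-t) := by
      rw [← Real.rpow_add (hbase k)]
      congr 1
      rw [hpdef]; ring
    rw [hα, hβ, hrdef]
    simp only []
    field_simp
    linear_combination h1
  -- mean value theorem decay estimate
  have key : ∀ k : ℕ, r k - r (k+1) ≤ (b/a) * (p * ((k:ℝ)+1) ^ (-p-1)) := by
    intro k
    have hx : (0:ℝ) < (k:ℝ)+1 := hbase k
    set x : ℝ := (k:ℝ)+1 with hxdef
    have hxx : x < x + 1 := by linarith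
    obtain ⟨c, hc, hceq⟩ := exists_hasDerivAt_eq_slope (fun y : ℝ => y ^ (-p))
      (fun y : ℝ => (-p) * y ^ (-p-1)) hxx
      (fun y hy => (Real.continuousAt_rpow_const y (-p)
        (Or.inl (ne_of_gt (lt_of_lt_of_le hx hy.1)))).continuousWithinAt)
      (fun y hy => Real.hasDerivAt_rpow_const (Or.inl (ne_of_gt (lt_trans hx hy.1))))
    have hc1 : x < c := hc.1
    have hceq' : (-p) * c ^ (-p-1) = (x+1) ^ (-p) - x ^ (-p) := by
      rw [hceq, show x + 1 - x = (1:ℝ) by ring, div_one]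
    have hcb : c ^ (-p-1) ≤ x ^ (-p-1) :=
      Real.rpow_le_rpow_of_nonpos hx hc1.le (by linarith)
    have hstep : x ^ (-p) - (x+1) ^ (-p) ≤ p * x ^ (-p-1) := by
      have : x ^ (-p) - (x+1) ^ (-p) = p * c ^ (-p-1) := by linarith [hceq']
      rw [this]
      exact mul_le_mul_of_nonneg_left hcb hp0.le
    have hcast : ((k+1:ℕ):ℝ) + 1 = x + 1 := by push_cast; ring
    have hr1 : r (k+1) = (b/a) * (x+1) ^ (-p) := by
      rw [hrdef]; simp only []; rw [hcast]
    have hr0 : r k = (b/a) * x ^ (-p) := rfl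
    rw [hr0, hr1]
    have := mul_le_mul_of_nonneg_left hstep hba.le
    nlinarith [this]
  -- eventual smallness
  have htend : ∀ e : ℝ, e < 0 → Tendsto (fun k : ℕ => ((k:ℝ)+1) ^ e) atTop (𝓝 0) := by
    intro e he
    have h1 : Tendsto (fun k : ℕ => (k:ℝ)+1) atTop atTop :=
      tendsto_atTop_add_const_right _ 1 tendsto_natCast_atTop_atTop
    have h2 := (tendsto_rpow_neg_atTop (by linarith : (0:ℝ) < -e)).comp h1
    simpa [Function.comp_def] using h2
  have hev1 : ∀ᶠ k : ℕ in atTop, a * ((k:ℝ)+1) ^ (-s) < 1 := by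
    have h := (htend (-s) (by linarith)).const_mul a
    rw [mul_zero] at h
    exact h.eventually_lt_const one_pos
  have hev2 : ∀ᶠ k : ℕ in atTop, ((k:ℝ)+1) ^ (s-1) < a / (2*p) := by
    exact (htend (s-1) (by linarith)).eventually_lt_const (by positivity)
  obtain ⟨N₁, hN₁⟩ := eventually_atTop.mp (hev1.and hev2)
  set N : ℕ := max K N₁ with hNdef
  -- the constant
  have hne : (Finset.range (N+1)).Nonempty := Finset.nonempty_range_add_one
  set C : ℝ := max 2 ((Finset.range (N+1)).sup' hne fun k => v k / r k) with hCdef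
  have hC2 : (2:ℝ) ≤ C := le_max_left _ _
  have hCinit : ∀ k, k ≤ N → v k ≤ C * r k := by
    intro k hk
    have hmem : k ∈ Finset.range (N+1) := Finset.mem_range.mpr (Nat.lt_succ_of_le hk)
    have h1 : v k / r k ≤ C :=
      le_trans (Finset.le_sup' (fun k => v k / r k) hmem) (le_max_right _ _)
    exact (div_le_iff₀ (hrpos k)).mp h1
  have hmain : ∀ k, N ≤ k → v k ≤ C * r k := by
    intro k hk
    induction k, hk using Nat.le_induction with
    | base => exact hCinit N le_rfl
    | succ k hk ih =>
      have hkK : K ≤ k := le_trans (le_max_left _ _) hk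
      have hkN₁ : N₁ ≤ k := le_trans (le_max_right _ _) hk
      obtain ⟨hα1, hexp⟩ := hN₁ k hkN₁
      have hα1' : α k ≤ 1 := by rw [hα]; exact hα1.le
      have hα0 : 0 ≤ α k := by rw [hα]; positivity
      have hβ0 : 0 < β k := by rw [hβ]; positivity
      have h1 : v (k+1) ≤ (1 - α k) * (C * r k) + β k := by
        refine (hrec k hkK).trans ?_
        have := mul_le_mul_of_nonneg_left ih (by linarith : (0:ℝ) ≤ 1 - α k)
        linarith
      have h2 : (1 - α k) * (C * r k) + β k = C * r k - (C - 1) * β k := by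
        have e := hαr k
        nlinarith [e]
      -- bound p*(b/a)*x^{-p-1} by (1/2) β k
      have hsplit : ((k:ℝ)+1) ^ (-p-1) = ((k:ℝ)+1) ^ (-t) * ((k:ℝ)+1) ^ (s-1) := by
        rw [← Real.rpow_add (hbase k)]
        congr 1
        rw [hpdef]; ring
      have hxt : (0:ℝ) < ((k:ℝ)+1) ^ (-t) := Real.rpow_pos_of_pos (hbase k) _
      have hhalf : (b/a) * (p * ((k:ℝ)+1) ^ (-p-1)) ≤ (1/2) * β k := by
        rw [hsplit, hβ]
        have h3 : ((k:ℝ)+1) ^ (s-1) ≤ a / (2*p) := hexp.le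
        have h4 : p * (((k:ℝ)+1) ^ (-t) * ((k:ℝ)+1) ^ (s-1))
            ≤ p * (((k:ℝ)+1) ^ (-t) * (a / (2*p))) := by
          apply mul_le_mul_of_nonneg_left _ hp0.le
          exact mul_le_mul_of_nonneg_left h3 hxt.le
        have h5 : (b/a) * (p * (((k:ℝ)+1) ^ (-t) * (a / (2*p)))) = (1/2) * (b * ((k:ℝ)+1) ^ (-t)) := by
          field_simp
        calc (b/a) * (p * (((k:ℝ)+1) ^ (-t) * ((k:ℝ)+1) ^ (s-1)))
            ≤ (b/a) * (p * (((k:ℝ)+1) ^ (-t) * (a / (2*p)))) :=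
              mul_le_mul_of_nonneg_left h4 hba.le
          _ = (1/2) * (b * ((k:ℝ)+1) ^ (-t)) := h5
      have hdecay : C * (r k - r (k+1)) ≤ (C - 1) * β k := by
        have hC0 : (0:ℝ) < C := by linarith
        have h6 : C * (r k - r (k+1)) ≤ C * ((1/2) * β k) :=
          mul_le_mul_of_nonneg_left ((key k).trans hhalf) hC0.le
        nlinarith [h6, hβ0]
      calc v (k+1) ≤ (1 - α k) * (C * r k) + β k := h1
        _ = C * r k - (C - 1) * β k := h2
        _ ≤ C * r (k+1) := by linarith [hdecay]
  refine ⟨C, fun k => ?_⟩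
  rw [hβα k]
  rcases le_or_gt k N with h | h
  · exact hCinit k h
  · exact hmain k h.le
end

section
/- Let {𝐯^k} ⊂ ℝ^d and {𝐮^k} ⊂ ℝ^p be adapted sequences of entrywise-nonnegative random vectors, {a^k} and {b^k} adapted nonnegative random scalar sequences with Σ_{k=0}^∞ a^k < ∞ and Σ_{k=0}^∞ b^k < ∞ almost surely, {V^k} an adapted sequence of entrywise-nonnegative random d×d matrices and {H^k} an adapted sequence of random d×p matrices. Suppose E[𝐯^{k+1} | 𝓕^k] ≤ (V^k + a^k 𝟏𝟏ᵀ) 𝐯^k + b^k 𝟏 − H^k 𝐮^k holds entrywise almost surely for all k ≥ 0, and there exists a deterministic vector π ∈ ℝ^d with all entries strictly positive such that πᵀ V^k ≤ πᵀ (entrywise) and πᵀ H^k ≥ 0 (entrywise) hold almost surely for all k ≥ 0. Then almost surely: (1) {πᵀ𝐯^k} converges to some nonnegative random variable; (2) the sequence {𝐯^k} is bounded; (3) Σ_{k=0}^∞ πᵀ H^k 𝐮^k < ∞. -/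
open MeasureTheory Filter Topology Finset

lemma pathwise {a b X Z : ℕ → ℝ} {N L : ℝ}
    (ha : ∀ k, 0 ≤ a k) (hb : ∀ k, 0 ≤ b k) (hX : ∀ k, 0 ≤ X k) (hZ : ∀ k, 0 ≤ Z k)
    (hsa : Summable a)
    (hbN : ∀ k, ∑ j ∈ Finset.range k, b j ≤ N)
    (hconv : Tendsto (fun k => (∏ j ∈ Finset.range k, (1 + a j))⁻¹ * X k
      + (∑ j ∈ Finset.range k, (∏ i ∈ Finset.range (j+1), (1 + a i))⁻¹ * Z j)
      + (N - ∑ j ∈ Finset.range k, (∏ i ∈ Finset.range (j+1), (1 + a i))⁻¹ * b j))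
      atTop (𝓝 L)) :
    (∃ c, 0 ≤ c ∧ Tendsto X atTop (𝓝 c)) ∧ Summable Z := by
  set β : ℕ → ℝ := fun k => ∏ j ∈ Finset.range k, (1 + a j) with hβ
  have hβ1 : ∀ k, 1 ≤ β k := by
    intro k
    calc (1:ℝ) = ∏ _j ∈ Finset.range k, 1 := by simp
    _ ≤ β k := Finset.prod_le_prod (by simp) (fun i _ => by linarith [ha i])
  have hβpos : ∀ k, 0 < β k := fun k => lt_of_lt_of_le one_pos (hβ1 k)
  have hβmono : Monotone β := by
    apply monotone_nat_of_le_succ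
    intro k
    rw [show β (k+1) = β k * (1 + a k) from Finset.prod_range_succ _ _]
    exact le_mul_of_one_le_right (hβpos k).le (by linarith [ha k])
  have hβbdd : ∀ k, β k ≤ Real.exp (∑' j, a j) := by
    intro k
    calc β k ≤ ∏ j ∈ Finset.range k, Real.exp (a j) :=
          Finset.prod_le_prod (fun i _ => by linarith [ha i])
            (fun i _ => by linarith [Real.add_one_le_exp (a i)])
    _ = Real.exp (∑ j ∈ Finset.range k, a j) := (Real.exp_sum _ _).symm
    _ ≤ _ := Real.exp_le_exp.2 (hsa.sum_le_tsum _ (fun i _ => ha i))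
  have hβconv : ∃ βL, 1 ≤ βL ∧ Tendsto β atTop (𝓝 βL) := by
    rcases tendsto_of_monotone hβmono with h | ⟨l, hl⟩
    · exfalso
      obtain ⟨k, hk⟩ := (Filter.tendsto_atTop.1 h (Real.exp (∑' j, a j) + 1)).exists
      linarith [hβbdd k]
    · exact ⟨l, le_of_tendsto_of_tendsto' tendsto_const_nhds hl (fun k => hβ1 k), hl⟩
  obtain ⟨βL, hβL1, hβLt⟩ := hβconv
  -- Q converges
  set Q : ℕ → ℝ := fun k => ∑ j ∈ Finset.range k, (β (j+1))⁻¹ * b j with hQ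
  have hQmono : Monotone Q := by
    apply monotone_nat_of_le_succ
    intro k
    rw [show Q (k+1) = Q k + (β (k+1))⁻¹ * b k from Finset.sum_range_succ _ _]
    nlinarith [hb k, inv_nonneg.2 (hβpos (k+1)).le]
  have hQbdd : ∀ k, Q k ≤ N := by
    intro k
    calc Q k ≤ ∑ j ∈ Finset.range k, b j :=
      Finset.sum_le_sum (fun i _ => by
        have h1 : (β (i+1))⁻¹ ≤ 1 := inv_le_one_of_one_le₀ (hβ1 (i+1))
        have h2 : (0:ℝ) ≤ (β (i+1))⁻¹ := inv_nonneg.2 (hβpos (i+1)).le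
        nlinarith [hb i])
    _ ≤ N := hbN k
  have hQconv : ∃ QL, Tendsto Q atTop (𝓝 QL) := by
    rcases tendsto_of_monotone hQmono with h | h
    · exfalso
      obtain ⟨k, hk⟩ := (Filter.tendsto_atTop.1 h (N + 1)).exists
      linarith [hQbdd k]
    · exact h
  obtain ⟨QL, hQLt⟩ := hQconv
  set P : ℕ → ℝ := fun k => ∑ j ∈ Finset.range k, (β (j+1))⁻¹ * Z j with hP
  set W : ℕ → ℝ := fun k => (β k)⁻¹ * X k + P k with hW
  have hWconv : Tendsto W atTop (𝓝 (L - (N - QL))) := by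
    have := hconv.sub ((tendsto_const_nhds (x := N)).sub hQLt)
    convert this using 2 with k
    simp only [hW, hP, hQ, hβ]; ring
  have hPmono : Monotone P := by
    apply monotone_nat_of_le_succ
    intro k
    rw [show P (k+1) = P k + (β (k+1))⁻¹ * Z k from Finset.sum_range_succ _ _]
    nlinarith [hZ k, inv_nonneg.2 (hβpos (k+1)).le]
  have hPleW : ∀ k, P k ≤ W k := by
    intro k
    have : 0 ≤ (β k)⁻¹ * X k := mul_nonneg (inv_nonneg.2 (hβpos k).le) (hX k)
    simp only [hW]; linarith
  have hWbdd : BddAbove (Set.range W) := hWconv.bddAbove_range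
  obtain ⟨M, hM⟩ := hWbdd
  have hPconv : ∃ PL, Tendsto P atTop (𝓝 PL) := by
    rcases tendsto_of_monotone hPmono with h | h
    · exfalso
      obtain ⟨k, hk⟩ := (Filter.tendsto_atTop.1 h (M + 1)).exists
      have := hM (Set.mem_range_self (f := W) k)
      linarith [hPleW k]
    · exact h
  obtain ⟨PL, hPLt⟩ := hPconv
  have hαXconv : Tendsto (fun k => (β k)⁻¹ * X k) atTop (𝓝 (L - (N - QL) - PL)) := by
    have := hWconv.sub hPLt
    convert this using 2 with k
    simp [hW]
  have hGnn : 0 ≤ L - (N - QL) - PL :=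
    le_of_tendsto_of_tendsto' tendsto_const_nhds hαXconv
      (fun k => mul_nonneg (inv_nonneg.2 (hβpos k).le) (hX k))
  constructor
  · refine ⟨βL * (L - (N - QL) - PL), mul_nonneg (by linarith) hGnn, ?_⟩
    have := hβLt.mul hαXconv
    convert this using 2 with k
    rw [← mul_assoc, mul_inv_cancel₀ (hβpos k).ne', one_mul]
  · -- Summable Z
    have hPle : ∀ k, P k ≤ PL := fun k => hPmono.ge_of_tendsto hPLt k
    apply summable_of_sum_range_le hZ (c := Real.exp (∑' j, a j) * PL)
    intro k
    calc ∑ j ∈ Finset.range k, Z j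
        ≤ ∑ j ∈ Finset.range k, Real.exp (∑' j, a j) * ((β (j+1))⁻¹ * Z j) := by
          apply Finset.sum_le_sum
          intro i _
          have hid : β (i+1) * ((β (i+1))⁻¹ * Z i) = Z i := by
            rw [← mul_assoc, mul_inv_cancel₀ (hβpos (i+1)).ne', one_mul]
          nlinarith [mul_le_mul_of_nonneg_right (hβbdd (i+1))
            (mul_nonneg (inv_nonneg.2 (hβpos (i+1)).le) (hZ i)), hid]
    _ = Real.exp (∑' j, a j) * P k := by rw [Finset.mul_sum]
    _ ≤ _ := mul_le_mul_of_nonneg_left (hPle k) (Real.exp_pos _).le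

section aux
variable {Ω : Type*}

/-- product weights -/
noncomputable def bprod (a : ℕ → Ω → ℝ) (k : ℕ) (ω : Ω) : ℝ := ∏ j ∈ Finset.range k, (1 + a j ω)

/-- localizing sets -/
def bset (a b : ℕ → Ω → ℝ) (N k : ℕ) : Set Ω :=
  {ω | ∀ j < k, (∑ i ∈ Finset.range (j+1), a i ω) ≤ N ∧ (∑ i ∈ Finset.range (j+1), b i ω) ≤ N}

/-- inner process -/
noncomputable def innerF (a b X Z : ℕ → Ω → ℝ) (N k : ℕ) (ω : Ω) : ℝ :=
  (bprod a k ω)⁻¹ * X k ω + (∑ j ∈ Finset.range k, (bprod a (j+1) ω)⁻¹ * Z j ω)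
    + ((N:ℝ) - ∑ j ∈ Finset.range k, (bprod a (j+1) ω)⁻¹ * b j ω)

noncomputable def YF (a b X Z : ℕ → Ω → ℝ) (N k : ℕ) : Ω → ℝ :=
  (bset a b N k).indicator (innerF a b X Z N k)

lemma bprod_one_le {a : ℕ → Ω → ℝ} {ω : Ω} (h : ∀ k, 0 ≤ a k ω) (k : ℕ) :
    1 ≤ bprod a k ω := by
  calc (1:ℝ) = ∏ _j ∈ Finset.range k, 1 := by simp
  _ ≤ bprod a k ω := Finset.prod_le_prod (by simp) (fun i _ => by linarith [h i])

lemma bprod_pos {a : ℕ → Ω → ℝ} {ω : Ω} (h : ∀ k, 0 ≤ a k ω) (k : ℕ) :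
    0 < bprod a k ω := lt_of_lt_of_le one_pos (bprod_one_le h k)

lemma bprod_inv_mem {a : ℕ → Ω → ℝ} {ω : Ω} (h : ∀ k, 0 ≤ a k ω) (k : ℕ) :
    0 ≤ (bprod a k ω)⁻¹ ∧ (bprod a k ω)⁻¹ ≤ 1 :=
  ⟨inv_nonneg.2 (bprod_pos h k).le, inv_le_one_of_one_le₀ (bprod_one_le h k)⟩

lemma bset_antitone {a b : ℕ → Ω → ℝ} {N : ℕ} : Antitone (bset a b N) :=
  fun _ _ h _ hω j hj => hω j (lt_of_lt_of_le hj h)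

lemma bset_sum_b_le {a b : ℕ → Ω → ℝ} {N k : ℕ} {ω : Ω}
    (hmem : ω ∈ bset a b N k) : ∑ j ∈ Finset.range k, b j ω ≤ N := by
  cases k with
  | zero => simp
  | succ k => exact (hmem k (Nat.lt_succ_self k)).2

lemma bset_a_le {a b : ℕ → Ω → ℝ} {N k j : ℕ} {ω : Ω} (hb : ∀ i, 0 ≤ a i ω)
    (hmem : ω ∈ bset a b N k) (hj : j < k) : a j ω ≤ N := by
  have h1 := (hmem j hj).1
  have h2 : a j ω ≤ ∑ i ∈ Finset.range (j+1), a i ω :=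
    Finset.single_le_sum (fun i _ => hb i) (Finset.self_mem_range_succ j)
  linarith

lemma bset_b_le {a b : ℕ → Ω → ℝ} {N k j : ℕ} {ω : Ω} (hb : ∀ i, 0 ≤ b i ω)
    (hmem : ω ∈ bset a b N k) (hj : j < k) : b j ω ≤ N := by
  have h1 := (hmem j hj).2
  have h2 : b j ω ≤ ∑ i ∈ Finset.range (j+1), b i ω :=
    Finset.single_le_sum (fun i _ => hb i) (Finset.self_mem_range_succ j)
  linarith

lemma innerF_bound {a b X Z : ℕ → Ω → ℝ} {N k : ℕ} {ω : Ω}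
    (h1 : ∀ j, 0 ≤ a j ω ∧ 0 ≤ b j ω ∧ 0 ≤ X j ω ∧ 0 ≤ Z j ω)
    (hZb : ∀ j, Z j ω ≤ (1 + a j ω) * X j ω + b j ω)
    (hmem : ω ∈ bset a b N k) :
    0 ≤ innerF a b X Z N k ω ∧
      innerF a b X Z N k ω ≤
        |X k ω| + ((∑ j ∈ Finset.range k, ((1+(N:ℝ)) * |X j ω| + N)) + N) := by
  have ha := fun j => (h1 j).1
  have hb := fun j => (h1 j).2.1
  have hX := fun j => (h1 j).2.2.1
  have hZ := fun j => (h1 j).2.2.2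
  have hT1a : 0 ≤ (bprod a k ω)⁻¹ * X k ω :=
    mul_nonneg (bprod_inv_mem ha k).1 (hX k)
  have hT1b : (bprod a k ω)⁻¹ * X k ω ≤ |X k ω| := by
    rw [abs_of_nonneg (hX k)]
    nlinarith [(bprod_inv_mem ha k).1, (bprod_inv_mem ha k).2, hX k]
  have hT2a : ∀ j ∈ Finset.range k, 0 ≤ (bprod a (j+1) ω)⁻¹ * Z j ω :=
    fun j _ => mul_nonneg (bprod_inv_mem ha (j+1)).1 (hZ j)
  have hT2b : ∀ j ∈ Finset.range k, (bprod a (j+1) ω)⁻¹ * Z j ω ≤ (1+(N:ℝ)) * |X j ω| + N := by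
    intro j hj
    rw [Finset.mem_range] at hj
    have haj := bset_a_le ha hmem hj
    have hbj := bset_b_le hb hmem hj
    have hZj : Z j ω ≤ (1+(N:ℝ)) * X j ω + N := by
      have := hZb j
      nlinarith [hX j]
    have : (bprod a (j+1) ω)⁻¹ * Z j ω ≤ Z j ω := by
      nlinarith [(bprod_inv_mem ha (j+1)).1, (bprod_inv_mem ha (j+1)).2, hZ j]
    rw [abs_of_nonneg (hX j)]
    linarith
  have hQa : 0 ≤ ∑ j ∈ Finset.range k, (bprod a (j+1) ω)⁻¹ * b j ω :=
    Finset.sum_nonneg (fun j _ => mul_nonneg (bprod_inv_mem ha (j+1)).1 (hb j))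
  have hQb : ∑ j ∈ Finset.range k, (bprod a (j+1) ω)⁻¹ * b j ω ≤ N := by
    calc ∑ j ∈ Finset.range k, (bprod a (j+1) ω)⁻¹ * b j ω
        ≤ ∑ j ∈ Finset.range k, b j ω := Finset.sum_le_sum (fun j _ => by
          nlinarith [(bprod_inv_mem ha (j+1)).1, (bprod_inv_mem ha (j+1)).2, hb j])
    _ ≤ N := bset_sum_b_le hmem
  constructor
  · have := Finset.sum_nonneg hT2a
    simp only [innerF]
    linarith
  · have := Finset.sum_le_sum hT2b
    simp only [innerF]
    linarith
end aux

lemma RS {Ω : Type*} {m0 : MeasurableSpace Ω} {μ : Measure Ω} [IsProbabilityMeasure μ]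
    (𝓕 : Filtration ℕ m0) (a b X Z : ℕ → Ω → ℝ)
    (haA : Adapted 𝓕 a) (hbA : Adapted 𝓕 b) (hXA : Adapted 𝓕 X) (hZA : Adapted 𝓕 Z)
    (hXi : ∀ k, Integrable (X k) μ)
    (hnn : ∀ k, ∀ᵐ ω ∂μ, 0 ≤ a k ω ∧ 0 ≤ b k ω ∧ 0 ≤ X k ω ∧ 0 ≤ Z k ω)
    (hsa : ∀ᵐ ω ∂μ, Summable fun k => a k ω) (hsb : ∀ᵐ ω ∂μ, Summable fun k => b k ω)
    (hrec : ∀ k, ∀ᵐ ω ∂μ, (μ[X (k+1)|𝓕 k]) ω ≤ (1 + a k ω) * X k ω + b k ω - Z k ω) :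
    ∀ᵐ ω ∂μ, (∃ c, 0 ≤ c ∧ Tendsto (fun k => X k ω) atTop (𝓝 c)) ∧
      Summable (fun k => Z k ω) := by
  -- measurability helpers
  have hma : ∀ (f : ℕ → Ω → ℝ), Adapted 𝓕 f → ∀ (j k : ℕ), j ≤ k →
      Measurable[𝓕 k] (f j) := fun f hf j k h =>
    (hf j).mono (𝓕.mono h) le_rfl
  have hmβ : ∀ (j k : ℕ), j ≤ k + 1 → Measurable[𝓕 k] (bprod a j) := by
    intro j k h
    apply Finset.measurable_prod
    intro i hi
    rw [Finset.mem_range] at hi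
    exact measurable_const.add (hma a haA i k (by omega))
  have hBm : ∀ (N : ℕ) (j k : ℕ), j ≤ k + 1 → MeasurableSet[𝓕 k] (bset a b N j) := by
    intro N j k h
    have : bset a b N j = ⋂ i ∈ Finset.range j,
        ({ω | (∑ l ∈ Finset.range (i+1), a l ω) ≤ N} ∩
         {ω | (∑ l ∈ Finset.range (i+1), b l ω) ≤ N}) := by
      ext ω; simp [bset, Set.mem_iInter]
    rw [this]
    apply MeasurableSet.biInter (Finset.range j).countable_toSet
    intro i hi
    rw [Finset.mem_coe, Finset.mem_range] at hi
    have hik : i ≤ k := by omega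
    refine MeasurableSet.inter ?_ ?_
    · exact measurableSet_le (Finset.measurable_sum _ (fun l hl => by
        rw [Finset.mem_range] at hl
        exact hma a haA l k (by omega))) measurable_const
    · exact measurableSet_le (Finset.measurable_sum _ (fun l hl => by
        rw [Finset.mem_range] at hl
        exact hma b hbA l k (by omega))) measurable_const
  have hinm : ∀ (N k : ℕ), Measurable[𝓕 k] (innerF a b X Z N k) := by
    intro N k
    apply Measurable.add
    apply Measurable.add
    · exact ((hmβ k k (by omega)).inv).mul (hma X hXA k k le_rfl)
    · apply Finset.measurable_sum
      intro j hj
      rw [Finset.mem_range] at hj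
      exact ((hmβ (j+1) k (by omega)).inv).mul (hma Z hZA j k (by omega))
    · apply Measurable.sub measurable_const
      apply Finset.measurable_sum
      intro j hj
      rw [Finset.mem_range] at hj
      exact ((hmβ (j+1) k (by omega)).inv).mul (hma b hbA j k (by omega))
  have hYsm : ∀ (N k : ℕ), StronglyMeasurable[𝓕 k] (YF a b X Z N k) := fun N k =>
    ((hinm N k).indicator (hBm N k k (by omega))).stronglyMeasurable
  -- a.e. facts
  have hG : ∀ᵐ ω ∂μ, ∀ k, 0 ≤ a k ω ∧ 0 ≤ b k ω ∧ 0 ≤ X k ω ∧ 0 ≤ Z k ω :=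
    ae_all_iff.2 hnn
  have hZle : ∀ k, ∀ᵐ ω ∂μ, Z k ω ≤ (1 + a k ω) * X k ω + b k ω := by
    intro k
    have h0 : (0:Ω → ℝ) ≤ᵐ[μ] μ[X (k+1)|𝓕 k] :=
      condExp_nonneg ((hnn (k+1)).mono fun ω h => h.2.2.1)
    filter_upwards [h0, hrec k] with ω h1 h2
    have : (0:ℝ) ≤ (μ[X (k+1)|𝓕 k]) ω := h1
    linarith
  have hZG : ∀ᵐ ω ∂μ, ∀ k, Z k ω ≤ (1 + a k ω) * X k ω + b k ω := ae_all_iff.2 hZle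
  -- nonnegativity of Y
  have hYnn : ∀ (N k : ℕ), ∀ᵐ ω ∂μ, 0 ≤ YF a b X Z N k ω := by
    intro N k
    filter_upwards [hG, hZG] with ω h1 h2
    by_cases hω : ω ∈ bset a b N k
    · rw [YF, Set.indicator_of_mem hω]
      exact (innerF_bound h1 h2 hω).1
    · rw [YF, Set.indicator_of_notMem hω]
  -- integrability of Y
  have hYint : ∀ (N k : ℕ), Integrable (YF a b X Z N k) μ := by
    intro N k
    have hΦ : Integrable (fun ω => |X k ω| +
        ((∑ j ∈ Finset.range k, ((1+(N:ℝ)) * |X j ω| + N)) + N)) μ := by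
      apply Integrable.add (hXi k).abs
      apply Integrable.add _ (integrable_const _)
      apply integrable_finset_sum
      intro j _
      exact ((hXi j).abs.const_mul _).add (integrable_const _)
    refine Integrable.mono' hΦ
      (((hYsm N k).mono (𝓕.le k)).aestronglyMeasurable) ?_
    filter_upwards [hG, hZG] with ω h1 h2
    by_cases hω : ω ∈ bset a b N k
    · rw [YF, Set.indicator_of_mem hω]
      obtain ⟨hl, hu⟩ := innerF_bound h1 h2 hω
      rw [Real.norm_eq_abs, abs_of_nonneg hl]
      exact hu
    · rw [YF, Set.indicator_of_notMem hω]
      simp only [norm_zero]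
      have : (0:ℝ) ≤ ∑ j ∈ Finset.range k, ((1+(N:ℝ)) * |X j ω| + N) :=
        Finset.sum_nonneg fun j _ => by positivity
      positivity
  -- supermartingale step
  have hstep : ∀ (N k : ℕ), μ[YF a b X Z N (k+1)|𝓕 k] ≤ᵐ[μ] YF a b X Z N k := by
    intro N k
    set F : Ω → ℝ := (bset a b N (k+1)).indicator (fun ω => (bprod a (k+1) ω)⁻¹) with hF
    set g : Ω → ℝ := (bset a b N (k+1)).indicator (fun ω =>
      (∑ j ∈ Finset.range (k+1), (bprod a (j+1) ω)⁻¹ * Z j ω)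
        + ((N:ℝ) - ∑ j ∈ Finset.range (k+1), (bprod a (j+1) ω)⁻¹ * b j ω)) with hg
    have hdecomp : ∀ ω, YF a b X Z N (k+1) ω = F ω * X (k+1) ω + g ω := by
      intro ω
      by_cases hω : ω ∈ bset a b N (k+1)
      · rw [YF, Set.indicator_of_mem hω, hF, hg, Set.indicator_of_mem hω,
          Set.indicator_of_mem hω, innerF]
        ring
      · rw [YF, Set.indicator_of_notMem hω, hF, hg, Set.indicator_of_notMem hω,
          Set.indicator_of_notMem hω]
        ring
    have hFsm : StronglyMeasurable[𝓕 k] F :=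
      (Measurable.indicator (hmβ (k+1) k (by omega)).inv (hBm N (k+1) k (by omega))).stronglyMeasurable
    have hgsm : StronglyMeasurable[𝓕 k] g := by
      apply Measurable.stronglyMeasurable
      apply Measurable.indicator _ (hBm N (k+1) k (by omega))
      apply Measurable.add
      · apply Finset.measurable_sum
        intro j hj
        rw [Finset.mem_range] at hj
        exact ((hmβ (j+1) k (by omega)).inv).mul (hma Z hZA j k (by omega))
      · apply Measurable.sub measurable_const
        apply Finset.measurable_sum
        intro j hj
        rw [Finset.mem_range] at hj
        exact ((hmβ (j+1) k (by omega)).inv).mul (hma b hbA j k (by omega))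
    have hF01 : ∀ᵐ ω ∂μ, 0 ≤ F ω ∧ F ω ≤ 1 := by
      filter_upwards [hG] with ω h1
      have ha := fun j => (h1 j).1
      by_cases hω : ω ∈ bset a b N (k+1)
      · rw [hF, Set.indicator_of_mem hω]
        exact ⟨(bprod_inv_mem ha (k+1)).1, (bprod_inv_mem ha (k+1)).2⟩
      · rw [hF, Set.indicator_of_notMem hω]
        norm_num
    have hFXint : Integrable (fun ω => F ω * X (k+1) ω) μ := by
      refine Integrable.mono' (hXi (k+1)).abs
        ((hFsm.mono (𝓕.le k)).aestronglyMeasurable.mul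
          ((hXA (k+1)).mono (𝓕.le (k+1)) le_rfl).aestronglyMeasurable) ?_
      filter_upwards [hF01] with ω h
      rw [Real.norm_eq_abs, abs_mul]
      have : |F ω| ≤ 1 := by rw [abs_of_nonneg h.1]; exact h.2
      nlinarith [abs_nonneg (X (k+1) ω), abs_nonneg (F ω)]
    have hgint : Integrable g μ := by
      refine ((hYint N (k+1)).sub hFXint).congr (Eventually.of_forall fun ω => ?_)
      simp only [Pi.sub_apply]
      rw [hdecomp ω]; ring
    have hc1 : μ[YF a b X Z N (k+1)|𝓕 k]
        =ᵐ[μ] μ[fun ω => F ω * X (k+1) ω|𝓕 k] + μ[g|𝓕 k] := by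
      have : YF a b X Z N (k+1) = (fun ω => F ω * X (k+1) ω) + g := funext hdecomp
      rw [this]
      exact condExp_add hFXint hgint _
    have hc2 : μ[g|𝓕 k] = g := condExp_of_stronglyMeasurable (𝓕.le k) hgsm hgint
    rw [hc2] at hc1
    have hc3 : μ[fun ω => F ω * X (k+1) ω|𝓕 k] =ᵐ[μ] fun ω => F ω * (μ[X (k+1)|𝓕 k]) ω :=
      condExp_mul_of_stronglyMeasurable_left hFsm hFXint (hXi (k+1))
    filter_upwards [hc1, hc3, hrec k, hG, hZG] with ω h1 h3 h4 h5 h6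
    rw [h1, Pi.add_apply, h3]
    have ha := fun j => (h5 j).1
    have hbb := fun j => (h5 j).2.1
    have hXX := fun j => (h5 j).2.2.1
    have hZZ := fun j => (h5 j).2.2.2
    by_cases hω : ω ∈ bset a b N (k+1)
    · -- main case
      have hmemk : ω ∈ bset a b N k := bset_antitone (Nat.le_succ k) hω
      have hYk : YF a b X Z N k ω = innerF a b X Z N k ω := Set.indicator_of_mem hmemk _
      rw [hYk, hF, hg, Set.indicator_of_mem hω, Set.indicator_of_mem hω]
      have hβpos := bprod_pos ha
      have h1a : (0:ℝ) < 1 + a k ω := by linarith [ha k]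
      have hsucc : bprod a (k+1) ω = bprod a k ω * (1 + a k ω) := Finset.prod_range_succ _ _
      have e1 : (bprod a (k+1) ω)⁻¹ * ((1 + a k ω) * X k ω)
          = (bprod a k ω)⁻¹ * X k ω := by
        rw [hsucc, mul_inv]
        field_simp
      have hFc : (bprod a (k+1) ω)⁻¹ * (μ[X (k+1)|𝓕 k]) ω
          ≤ (bprod a (k+1) ω)⁻¹ * ((1 + a k ω) * X k ω + b k ω - Z k ω) :=
        mul_le_mul_of_nonneg_left h4 (inv_nonneg.2 (hβpos (k+1)).le)
      have eZ : ∑ j ∈ Finset.range (k+1), (bprod a (j+1) ω)⁻¹ * Z j ω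
          = (∑ j ∈ Finset.range k, (bprod a (j+1) ω)⁻¹ * Z j ω)
            + (bprod a (k+1) ω)⁻¹ * Z k ω := Finset.sum_range_succ _ _
      have eB : ∑ j ∈ Finset.range (k+1), (bprod a (j+1) ω)⁻¹ * b j ω
          = (∑ j ∈ Finset.range k, (bprod a (j+1) ω)⁻¹ * b j ω)
            + (bprod a (k+1) ω)⁻¹ * b k ω := Finset.sum_range_succ _ _
      simp only [innerF]
      rw [eZ, eB]
      nlinarith [hFc, e1]
    · -- off the set
      rw [hF, hg, Set.indicator_of_notMem hω, Set.indicator_of_notMem hω]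
      by_cases hmemk : ω ∈ bset a b N k
      · rw [YF, Set.indicator_of_mem hmemk]
        have := (innerF_bound h5 h6 hmemk).1
        linarith
      · rw [YF, Set.indicator_of_notMem hmemk]
        norm_num
  -- expectation bound
  have hEY : ∀ (N k : ℕ), ∫ ω, YF a b X Z N k ω ∂μ ≤ ∫ ω, YF a b X Z N 0 ω ∂μ := by
    intro N k
    induction k with
    | zero => exact le_refl _
    | succ k ih =>
      have h1 : ∫ ω, YF a b X Z N (k+1) ω ∂μ = ∫ ω, (μ[YF a b X Z N (k+1)|𝓕 k]) ω ∂μ :=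
        (integral_condExp (𝓕.le k)).symm
      rw [h1]
      exact le_trans (integral_mono_ae integrable_condExp (hYint N k) (hstep N k)) ih
  -- eLpNorm bound
  have heL : ∀ (N k : ℕ), eLpNorm (YF a b X Z N k) 1 μ
      ≤ ENNReal.ofReal (∫ ω, YF a b X Z N 0 ω ∂μ) := by
    intro N k
    rw [eLpNorm_one_eq_lintegral_enorm]
    have h1 : ∫⁻ ω, ‖YF a b X Z N k ω‖ₑ ∂μ = ENNReal.ofReal (∫ ω, YF a b X Z N k ω ∂μ) := by
      rw [ofReal_integral_eq_lintegral_ofReal (hYint N k) (hYnn N k)]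
      apply lintegral_congr_ae
      filter_upwards [hYnn N k] with ω h
      exact Real.enorm_eq_ofReal h
    rw [h1]
    exact ENNReal.ofReal_le_ofReal (hEY N k)
  -- submartingale & convergence
  have hconvN : ∀ N : ℕ, ∀ᵐ ω ∂μ, ∃ L, Tendsto (fun k => YF a b X Z N k ω) atTop (𝓝 L) := by
    intro N
    have hsub : Submartingale (fun k => -(YF a b X Z N k)) 𝓕 μ := by
      apply submartingale_nat (fun k => (hYsm N k).neg) (fun k => (hYint N k).neg)
      intro k
      filter_upwards [condExp_neg (YF a b X Z N (k+1)) (m := 𝓕 k), hstep N k] with ω h1 h2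
      rw [h1]
      simp only [Pi.neg_apply]
      linarith
    have hbdd : ∀ n, eLpNorm (fun ω => -(YF a b X Z N n) ω) 1 μ
        ≤ (∫ ω, YF a b X Z N 0 ω ∂μ).toNNReal := by
      intro n
      rw [show (fun ω => -(YF a b X Z N n) ω) = -(YF a b X Z N n) from rfl, eLpNorm_neg]
      exact heL N n
    have := hsub.exists_ae_tendsto_of_bdd hbdd
    filter_upwards [this] with ω ⟨c, hc⟩
    exact ⟨-c, by simpa using hc.neg⟩
  -- assemble
  filter_upwards [ae_all_iff.2 hconvN, hG, hsa, hsb] with ω hY h1 hsaω hsbω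
  set N := ⌈max (∑' k, a k ω) (∑' k, b k ω)⌉₊ with hN
  have hNa : ∑' k, a k ω ≤ N := le_trans (le_max_left _ _) (Nat.le_ceil _)
  have hNb : ∑' k, b k ω ≤ N := le_trans (le_max_right _ _) (Nat.le_ceil _)
  have hmem : ∀ k, ω ∈ bset a b N k := by
    intro k j _
    constructor
    · exact le_trans (hsaω.sum_le_tsum _ (fun i _ => (h1 i).1)) hNa
    · exact le_trans (hsbω.sum_le_tsum _ (fun i _ => (h1 i).2.1)) hNb
  have hYeq : ∀ k, YF a b X Z N k ω = innerF a b X Z N k ω :=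
    fun k => Set.indicator_of_mem (hmem k) _
  obtain ⟨L, hL⟩ := hY N
  have hL' : Tendsto (fun k => innerF a b X Z N k ω) atTop (𝓝 L) :=
    hL.congr (fun k => hYeq k)
  have hbN : ∀ k, ∑ j ∈ Finset.range k, b j ω ≤ N :=
    fun k => le_trans (hsbω.sum_le_tsum _ (fun i _ => (h1 i).2.1)) hNb
  exact pathwise (fun k => (h1 k).1) (fun k => (h1 k).2.1) (fun k => (h1 k).2.2.1)
    (fun k => (h1 k).2.2.2) hsaω hbN hL'
/-- Vector-valued martingale convergence theorem (Lemma 5 of the paper).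
Vector and matrix inequalities are entrywise. -/
theorem stmt3 {d p : ℕ}
    {Ω : Type*} {m0 : MeasurableSpace Ω} {μ : Measure Ω} [IsProbabilityMeasure μ]
    (𝓕 : Filtration ℕ m0)
    (v : ℕ → Ω → Fin d → ℝ) (u : ℕ → Ω → Fin p → ℝ)
    (a b : ℕ → Ω → ℝ)
    (V : ℕ → Ω → Matrix (Fin d) (Fin d) ℝ)
    (H : ℕ → Ω → Matrix (Fin d) (Fin p) ℝ)
    (hv_adapted : Adapted 𝓕 v) (hu_adapted : Adapted 𝓕 u)
    (ha_adapted : Adapted 𝓕 a) (hb_adapted : Adapted 𝓕 b)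
    (hV_adapted : ∀ i j, Adapted 𝓕 (fun k ω => V k ω i j))
    (hH_adapted : ∀ i j, Adapted 𝓕 (fun k ω => H k ω i j))
    (hv_int : ∀ k i, Integrable (fun ω => v k ω i) μ)
    (hv_nonneg : ∀ k, ∀ᵐ ω ∂μ, ∀ i, 0 ≤ v k ω i)
    (hu_nonneg : ∀ k, ∀ᵐ ω ∂μ, ∀ i, 0 ≤ u k ω i)
    (ha_nonneg : ∀ k, ∀ᵐ ω ∂μ, 0 ≤ a k ω)
    (hb_nonneg : ∀ k, ∀ᵐ ω ∂μ, 0 ≤ b k ω)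
    (hV_nonneg : ∀ k, ∀ᵐ ω ∂μ, ∀ i j, 0 ≤ V k ω i j)
    (ha_sum : ∀ᵐ ω ∂μ, Summable (fun k => a k ω))
    (hb_sum : ∀ᵐ ω ∂μ, Summable (fun k => b k ω))
    (π : Fin d → ℝ) (hπ : ∀ i, 0 < π i)
    (hπV : ∀ k, ∀ᵐ ω ∂μ, ∀ j, Matrix.vecMul π (V k ω) j ≤ π j)
    (hπH : ∀ k, ∀ᵐ ω ∂μ, ∀ j, 0 ≤ Matrix.vecMul π (H k ω) j)
    (hrec : ∀ k i, ∀ᵐ ω ∂μ,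
      (μ[(fun ω' => v (k+1) ω' i) | 𝓕 k]) ω ≤
        (V k ω).mulVec (v k ω) i + a k ω * (∑ j, v k ω j) + b k ω
          - (H k ω).mulVec (u k ω) i) :
    ∀ᵐ ω ∂μ,
      (∃ c : ℝ, 0 ≤ c ∧ Tendsto (fun k => ∑ i, π i * v k ω i) atTop (𝓝 c)) ∧
      (∃ M : ℝ, ∀ k i, v k ω i ≤ M) ∧
      Summable (fun k => ∑ i, π i * (H k ω).mulVec (u k ω) i) := by
  rcases Nat.eq_zero_or_pos d with hd | hd
  · -- trivial case d = 0
    subst hd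
    refine Eventually.of_forall fun ω => ⟨⟨0, le_refl 0, ?_⟩, ⟨0, fun k i => i.elim0⟩, ?_⟩
    · simpa using (tendsto_const_nhds : Tendsto (fun _ : ℕ => (0:ℝ)) atTop (𝓝 0))
    · simpa using summable_zero
  haveI : Nonempty (Fin d) := ⟨⟨0, hd⟩⟩
  set πmin : ℝ := Finset.univ.inf' Finset.univ_nonempty π with hπmin_def
  have hπmin_pos : 0 < πmin := by
    rw [hπmin_def, Finset.lt_inf'_iff]
    exact fun i _ => hπ i
  have hπmin_le : ∀ i, πmin ≤ π i := fun i => Finset.inf'_le _ (Finset.mem_univ i)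
  set c2 : ℝ := ∑ i, π i with hc2_def
  have hc2_pos : 0 < c2 := Finset.sum_pos (fun i _ => hπ i) Finset.univ_nonempty
  set c1 : ℝ := c2 / πmin with hc1_def
  have hc1_pos : 0 < c1 := div_pos hc2_pos hπmin_pos
  have hc2_eq : c2 = c1 * πmin := by
    rw [hc1_def]; field_simp
  -- rewriting of Z
  have hZswap : ∀ k (ω : Ω), (∑ i, π i * (H k ω).mulVec (u k ω) i)
      = ∑ j, Matrix.vecMul π (H k ω) j * u k ω j := by
    intro k ω
    simp only [Matrix.mulVec, Matrix.vecMul, dotProduct, Finset.mul_sum,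
      Finset.sum_mul]
    rw [Finset.sum_comm]
    exact Finset.sum_congr rfl fun _ _ => Finset.sum_congr rfl fun _ _ => (mul_assoc _ _ _).symm
  have hSswap : ∀ k (ω : Ω), (∑ i, π i * (V k ω).mulVec (v k ω) i)
      = ∑ j, Matrix.vecMul π (V k ω) j * v k ω j := by
    intro k ω
    simp only [Matrix.mulVec, Matrix.vecMul, dotProduct, Finset.mul_sum,
      Finset.sum_mul]
    rw [Finset.sum_comm]
    exact Finset.sum_congr rfl fun _ _ => Finset.sum_congr rfl fun _ _ => (mul_assoc _ _ _).symm
  -- measurability of components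
  have hvm : ∀ k (i : Fin d), Measurable[𝓕 k] (fun ω => v k ω i) := fun k i =>
    (measurable_pi_apply i).comp (hv_adapted k)
  have hum : ∀ k (j : Fin p), Measurable[𝓕 k] (fun ω => u k ω j) := fun k j =>
    (measurable_pi_apply j).comp (hu_adapted k)
  have hXA : Adapted 𝓕 (fun k ω => ∑ i, π i * v k ω i) := fun k =>
    (Finset.measurable_sum _ (fun i _ => measurable_const.mul (hvm k i)))
  have hZA : Adapted 𝓕 (fun k ω => ∑ i, π i * (H k ω).mulVec (u k ω) i) := by
    intro k
    have hm : Measurable[𝓕 k] (fun ω => ∑ i, π i * ∑ j, H k ω i j * u k ω j) := by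
      apply Finset.measurable_sum
      intro i _
      apply Measurable.mul measurable_const
      apply Finset.measurable_sum
      intro j _
      exact ((hH_adapted i j) k).mul (hum k j)
    have hfeq : (fun ω => ∑ i, π i * ∑ j, H k ω i j * u k ω j)
        = fun ω => ∑ i, π i * (H k ω).mulVec (u k ω) i := by
      funext ω
      simp only [Matrix.mulVec, dotProduct]
    exact (hfeq ▸ hm :)
  have hXi : ∀ k, Integrable (fun ω => ∑ i, π i * v k ω i) μ := fun k =>
    integrable_finset_sum _ (fun i _ => (hv_int k i).const_mul _)
  -- nonnegativity
  have hnn : ∀ k, ∀ᵐ ω ∂μ, 0 ≤ c1 * a k ω ∧ 0 ≤ c2 * b k ω ∧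
      0 ≤ (∑ i, π i * v k ω i) ∧ 0 ≤ (∑ i, π i * (H k ω).mulVec (u k ω) i) := by
    intro k
    filter_upwards [ha_nonneg k, hb_nonneg k, hv_nonneg k, hu_nonneg k, hπH k]
      with ω h1 h2 h3 h4 h5
    refine ⟨mul_nonneg hc1_pos.le h1, mul_nonneg hc2_pos.le h2, ?_, ?_⟩
    · exact Finset.sum_nonneg fun i _ => mul_nonneg (hπ i).le (h3 i)
    · rw [hZswap]
      exact Finset.sum_nonneg fun j _ => mul_nonneg (h5 j) (h4 j)
  -- the key recursion
  have hrec' : ∀ k, ∀ᵐ ω ∂μ,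
      (μ[fun ω' => ∑ i, π i * v (k+1) ω' i|𝓕 k]) ω ≤
        (1 + c1 * a k ω) * (∑ i, π i * v k ω i) + c2 * b k ω
          - (∑ i, π i * (H k ω).mulVec (u k ω) i) := by
    intro k
    have hsum : μ[fun ω' => ∑ i, π i * v (k+1) ω' i|𝓕 k]
        =ᵐ[μ] fun ω => ∑ i, π i * (μ[(fun ω' => v (k+1) ω' i)|𝓕 k]) ω := by
      have h1 : (fun ω' => ∑ i, π i * v (k+1) ω' i)
          = ∑ i : Fin d, (fun ω' => π i * v (k+1) ω' i) := by
        funext ω'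
        rw [Finset.sum_apply]
      rw [h1]
      have h2 := condExp_finsetSum (m := 𝓕 k) (μ := μ) (s := (Finset.univ : Finset (Fin d)))
        (f := fun i ω' => π i * v (k+1) ω' i)
        (fun i _ => (hv_int (k+1) i).const_mul _)
      refine h2.trans ?_
      have h3 : ∀ i : Fin d, μ[(fun ω' => π i * v (k+1) ω' i)|𝓕 k]
          =ᵐ[μ] fun ω => π i * (μ[(fun ω' => v (k+1) ω' i)|𝓕 k]) ω := by
        intro i
        have := condExp_smul (m := 𝓕 k) (μ := μ) (π i) (fun ω' => v (k+1) ω' i)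
        have heq : (π i) • (fun ω' => v (k+1) ω' i) = fun ω' => π i * v (k+1) ω' i := by
          funext ω'; simp [smul_eq_mul]
        rw [heq] at this
        refine this.trans (Eventually.of_forall fun ω => ?_)
        simp [smul_eq_mul]
      filter_upwards [ae_all_iff.2 h3] with ω hω
      rw [Finset.sum_apply]
      exact Finset.sum_congr rfl fun i _ => hω i
    filter_upwards [hsum, ae_all_iff.2 (hrec k), hv_nonneg k, hπV k, ha_nonneg k]
      with ω hs hr hv hπV' ha'
    rw [hs]
    have step1 : ∑ i, π i * (μ[(fun ω' => v (k+1) ω' i)|𝓕 k]) ω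
        ≤ ∑ i, π i * ((V k ω).mulVec (v k ω) i + a k ω * (∑ j, v k ω j) + b k ω
            - (H k ω).mulVec (u k ω) i) :=
      Finset.sum_le_sum fun i _ => mul_le_mul_of_nonneg_left (hr i) (hπ i).le
    have step2 : ∑ i, π i * ((V k ω).mulVec (v k ω) i + a k ω * (∑ j, v k ω j) + b k ω
            - (H k ω).mulVec (u k ω) i)
        = (∑ i, π i * (V k ω).mulVec (v k ω) i) + c2 * (a k ω * (∑ j, v k ω j))
          + c2 * b k ω - (∑ i, π i * (H k ω).mulVec (u k ω) i) := by
      simp only [mul_add, mul_sub]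
      rw [Finset.sum_sub_distrib, Finset.sum_add_distrib, Finset.sum_add_distrib,
        ← Finset.sum_mul, ← Finset.sum_mul, ← hc2_def]
    have step3 : (∑ i, π i * (V k ω).mulVec (v k ω) i) ≤ ∑ i, π i * v k ω i := by
      rw [hSswap]
      exact Finset.sum_le_sum fun j _ => mul_le_mul_of_nonneg_right (hπV' j) (hv j)
    have step4 : πmin * (∑ j, v k ω j) ≤ ∑ i, π i * v k ω i := by
      rw [Finset.mul_sum]
      exact Finset.sum_le_sum fun j _ => mul_le_mul_of_nonneg_right (hπmin_le j) (hv j)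
    have step5 : c2 * (a k ω * (∑ j, v k ω j)) ≤ c1 * a k ω * (∑ i, π i * v k ω i) := by
      have h := mul_le_mul_of_nonneg_left step4 (mul_nonneg hc1_pos.le ha')
      calc c2 * (a k ω * (∑ j, v k ω j)) = c1 * a k ω * (πmin * (∑ j, v k ω j)) := by
            rw [hc2_eq]; ring
      _ ≤ c1 * a k ω * (∑ i, π i * v k ω i) := h
    calc ∑ i, π i * (μ[(fun ω' => v (k+1) ω' i)|𝓕 k]) ω
        ≤ (∑ i, π i * (V k ω).mulVec (v k ω) i) + c2 * (a k ω * (∑ j, v k ω j))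
          + c2 * b k ω - (∑ i, π i * (H k ω).mulVec (u k ω) i) := by
          rw [← step2]; exact step1
    _ ≤ (1 + c1 * a k ω) * (∑ i, π i * v k ω i) + c2 * b k ω
          - (∑ i, π i * (H k ω).mulVec (u k ω) i) := by nlinarith [step3, step5]
  -- apply the Robbins–Siegmund lemma
  have hRS := RS 𝓕 (fun k ω => c1 * a k ω) (fun k ω => c2 * b k ω)
    (fun k ω => ∑ i, π i * v k ω i) (fun k ω => ∑ i, π i * (H k ω).mulVec (u k ω) i)
    (fun k => (measurable_const.mul (ha_adapted k)))
    (fun k => (measurable_const.mul (hb_adapted k)))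
    hXA hZA hXi hnn
    (ha_sum.mono fun ω h => h.mul_left c1) (hb_sum.mono fun ω h => h.mul_left c2)
    hrec'
  filter_upwards [hRS, ae_all_iff.2 hv_nonneg] with ω hω hvnn
  obtain ⟨⟨c, hc0, hct⟩, hsummable⟩ := hω
  refine ⟨⟨c, hc0, hct⟩, ?_, hsummable⟩
  -- boundedness
  obtain ⟨M0, hM0⟩ := hct.bddAbove_range
  refine ⟨M0 / πmin, fun k i => ?_⟩
  have h1 : π i * v k ω i ≤ ∑ j, π j * v k ω j :=
    Finset.single_le_sum (fun j _ => mul_nonneg (hπ j).le (hvnn k j)) (Finset.mem_univ i)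
  have h2 : (∑ j, π j * v k ω j) ≤ M0 := hM0 ⟨k, rfl⟩
  rw [le_div_iff₀ hπmin_pos]
  have h3 : πmin * v k ω i ≤ π i * v k ω i :=
    mul_le_mul_of_nonneg_right (hπmin_le i) (hvnn k i)
  nlinarith
end

section
/- Let {𝐯^k} ⊂ ℝ^d be an adapted sequence of entrywise-nonnegative random vectors and {b^k} an adapted sequence of nonnegative random scalars with Σ_{k=0}^∞ b^k < ∞ almost surely, such that E[𝐯^{k+1} | 𝓕^k] ≤ V^k 𝐯^k + b^k 𝟏 holds entrywise almost surely for all k ≥ 0, where {V^k} is an adapted sequence of entrywise-nonnegative random d×d matrices. Assume there exist a deterministic vector π ∈ ℝ^d with all entries strictly positive and a deterministic scalar sequence {a^k} with a^k ∈ (0,1) and Σ_{k=0}^∞ a^k = ∞ such that πᵀ V^k ≤ (1 − a^k) πᵀ (entrywise) holds almost surely for all k ≥ 0. Then lim_{k→∞} 𝐯^k = 0 almost surely. -/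
open MeasureTheory Filter Topology

open Classical in
noncomputable def RSu {Ω : Type*} (y S : ℕ → Ω → ℝ) (M : ℝ) : ℕ → Ω → ℝ
  | 0 => y 0
  | k+1 => fun ω => if S (k+1) ω ≤ M then y (k+1) ω else RSu y S M k ω

open Classical in
noncomputable def RSs {Ω : Type*} (S : ℕ → Ω → ℝ) (M : ℝ) : ℕ → Ω → ℝ
  | 0 => fun _ => 0
  | k+1 => fun ω => if S (k+1) ω ≤ M then S (k+1) ω else RSs S M k ω

noncomputable def RSX {Ω : Type*} (y S : ℕ → Ω → ℝ) (M : ℝ) (k : ℕ) (ω : Ω) : ℝ :=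
  RSu y S M k ω + (M - RSs S M k ω)

open Classical in
noncomputable def RSD {Ω : Type*} (y S : ℕ → Ω → ℝ) (M : ℝ) (a : ℕ → ℝ) (k : ℕ) (ω : Ω) : ℝ :=
  if S (k+1) ω ≤ M then a k * RSu y S M k ω else 0

noncomputable def RSZ {Ω : Type*} (y S : ℕ → Ω → ℝ) (M : ℝ) (a : ℕ → ℝ) (k : ℕ) (ω : Ω) : ℝ :=
  RSX y S M k ω + ∑ j ∈ Finset.range k, RSD y S M a j ω

theorem perM {Ω : Type*} {m0 : MeasurableSpace Ω} {μ : Measure Ω} [IsProbabilityMeasure μ]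
    (𝓕 : Filtration ℕ m0) (y b' : ℕ → Ω → ℝ)
    (hy_adapted : Adapted 𝓕 y) (hb'_adapted : Adapted 𝓕 b')
    (hy_int : ∀ k, Integrable (y k) μ)
    (hy_nonneg : ∀ᵐ ω ∂μ, ∀ k, 0 ≤ y k ω)
    (hb'_nonneg : ∀ k ω, 0 ≤ b' k ω)
    (a : ℕ → ℝ) (ha : ∀ k, a k ∈ Set.Ioo (0:ℝ) 1) (ha_div : ¬ Summable a)
    (hrec : ∀ k, ∀ᵐ ω ∂μ,
      (μ[y (k+1) | 𝓕 k]) ω ≤ (1 - a k) * y k ω + b' k ω)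
    (M : ℝ) (hM : 0 ≤ M) :
    ∀ᵐ ω ∂μ, (Summable (fun k => b' k ω) ∧
        ∀ k, (∑ j ∈ Finset.range (k+1), b' j ω) ≤ M) →
      Tendsto (fun k => y k ω) atTop (𝓝 0) := by
  classical
  set S : ℕ → Ω → ℝ := fun k ω => ∑ j ∈ Finset.range k, b' j ω with hSdef
  have hSstep : ∀ k ω, S (k+1) ω = S k ω + b' k ω := by
    intro k ω; simp [hSdef, Finset.sum_range_succ]
  have hSnn : ∀ k ω, 0 ≤ S k ω := fun k ω =>
    Finset.sum_nonneg fun j _ => hb'_nonneg j ω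
  have hSmono : ∀ k ω, S k ω ≤ S (k+1) ω := by
    intro k ω; rw [hSstep]; linarith [hb'_nonneg k ω]
  -- the claim
  have hclaim : ∀ k ω, S k ω ≤ M → RSu y S M k ω = y k ω ∧ RSs S M k ω = S k ω := by
    intro k ω h
    cases k with
    | zero => refine ⟨rfl, ?_⟩; simp [RSs, hSdef]
    | succ k => constructor <;> simp [RSu, RSs, if_pos h]
  have hsle : ∀ k ω, RSs S M k ω ≤ M := by
    intro k ω
    induction k with
    | zero => simpa [RSs] using hM
    | succ k ih => by_cases h : S (k+1) ω ≤ M <;> simp [RSs, h, ih]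
  have hsnn : ∀ k ω, 0 ≤ RSs S M k ω := by
    intro k ω
    induction k with
    | zero => simp [RSs]
    | succ k ih => by_cases h : S (k+1) ω ≤ M <;> simp [RSs, h, ih, hSnn]
  -- measurability
  have hSmeas : ∀ k n, k ≤ n + 1 → StronglyMeasurable[𝓕 n] (S k) := by
    intro k n hk
    have : StronglyMeasurable[𝓕 n] (fun ω => ∑ j ∈ Finset.range k, b' j ω) := by
      apply Finset.stronglyMeasurable_fun_sum
      intro j hj
      exact (hb'_adapted j).stronglyMeasurable.mono (𝓕.mono (by
        have := Finset.mem_range.1 hj; omega))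
    simpa [hSdef] using this
  have hA : ∀ k, MeasurableSet[𝓕 k] {ω | S (k+1) ω ≤ M} :=
    fun k => measurableSet_le (hSmeas (k+1) k le_rfl).measurable measurable_const
  have humeas : ∀ k, StronglyMeasurable[𝓕 k] (RSu y S M k) := by
    intro k
    induction k with
    | zero => exact (hy_adapted 0).stronglyMeasurable
    | succ k ih =>
      exact StronglyMeasurable.ite ((𝓕.mono k.le_succ) _ (hA k))
        (hy_adapted (k+1)).stronglyMeasurable (ih.mono (𝓕.mono k.le_succ))
  have hsmeas : ∀ k, StronglyMeasurable[𝓕 k] (RSs S M k) := by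
    intro k
    induction k with
    | zero => exact stronglyMeasurable_const
    | succ k ih =>
      exact StronglyMeasurable.ite ((𝓕.mono k.le_succ) _ (hA k))
        (hSmeas (k+1) (k+1) (by omega)) (ih.mono (𝓕.mono k.le_succ))
  -- integrability
  have hs_int : ∀ k, Integrable (RSs S M k) μ := by
    intro k
    refine ⟨((hsmeas k).mono (𝓕.le k)).aestronglyMeasurable, ?_⟩
    refine HasFiniteIntegral.of_bounded (C := M) (ae_of_all _ fun ω => ?_)
    rw [Real.norm_eq_abs, abs_of_nonneg (hsnn k ω)]
    exact hsle k ω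
  have hu_decomp : ∀ k, RSu y S M (k+1) =
      {ω | S (k+1) ω ≤ M}.indicator (y (k+1)) +
      {ω | S (k+1) ω ≤ M}ᶜ.indicator (RSu y S M k) := by
    intro k
    funext ω
    by_cases h : S (k+1) ω ≤ M <;>
      simp [RSu, Set.indicator_apply, h]
  have hu_int : ∀ k, Integrable (RSu y S M k) μ := by
    intro k
    induction k with
    | zero => exact hy_int 0
    | succ k ih =>
      rw [hu_decomp k]
      exact ((hy_int (k+1)).indicator (𝓕.le k _ (hA k))).add
        (ih.indicator ((𝓕.le k _ (hA k)).compl))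
  have hX_int : ∀ k, Integrable (RSX y S M k) μ := by
    intro k
    have : RSX y S M k = RSu y S M k + (fun ω => M - RSs S M k ω) := rfl
    rw [this]
    exact (hu_int k).add ((integrable_const M).sub (hs_int k))
  have hD_int : ∀ k, Integrable (RSD y S M a k) μ := by
    intro k
    have : RSD y S M a k =
        {ω | S (k+1) ω ≤ M}.indicator (fun ω => a k * RSu y S M k ω) := by
      funext ω; by_cases h : S (k+1) ω ≤ M <;> simp [RSD, Set.indicator_apply, h]
    rw [this]
    exact ((hu_int k).const_mul (a k)).indicator (𝓕.le k _ (hA k))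
  have hD_meas : ∀ k, StronglyMeasurable[𝓕 k] (RSD y S M a k) := by
    intro k
    exact StronglyMeasurable.ite (hA k)
      ((humeas k).const_mul (a k)) stronglyMeasurable_const
  have hX_meas : ∀ k, StronglyMeasurable[𝓕 k] (RSX y S M k) :=
    fun k => (humeas k).add (stronglyMeasurable_const.sub (hsmeas k))
  have hZ_meas : ∀ k, StronglyMeasurable[𝓕 k] (RSZ y S M a k) := by
    intro k
    refine (hX_meas k).add ?_
    apply Finset.stronglyMeasurable_fun_sum
    intro j hj
    exact (hD_meas j).mono (𝓕.mono (le_of_lt (Finset.mem_range.1 hj)))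
  have hZ_int : ∀ k, Integrable (RSZ y S M a k) μ := by
    intro k
    have : RSZ y S M a k = RSX y S M k + fun ω => ∑ j ∈ Finset.range k, RSD y S M a j ω := rfl
    rw [this]
    exact (hX_int k).add (integrable_finset_sum _ fun j _ => hD_int j)
  -- key supermartingale inequality
  have hkey : ∀ k, μ[RSZ y S M a (k+1)|𝓕 k] ≤ᵐ[μ] RSZ y S M a k := by
    intro k
    set A := {ω | S (k+1) ω ≤ M} with hAdef
    have hXdecomp : RSX y S M (k+1) =
        A.indicator (y (k+1)) + A.indicator (fun ω => M - S (k+1) ω)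
          + Aᶜ.indicator (RSX y S M k) := by
      funext ω
      by_cases h : S (k+1) ω ≤ M <;>
        simp [RSX, RSu, RSs, Set.indicator_apply, hAdef, h]
    have I1 : Integrable (A.indicator (y (k+1))) μ :=
      (hy_int (k+1)).indicator (𝓕.le k _ (hA k))
    have hSM2 : StronglyMeasurable[𝓕 k] (A.indicator (fun ω => M - S (k+1) ω)) :=
      (stronglyMeasurable_const.sub (hSmeas (k+1) k le_rfl)).indicator (hA k)
    have I2 : Integrable (A.indicator (fun ω => M - S (k+1) ω)) μ := by
      refine ⟨(hSM2.mono (𝓕.le k)).aestronglyMeasurable, ?_⟩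
      refine HasFiniteIntegral.of_bounded (C := M) (ae_of_all _ fun ω => ?_)
      by_cases h : ω ∈ A
      · rw [Set.indicator_of_mem h, Real.norm_eq_abs,
          abs_of_nonneg (sub_nonneg.2 h)]
        linarith [hSnn (k+1) ω]
      · rw [Set.indicator_of_notMem h]; simpa using hM
    have I3 : Integrable (Aᶜ.indicator (RSX y S M k)) μ :=
      (hX_int k).indicator ((𝓕.le k _ (hA k)).compl)
    have hXcond : μ[RSX y S M (k+1)|𝓕 k] =ᵐ[μ]
        A.indicator (μ[y (k+1)|𝓕 k]) + A.indicator (fun ω => M - S (k+1) ω)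
          + Aᶜ.indicator (RSX y S M k) := by
      rw [hXdecomp]
      refine (condExp_add (I1.add I2) I3 _).trans ?_
      refine EventuallyEq.add ((condExp_add I1 I2 _).trans (EventuallyEq.add ?_ ?_)) ?_
      · exact condExp_indicator (hy_int (k+1)) (hA k)
      · exact Filter.EventuallyEq.of_eq
          (condExp_of_stronglyMeasurable (𝓕.le k) hSM2 I2)
      · exact Filter.EventuallyEq.of_eq
          (condExp_of_stronglyMeasurable (𝓕.le k)
            ((hX_meas k).indicator ((hA k).compl)) I3)
    have hsum_meas : StronglyMeasurable[𝓕 k]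
        (fun ω => ∑ j ∈ Finset.range (k+1), RSD y S M a j ω) :=
      Finset.stronglyMeasurable_fun_sum _ fun j hj =>
        (hD_meas j).mono (𝓕.mono (by have := Finset.mem_range.1 hj; omega))
    have hsum_int : Integrable (fun ω => ∑ j ∈ Finset.range (k+1), RSD y S M a j ω) μ :=
      integrable_finset_sum _ fun j _ => hD_int j
    have hZcond : μ[RSZ y S M a (k+1)|𝓕 k] =ᵐ[μ]
        μ[RSX y S M (k+1)|𝓕 k] + fun ω => ∑ j ∈ Finset.range (k+1), RSD y S M a j ω := by
      have hZdecomp : RSZ y S M a (k+1) =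
          RSX y S M (k+1) + fun ω => ∑ j ∈ Finset.range (k+1), RSD y S M a j ω := rfl
      rw [hZdecomp]
      exact (condExp_add (hX_int (k+1)) hsum_int _).trans
        (EventuallyEq.add EventuallyEq.rfl
          (Filter.EventuallyEq.of_eq
            (condExp_of_stronglyMeasurable (𝓕.le k) hsum_meas hsum_int)))
    filter_upwards [hZcond, hXcond, hrec k, hy_nonneg] with ω h1 h2 h3 h4
    rw [h1]
    simp only [Pi.add_apply]
    rw [h2]
    simp only [Pi.add_apply, Finset.sum_range_succ, RSZ]
    by_cases h : ω ∈ A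
    · have hmem : S (k+1) ω ≤ M := h
      have hSk : S k ω ≤ M := le_trans (hSmono k ω) hmem
      obtain ⟨huk, hsk⟩ := hclaim k ω hSk
      rw [Set.indicator_of_mem h, Set.indicator_of_mem h,
        Set.indicator_of_notMem (Set.notMem_compl_iff.2 h)]
      have hXk : RSX y S M k ω = y k ω + (M - S k ω) := by rw [RSX, huk, hsk]
      have hDk : RSD y S M a k ω = a k * y k ω := by rw [RSD, if_pos hmem, huk]
      have hb : S (k+1) ω = S k ω + b' k ω := hSstep k ω
      rw [hXk, hDk]
      have hyk := h4 k
      nlinarith [h3, (ha k).1, (ha k).2]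
    · have hnmem : ¬ S (k+1) ω ≤ M := h
      rw [Set.indicator_of_notMem h, Set.indicator_of_notMem h,
        Set.indicator_of_mem (Set.mem_compl h)]
      have hDk : RSD y S M a k ω = 0 := by rw [RSD, if_neg hnmem]
      rw [hDk]
      simp [RSX]
  have hZsuper : Supermartingale (RSZ y S M a) 𝓕 μ :=
    supermartingale_nat hZ_meas hZ_int hkey
  -- a.e. nonnegativity
  have hZnn : ∀ᵐ ω ∂μ, ∀ k, 0 ≤ RSZ y S M a k ω := by
    filter_upwards [hy_nonneg] with ω hy
    have hunn : ∀ k, 0 ≤ RSu y S M k ω := by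
      intro k
      induction k with
      | zero => exact hy 0
      | succ k ih => by_cases h : S (k+1) ω ≤ M <;> simp [RSu, h, ih, hy]
    intro k
    have hXnn : 0 ≤ RSX y S M k ω := by
      have := hsle k ω; have := hunn k; rw [RSX]; linarith
    have hDnn : ∀ j, 0 ≤ RSD y S M a j ω := by
      intro j
      rw [RSD]
      split
      · exact mul_nonneg (le_of_lt (ha j).1) (hunn j)
      · exact le_rfl
    rw [RSZ]
    exact add_nonneg hXnn (Finset.sum_nonneg fun j _ => hDnn j)
  -- L¹ bound
  have hint_le : ∀ n, ∫ ω, RSZ y S M a n ω ∂μ ≤ ∫ ω, RSZ y S M a 0 ω ∂μ := by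
    intro n
    have h1 : ∫ ω, RSZ y S M a n ω ∂μ = ∫ ω, (μ[RSZ y S M a n|𝓕 0]) ω ∂μ :=
      (integral_condExp (𝓕.le 0)).symm
    rw [h1]
    exact integral_mono_ae integrable_condExp (hZ_int 0) (hZsuper.2.1 0 n (Nat.zero_le n))
  have hbdd : ∀ n, eLpNorm ((-(RSZ y S M a)) n) 1 μ ≤
      ENNReal.ofReal (∫ ω, RSZ y S M a 0 ω ∂μ) := by
    intro n
    have hnegeq : (-(RSZ y S M a)) n = -(RSZ y S M a n) := rfl
    rw [hnegeq, eLpNorm_neg]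
    have h1 : eLpNorm (RSZ y S M a n) 1 μ = ENNReal.ofReal (∫ ω, ‖RSZ y S M a n ω‖ ∂μ) := by
      rw [eLpNorm_one_eq_lintegral_enorm,
        ← ofReal_integral_norm_eq_lintegral_enorm (hZ_int n)]
    rw [h1]
    apply ENNReal.ofReal_le_ofReal
    have h2 : ∫ ω, ‖RSZ y S M a n ω‖ ∂μ = ∫ ω, RSZ y S M a n ω ∂μ := by
      apply integral_congr_ae
      filter_upwards [hZnn] with ω hω
      exact Real.norm_of_nonneg (hω n)
    rw [h2]; exact hint_le n
  have hbdd' : ∀ n, eLpNorm ((-(RSZ y S M a)) n) 1 μ ≤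
      (ENNReal.ofReal (∫ ω, RSZ y S M a 0 ω ∂μ)).toNNReal := by
    intro n
    refine (hbdd n).trans ?_
    rw [ENNReal.coe_toNNReal ENNReal.ofReal_ne_top]
  have hZconv : ∀ᵐ ω ∂μ, ∃ c, Tendsto (fun n => RSZ y S M a n ω) atTop (𝓝 c) := by
    have := (hZsuper.neg.exists_ae_tendsto_of_bdd hbdd' :
      ∀ᵐ ω ∂μ, ∃ c, Tendsto (fun n => (-(RSZ y S M a)) n ω) atTop (𝓝 c))
    filter_upwards [this] with ω ⟨c, hc⟩
    refine ⟨-c, ?_⟩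
    have : (fun n => RSZ y S M a n ω) = fun n => -((-(RSZ y S M a)) n ω) := by
      funext n; simp
    rw [this]
    exact hc.neg
  -- final pathwise argument
  filter_upwards [hZconv, hy_nonneg] with ω hZc hynn
  rintro ⟨hsum, hple⟩
  have hSle : ∀ k, S k ω ≤ M := by
    intro k
    cases k with
    | zero => simpa [hSdef] using hM
    | succ k => exact hple k
  have huy : ∀ k, RSu y S M k ω = y k ω := fun k => (hclaim k ω (hSle k)).1
  have hsS : ∀ k, RSs S M k ω = S k ω := fun k => (hclaim k ω (hSle k)).2
  have hDval : ∀ j, RSD y S M a j ω = a j * y j ω := by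
    intro j; rw [RSD, if_pos (hSle (j+1)), huy]
  obtain ⟨c, hc⟩ := hZc
  set P : ℕ → ℝ := fun k => ∑ j ∈ Finset.range k, a j * y j ω with hPdef
  have hZval : ∀ k, RSZ y S M a k ω = y k ω + (M - S k ω) + P k := by
    intro k
    rw [RSZ, RSX, huy, hsS, hPdef]
    congr 1
    exact Finset.sum_congr rfl fun j _ => hDval j
  have hPmono : Monotone P := by
    apply monotone_nat_of_le_succ
    intro k
    rw [hPdef]
    simp only [Finset.sum_range_succ]
    nlinarith [(ha k).1, hynn k]
  obtain ⟨C, hC⟩ := hc.bddAbove_range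
  have hPle : ∀ k, P k ≤ C := by
    intro k
    have h1 : RSZ y S M a k ω ≤ C := hC ⟨k, rfl⟩
    have h2 := hZval k
    have := hynn k
    have := hSle k
    linarith
  have hPbdd : BddAbove (Set.range P) := ⟨C, by rintro _ ⟨k, rfl⟩; exact hPle k⟩
  have hPconv : Tendsto P atTop (𝓝 (⨆ k, P k)) := tendsto_atTop_ciSup hPmono hPbdd
  have hSconv : Tendsto (fun k => S k ω) atTop (𝓝 (∑' j, b' j ω)) := by
    simpa [hSdef] using hsum.hasSum.tendsto_sum_nat
  obtain ⟨L, hyconv⟩ : ∃ L, Tendsto (fun k => y k ω) atTop (𝓝 L) := by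
    refine ⟨c - (⨆ k, P k) - (M - ∑' j, b' j ω), ?_⟩
    have heq : (fun k => y k ω) =
        fun k => RSZ y S M a k ω - P k - (M - S k ω) := by
      funext k; have := hZval k; linarith
    rw [heq]
    exact (hc.sub hPconv).sub (tendsto_const_nhds.sub hSconv)
  have hL0 : 0 ≤ L := ge_of_tendsto' hyconv fun k => hynn k
  have hLz : L = 0 := by
    by_contra hne
    have hLpos : 0 < L := lt_of_le_of_ne hL0 (Ne.symm hne)
    have hsum2 : Summable (fun j => a j * y j ω) := by
      apply summable_of_sum_range_le (c := ⨆ k, P k)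
        (fun n => mul_nonneg (le_of_lt (ha n).1) (hynn n))
      intro n
      exact le_ciSup hPbdd n
    have hev : ∀ᶠ k in atTop, L/2 < y k ω :=
      hyconv.eventually (eventually_gt_nhds (by linarith))
    obtain ⟨N, hN⟩ := eventually_atTop.1 hev
    have hshift : Summable (fun n => a (n + N) * y (n + N) ω) :=
      (summable_nat_add_iff N).2 hsum2
    have hsa : Summable (fun n => a (n + N)) := by
      refine Summable.of_nonneg_of_le (fun n => (ha _).1.le)
        (fun n => ?_) (hshift.mul_left (2/L))
      have hy2 : L/2 < y (n + N) ω := hN (n + N) (Nat.le_add_left N n)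
      have hapos := (ha (n + N)).1
      rw [div_mul_eq_mul_div, le_div_iff₀ hLpos] at *
      nlinarith
    exact ha_div ((summable_nat_add_iff N).1 hsa)
  exact hLz ▸ hyconv

/-- Lemma 7 of the paper: entrywise-nonnegative random vector sequences driven by
nonnegative random matrices with `πᵀ V^k ≤ (1 − a^k) πᵀ` converge to zero a.s. -/
theorem stmt5 {d : ℕ}
    {Ω : Type*} {m0 : MeasurableSpace Ω} {μ : Measure Ω} [IsProbabilityMeasure μ]
    (𝓕 : Filtration ℕ m0)
    (v : ℕ → Ω → Fin d → ℝ) (b : ℕ → Ω → ℝ)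
    (V : ℕ → Ω → Matrix (Fin d) (Fin d) ℝ)
    (hv_adapted : Adapted 𝓕 v) (hb_adapted : Adapted 𝓕 b)
    (hV_adapted : ∀ i j, Adapted 𝓕 (fun k ω => V k ω i j))
    (hv_int : ∀ k i, Integrable (fun ω => v k ω i) μ)
    (hv_nonneg : ∀ k, ∀ᵐ ω ∂μ, ∀ i, 0 ≤ v k ω i)
    (hb_nonneg : ∀ k, ∀ᵐ ω ∂μ, 0 ≤ b k ω)
    (hV_nonneg : ∀ k, ∀ᵐ ω ∂μ, ∀ i j, 0 ≤ V k ω i j)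
    (hb_sum : ∀ᵐ ω ∂μ, Summable (fun k => b k ω))
    (π : Fin d → ℝ) (hπ : ∀ i, 0 < π i)
    (a : ℕ → ℝ) (ha : ∀ k, a k ∈ Set.Ioo (0 : ℝ) 1) (ha_div : ¬ Summable a)
    (hπV : ∀ k, ∀ᵐ ω ∂μ, ∀ j, Matrix.vecMul π (V k ω) j ≤ (1 - a k) * π j)
    (hrec : ∀ k i, ∀ᵐ ω ∂μ,
      (μ[(fun ω' => v (k+1) ω' i) | 𝓕 k]) ω ≤
        (V k ω).mulVec (v k ω) i + b k ω) :
    ∀ᵐ ω ∂μ, ∀ i, Tendsto (fun k => v k ω i) atTop (𝓝 (0 : ℝ)) := by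
    classical
  set c : ℝ := ∑ i, π i with hcdef
  set y : ℕ → Ω → ℝ := fun k ω => ∑ i, π i * v k ω i with hydef
  set b' : ℕ → Ω → ℝ := fun k ω => max (c * b k ω) 0 with hb'def
  have hy_adapted : Adapted 𝓕 y := by
    intro k
    apply Finset.measurable_fun_sum
    intro i _
    exact ((measurable_pi_apply i).comp (hv_adapted k)).const_mul (π i)
  have hb'_adapted : Adapted 𝓕 b' := by
    intro k
    exact (((hb_adapted k)).const_mul c).max measurable_const
  have hy_int : ∀ k, Integrable (y k) μ := by
    intro k
    exact integrable_finset_sum _ fun i _ => (hv_int k i).const_mul (π i)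
  have hy_nonneg : ∀ᵐ ω ∂μ, ∀ k, 0 ≤ y k ω := by
    rw [ae_all_iff]
    intro k
    filter_upwards [hv_nonneg k] with ω hω
    exact Finset.sum_nonneg fun i _ => mul_nonneg (hπ i).le (hω i)
  have hb'_nonneg : ∀ k ω, 0 ≤ b' k ω := fun k ω => le_max_right _ _
  -- the scalar recursion
  have hrec' : ∀ k, ∀ᵐ ω ∂μ,
      (μ[y (k+1) | 𝓕 k]) ω ≤ (1 - a k) * y k ω + b' k ω := by
    intro k
    have hyeq : y (k+1) = ∑ i, π i • (fun ω => v (k+1) ω i) := by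
      funext ω
      simp [hydef, Finset.sum_apply]
    have hcond1 : μ[y (k+1)|𝓕 k] =ᵐ[μ]
        ∑ i, μ[π i • (fun ω => v (k+1) ω i)|𝓕 k] := by
      rw [hyeq]
      exact condExp_finset_sum (fun i _ => ((hv_int (k+1) i).smul (π i))) _
    have hcond2 : ∀ᵐ ω ∂μ, ∀ i : Fin d,
        (μ[π i • (fun ω' => v (k+1) ω' i)|𝓕 k]) ω =
          π i * (μ[(fun ω' => v (k+1) ω' i)|𝓕 k]) ω := by
      rw [ae_all_iff]
      intro i
      filter_upwards [condExp_smul (μ := μ) (m := 𝓕 k) (π i) (fun ω' => v (k+1) ω' i)]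
        with ω hω
      simpa using hω
    have hreci : ∀ᵐ ω ∂μ, ∀ i : Fin d,
        (μ[(fun ω' => v (k+1) ω' i) | 𝓕 k]) ω ≤
          (V k ω).mulVec (v k ω) i + b k ω := ae_all_iff.2 fun i => hrec k i
    filter_upwards [hcond1, hcond2, hreci, hπV k, hv_nonneg k] with ω h1 h2 h3 h4 h5
    have step1 : (μ[y (k+1)|𝓕 k]) ω =
        ∑ i, π i * (μ[(fun ω' => v (k+1) ω' i)|𝓕 k]) ω := by
      rw [h1]
      simp only [Finset.sum_apply]
      exact Finset.sum_congr rfl fun i _ => h2 i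
    have step2 : ∑ i, π i * (μ[(fun ω' => v (k+1) ω' i)|𝓕 k]) ω ≤
        ∑ i, π i * ((V k ω).mulVec (v k ω) i + b k ω) :=
      Finset.sum_le_sum fun i _ => mul_le_mul_of_nonneg_left (h3 i) (hπ i).le
    have step3 : ∑ i, π i * ((V k ω).mulVec (v k ω) i + b k ω) =
        (∑ j, Matrix.vecMul π (V k ω) j * v k ω j) + c * b k ω := by
      simp only [mul_add, Finset.sum_add_distrib, Matrix.mulVec, Matrix.vecMul,
        dotProduct, Finset.mul_sum, Finset.sum_mul, hcdef]
      rw [Finset.sum_comm]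
      ring_nf
      exact congrArg _ (Finset.sum_congr rfl fun _ _ => mul_comm _ _)
    have step4 : (∑ j, Matrix.vecMul π (V k ω) j * v k ω j) ≤
        ∑ j, ((1 - a k) * π j) * v k ω j :=
      Finset.sum_le_sum fun j _ => mul_le_mul_of_nonneg_right (h4 j) (h5 j)
    have step5 : ∑ j, ((1 - a k) * π j) * v k ω j = (1 - a k) * y k ω := by
      rw [hydef, Finset.mul_sum]
      exact Finset.sum_congr rfl fun j _ => by ring
    have step6 : c * b k ω ≤ b' k ω := le_max_left _ _
    calc (μ[y (k+1)|𝓕 k]) ω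
        = ∑ i, π i * (μ[(fun ω' => v (k+1) ω' i)|𝓕 k]) ω := step1
      _ ≤ (∑ j, Matrix.vecMul π (V k ω) j * v k ω j) + c * b k ω := by
          rw [← step3]; exact step2
      _ ≤ (1 - a k) * y k ω + c * b k ω := by
          rw [← step5]; exact add_le_add_left step4 _
      _ ≤ (1 - a k) * y k ω + b' k ω := add_le_add_right step6 _
  have hall : ∀ᵐ ω ∂μ, ∀ M : ℕ, (Summable (fun k => b' k ω) ∧
      ∀ k, (∑ j ∈ Finset.range (k+1), b' j ω) ≤ (M:ℝ)) →
      Tendsto (fun k => y k ω) atTop (𝓝 0) :=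
    ae_all_iff.2 fun M => perM 𝓕 y b' hy_adapted hb'_adapted hy_int hy_nonneg
      hb'_nonneg a ha ha_div hrec' (M:ℝ) (Nat.cast_nonneg M)
  have hb'_sum : ∀ᵐ ω ∂μ, Summable (fun k => b' k ω) := by
    have hbnn : ∀ᵐ ω ∂μ, ∀ k, 0 ≤ b k ω := ae_all_iff.2 hb_nonneg
    filter_upwards [hb_sum, hbnn] with ω h1 h2
    have : (fun k => b' k ω) = fun k => c * b k ω := by
      funext k
      exact max_eq_left (mul_nonneg (Finset.sum_nonneg fun i _ => (hπ i).le) (h2 k))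
    rw [this]
    exact h1.mul_left c
  have hvnn : ∀ᵐ ω ∂μ, ∀ k, ∀ i, 0 ≤ v k ω i := ae_all_iff.2 hv_nonneg
  filter_upwards [hall, hb'_sum, hvnn] with ω h1 h2 h3
  have hb'nnω : ∀ k, 0 ≤ b' k ω := fun k => hb'_nonneg k ω
  set M : ℕ := ⌈∑' k, b' k ω⌉₊ with hMdef
  have hytend : Tendsto (fun k => y k ω) atTop (𝓝 0) := by
    apply h1 M
    refine ⟨h2, fun k => ?_⟩
    calc ∑ j ∈ Finset.range (k+1), b' j ω
        ≤ ∑' j, b' j ω := Summable.sum_le_tsum _ (fun j _ => hb'nnω j) h2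
      _ ≤ (M:ℝ) := Nat.le_ceil _
  intro i
  have hsq : Tendsto (fun k => π i * v k ω i) atTop (𝓝 0) := by
    apply squeeze_zero (fun k => mul_nonneg (hπ i).le (h3 k i)) (fun k => ?_) hytend
    exact Finset.single_le_sum (f := fun j => π j * v k ω j)
      (fun j _ => mul_nonneg (hπ j).le (h3 k j)) (Finset.mem_univ i)
  have := hsq.const_mul (π i)⁻¹
  simp only [mul_zero] at this
  have heq : (fun k => (π i)⁻¹ * (π i * v k ω i)) = fun k => v k ω i := by
    funext k
    rw [← mul_assoc, inv_mul_cancel₀ (hπ i).ne', one_mul]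
  rwa [heq] at this
end

section
/- Let f_1,…,f_m : ℝ^d → ℝ be differentiable with L-Lipschitz gradients and suppose F = (1/m)Σ_{i=1}^m f_i is convex. Then for any points x_1,…,x_m, θ* ∈ ℝ^d, any λ ≥ 0 and any γ > 0, setting x̄ = (1/m)Σ_{i=1}^m x_i, one has (2λ/m) Σ_{i=1}^m ⟨∇f_i(x_i), x̄ − θ*⟩ ≥ −(γ/m) Σ_{i=1}^m ‖x_i − x̄‖² − (L²λ²/γ) ‖x̄ − θ*‖² + 2λ (F(x̄) − F(θ*)). -/
open RealInnerProductSpace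

/-- First-order condition for convexity: if `F` is convex on `univ` and has gradient `G`
at `x`, then `⟪G, y - x⟫ ≤ F y - F x`. -/
lemma convexOn_grad_ineq {E : Type*} [NormedAddCommGroup E] [InnerProductSpace ℝ E] [CompleteSpace E]
    {F : E → ℝ} {G x : E} (hG : HasGradientAt F G x)
    (hc : ConvexOn ℝ Set.univ F) (y : E) :
    ⟪G, y - x⟫ ≤ F y - F x := by
  set u := y - x with hu
  -- the line t ↦ x + t • u has derivative u at 0
  have hline : HasDerivAt (fun t : ℝ => x + t • u) u 0 := by
    have h1 : HasDerivAt (fun t : ℝ => t • u) ((1 : ℝ) • u) 0 :=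
      (hasDerivAt_id (0 : ℝ)).smul_const u
    simpa using h1.const_add x
  have hFd : HasFDerivAt F (InnerProductSpace.toDual ℝ E G) (x + (0 : ℝ) • u) := by
    simpa using (hasGradientAt_iff_hasFDerivAt.mp hG)
  have hφ : HasDerivAt (fun t : ℝ => F (x + t • u)) ⟪G, u⟫ 0 := by
    have := hFd.comp_hasDerivAt 0 hline
    simp only [InnerProductSpace.toDual_apply_apply] at this
    exact this
  have hIoi : (Set.Ioi (0:ℝ)) \ {0} = Set.Ioi (0:ℝ) :=
    Set.diff_singleton_eq_self (by simp)
  have hT : Filter.Tendsto (slope (fun t : ℝ => F (x + t • u)) 0)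
      (nhdsWithin 0 (Set.Ioi (0:ℝ))) (nhds ⟪G, u⟫) := by
    have h2 := (hφ.hasDerivWithinAt (s := Set.Ioi (0:ℝ)))
    rw [hasDerivWithinAt_iff_tendsto_slope, hIoi] at h2
    exact h2
  have hEv : ∀ᶠ t in nhdsWithin 0 (Set.Ioi (0:ℝ)),
      slope (fun t : ℝ => F (x + t • u)) 0 t ≤ F y - F x := by
    filter_upwards [Ioc_mem_nhdsGT_of_mem (Set.mem_Ico.mpr ⟨le_refl (0:ℝ), one_pos⟩)]
      with t ht
    obtain ⟨ht0, ht1⟩ := ht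
    have hmem : x + t • u = (1 - t) • x + t • y := by
      rw [hu]; module
    have hconv := hc.2 (Set.mem_univ x) (Set.mem_univ y)
      (by linarith : (0:ℝ) ≤ 1 - t) (le_of_lt ht0) (by ring)
    rw [← hmem] at hconv
    simp only [smul_eq_mul] at hconv
    have h0 : x + (0:ℝ) • u = x := by simp
    rw [slope_def_field]
    rw [h0]
    rw [div_le_iff₀ (by linarith : (0:ℝ) < t - 0)]
    nlinarith [hconv]
  exact le_of_tendsto hT hEv
  
set_option maxHeartbeats 1000000 in
/-- The inner-product estimate (eq. (25) of the paper): for convex `F = (1/m) Σ f_i`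
with `L`-Lipschitz gradients,
`(2λ/m) Σ_i ⟨∇f_i(x_i), x̄ − θ*⟩ ≥ −(γ/m) Σ_i ‖x_i − x̄‖² − (L²λ²/γ)‖x̄ − θ*‖² + 2λ(F(x̄) − F(θ*))`. -/
theorem stmt9 {d m : ℕ} (hm : 0 < m)
    (f : Fin m → EuclideanSpace ℝ (Fin d) → ℝ)
    (g : Fin m → EuclideanSpace ℝ (Fin d) → EuclideanSpace ℝ (Fin d))
    (L : ℝ)
    (hfg : ∀ i z, HasGradientAt (f i) (g i z) z)
    (hLip : ∀ i z w, ‖g i z - g i w‖ ≤ L * ‖z - w‖)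
    (F : EuclideanSpace ℝ (Fin d) → ℝ)
    (hF : ∀ z, F z = (m : ℝ)⁻¹ * ∑ i, f i z)
    (hFconv : ConvexOn ℝ Set.univ F)
    (x : Fin m → EuclideanSpace ℝ (Fin d)) (θ : EuclideanSpace ℝ (Fin d))
    (lam γ : ℝ) (hlam : 0 ≤ lam) (hγ : 0 < γ)
    (xbar : EuclideanSpace ℝ (Fin d)) (hxbar : xbar = (m : ℝ)⁻¹ • ∑ i, x i) :
    (2 * lam / m) * ∑ i, ⟪g i (x i), xbar - θ⟫ ≥
      -(γ / m) * ∑ i, ‖x i - xbar‖ ^ 2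
        - (L ^ 2 * lam ^ 2 / γ) * ‖xbar - θ‖ ^ 2
        + 2 * lam * (F xbar - F θ) := by
  have hmR : (0:ℝ) < (m:ℝ) := by exact_mod_cast hm
  set S : EuclideanSpace ℝ (Fin d) := xbar - θ with hS
  set G : EuclideanSpace ℝ (Fin d) := (m : ℝ)⁻¹ • ∑ i, g i xbar with hG
  -- F has gradient G at xbar
  have hGrad : HasGradientAt F G xbar := by
    rw [hasGradientAt_iff_hasFDerivAt]
    have hsum : HasFDerivAt (fun z => ∑ i, f i z)
        (∑ i, InnerProductSpace.toDual ℝ _ (g i xbar)) xbar :=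
      HasFDerivAt.fun_sum (fun i _ => hasGradientAt_iff_hasFDerivAt.mp (hfg i xbar))
    have hsmul := hsum.const_mul ((m : ℝ)⁻¹)
    have hFeq : F = fun z => (m : ℝ)⁻¹ * ∑ i, f i z := funext hF
    rw [hFeq]
    convert hsmul using 1
    · rfl
    rw [hG]
    ext v
    simp [inner_smul_left, sum_inner, Finset.mul_sum]
  -- convexity inequality
  have hconv : F xbar - F θ ≤ ⟪G, S⟫ := by
    have := convexOn_grad_ineq hGrad hFconv θ
    have hneg : ⟪G, θ - xbar⟫ = -⟪G, S⟫ := by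
      rw [hS, ← inner_neg_right]; congr 1; abel
    rw [hneg] at this
    linarith
  -- relate ⟪G, S⟫ to the sum
  have hGS : (m:ℝ) * ⟪G, S⟫ = ∑ i, ⟪g i xbar, S⟫ := by
    rw [hG, real_inner_smul_left, sum_inner]
    field_simp
  -- per-index bound
  have key : ∀ i, 2 * lam * ⟪g i (x i), S⟫ ≥
      2 * lam * ⟪g i xbar, S⟫ - γ * ‖x i - xbar‖ ^ 2
        - (L ^ 2 * lam ^ 2 / γ) * ‖S‖ ^ 2 := by
    intro i
    have hsplit : ⟪g i (x i), S⟫ = ⟪g i xbar, S⟫ + ⟪g i (x i) - g i xbar, S⟫ := by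
      rw [← inner_add_left]; congr 1; abel
    set δ : EuclideanSpace ℝ (Fin d) := g i (x i) - g i xbar with hδ
    have h1 : -(‖δ‖ * ‖S‖) ≤ ⟪δ, S⟫ := neg_le_of_abs_le (abs_real_inner_le_norm δ S)
    have h2 : ‖δ‖ ≤ L * ‖x i - xbar‖ := hLip i (x i) xbar
    have h3 : (0:ℝ) ≤ ‖δ‖ := norm_nonneg _
    have h4 : (0:ℝ) ≤ ‖S‖ := norm_nonneg _
    have h5 : (0:ℝ) ≤ ‖x i - xbar‖ := norm_nonneg _
    -- 2 lam ‖δ‖ ‖S‖ ≤ γ r² + L² lam² ‖S‖² / γ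
    have hamgm : 2 * lam * (‖δ‖ * ‖S‖) ≤
        γ * ‖x i - xbar‖ ^ 2 + (L ^ 2 * lam ^ 2 / γ) * ‖S‖ ^ 2 := by
      have hnum : 0 ≤ γ * (γ * ‖x i - xbar‖ ^ 2) + L ^ 2 * lam ^ 2 * ‖S‖ ^ 2
          - γ * (2 * lam * (‖δ‖ * ‖S‖)) := by
        nlinarith [sq_nonneg (γ * ‖x i - xbar‖ - lam * L * ‖S‖),
          mul_nonneg hlam h3, mul_nonneg (mul_nonneg hγ.le hlam) h4,
          mul_le_mul_of_nonneg_left h2 hlam,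
          mul_nonneg (mul_nonneg hγ.le (mul_nonneg hlam h3)) h4]
      have hdiv := div_nonneg hnum hγ.le
      have heq2 : (γ * (γ * ‖x i - xbar‖ ^ 2) + L ^ 2 * lam ^ 2 * ‖S‖ ^ 2
          - γ * (2 * lam * (‖δ‖ * ‖S‖))) / γ
          = γ * ‖x i - xbar‖ ^ 2 + (L ^ 2 * lam ^ 2 / γ) * ‖S‖ ^ 2
            - 2 * lam * (‖δ‖ * ‖S‖) := by
        field_simp
      linarith [heq2 ▸ hdiv]
    have h6 : 2 * lam * ⟪δ, S⟫ ≥ 2 * lam * (-(‖δ‖ * ‖S‖)) := by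
      apply mul_le_mul_of_nonneg_left h1 (by linarith : (0:ℝ) ≤ 2 * lam)
    rw [hsplit]
    nlinarith [hamgm, h6]
  -- sum the per-index bounds
  have hsum : ∑ i, (2 * lam * ⟪g i xbar, S⟫ - γ * ‖x i - xbar‖ ^ 2
        - (L ^ 2 * lam ^ 2 / γ) * ‖S‖ ^ 2) ≤ ∑ i, 2 * lam * ⟪g i (x i), S⟫ :=
    Finset.sum_le_sum (fun i _ => key i)
  rw [Finset.sum_sub_distrib, Finset.sum_sub_distrib, ← Finset.mul_sum, ← Finset.mul_sum,
    Finset.sum_const, Finset.card_univ, Fintype.card_fin, nsmul_eq_mul, ← Finset.mul_sum] at hsum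
  -- combine
  have hGS' : 2 * lam * ∑ i, ⟪g i xbar, S⟫ ≥ 2 * lam * ((m:ℝ) * (F xbar - F θ)) := by
    rw [← hGS]
    apply mul_le_mul_of_nonneg_left _ (by linarith : (0:ℝ) ≤ 2 * lam)
    exact mul_le_mul_of_nonneg_left hconv hmR.le
  have hmain : 2 * lam * ∑ i, ⟪g i (x i), S⟫ ≥
      2 * lam * ((m:ℝ) * (F xbar - F θ)) - γ * ∑ i, ‖x i - xbar‖ ^ 2
        - (m:ℝ) * ((L ^ 2 * lam ^ 2 / γ) * ‖S‖ ^ 2) := by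
    linarith [hsum, hGS']
  rw [ge_iff_le, ← sub_nonneg]
  have heq : (2 * lam / m) * ∑ i, ⟪g i (x i), S⟫ -
      (-(γ / m) * ∑ i, ‖x i - xbar‖ ^ 2 - (L ^ 2 * lam ^ 2 / γ) * ‖S‖ ^ 2
        + 2 * lam * (F xbar - F θ)) =
      (m:ℝ)⁻¹ * (2 * lam * ∑ i, ⟪g i (x i), S⟫ -
        (2 * lam * ((m:ℝ) * (F xbar - F θ)) - γ * ∑ i, ‖x i - xbar‖ ^ 2
          - (m:ℝ) * ((L ^ 2 * lam ^ 2 / γ) * ‖S‖ ^ 2))) := by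
    field_simp
    ring
  rw [heq]
  apply mul_nonneg (by positivity)
  linarith [hmain]
end

section
/- Fix constants w̄ > 0 and C ≥ 0, deterministic sequences {γ^k} and {λ^k} with γ^k ∈ (0, 1/w̄] and λ^k ≥ 0, scalars ρ^k ∈ [0, 1 − w̄γ^k], and vectors e^k, d^k ∈ ℝ^d with e^0 = 0, ‖d^k‖₁ ≤ C, and e^{k+1} = ρ^k e^k − λ^k d^k for all k ≥ 0. Then for every k ≥ 1, ‖e^k‖₁ ≤ C ς^k, where ς^k = Σ_{p=1}^{k−1} (Π_{q=p}^{k−1} (1 − w̄γ^q)) λ^{p−1} + λ^{k−1}. (This is the sensitivity bound Δ^k ≤ C ς^k of Theorem 2 for Algorithm 1: e^k plays the role of x_i^k − x_i'^k, the difference of agent i's iterates in two executions of Algorithm 1 on adjacent problems producing identical observations, ρ^k = 1 + w_{ii}γ^k with w̄ = min_i |w_{ii}|, and d^k = ∇f_i(x_i^k) − ∇f_i'(x_i'^k).) -/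
/-- The finite-horizon sensitivity bound of Theorem 2 (Algorithm 1): if
`e^0 = 0`, `‖d^k‖₁ ≤ C` and `e^{k+1} = ρ^k e^k − λ^k d^k` with
`0 ≤ ρ^k ≤ 1 − w̄γ^k`, then `‖e^k‖₁ ≤ C ς^k` for all `k ≥ 1`, where
`ς^k = Σ_{p=1}^{k−1} (Π_{q=p}^{k−1} (1 − w̄γ^q)) λ^{p−1} + λ^{k−1}`. -/
theorem stmt13 {d : ℕ} (wbar C : ℝ) (hwbar : 0 < wbar) (hC : 0 ≤ C)
    (γ lam : ℕ → ℝ)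
    (hγ_pos : ∀ k, 0 < γ k) (hγ_le : ∀ k, γ k ≤ 1 / wbar)
    (hlam : ∀ k, 0 ≤ lam k)
    (ρ : ℕ → ℝ) (hρ0 : ∀ k, 0 ≤ ρ k) (hρ1 : ∀ k, ρ k ≤ 1 - wbar * γ k)
    (e dv : ℕ → Fin d → ℝ)
    (he0 : e 0 = 0)
    (hd : ∀ k, ∑ i, |dv k i| ≤ C)
    (hrec : ∀ k, e (k+1) = ρ k • e k - lam k • dv k)
    (ς : ℕ → ℝ)
    (hς : ∀ k, ς k =
      (∑ p ∈ Finset.Ico 1 k, (∏ q ∈ Finset.Ico p k, (1 - wbar * γ q)) * lam (p-1))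
        + lam (k-1)) :
    ∀ k, 1 ≤ k → ∑ i, |e k i| ≤ C * ς k := by
  have hfac : ∀ k, 0 ≤ 1 - wbar * γ k := by
    intro k
    have h := mul_le_mul_of_nonneg_left (hγ_le k) hwbar.le
    rw [mul_one_div, div_self hwbar.ne'] at h
    linarith
  have hςnn : ∀ k, 0 ≤ ς k := by
    intro k
    rw [hς k]
    have : 0 ≤ ∑ p ∈ Finset.Ico 1 k, (∏ q ∈ Finset.Ico p k, (1 - wbar * γ q)) * lam (p-1) := by
      apply Finset.sum_nonneg
      intro p _
      exact mul_nonneg (Finset.prod_nonneg fun q _ => hfac q) (hlam _)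
    linarith [hlam (k-1)]
  have hstep : ∀ k, 1 ≤ k → ς (k+1) = (1 - wbar * γ k) * ς k + lam k := by
    intro k hk
    rw [hς (k+1), hς k]
    have h1 : Finset.Ico 1 (k+1) = insert k (Finset.Ico 1 k) := by
      rw [Finset.Ico_add_one_right_eq_Icc, ← Finset.Ico_insert_right hk]
    rw [h1, Finset.sum_insert (by simp)]
    have h2 : ∀ p ∈ Finset.Ico 1 k,
        (∏ q ∈ Finset.Ico p (k+1), (1 - wbar * γ q)) * lam (p-1)
        = (1 - wbar * γ k) * ((∏ q ∈ Finset.Ico p k, (1 - wbar * γ q)) * lam (p-1)) := by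
      intro p hp
      simp only [Finset.mem_Ico] at hp
      rw [Finset.prod_Ico_succ_top (le_of_lt hp.2)]
      ring
    rw [Finset.sum_congr rfl h2, ← Finset.mul_sum,
      Finset.prod_Ico_eq_prod_range]
    have h3 : k + 1 - k = 1 := by omega
    have h4 : k + 1 - 1 = k := by omega
    rw [h3, h4]
    simp only [Finset.prod_range_one, Nat.add_zero]
    ring
  have hN : ∀ k, ∑ i, |e k i| ≥ 0 := fun k =>
    Finset.sum_nonneg fun i _ => abs_nonneg _
  intro k hk
  induction k, hk using Nat.le_induction with
  | base =>
    rw [hrec 0, he0]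
    simp only [smul_zero, zero_sub, Pi.neg_apply, Pi.smul_apply, smul_eq_mul, abs_neg, abs_mul,
      abs_of_nonneg (hlam 0), ← Finset.mul_sum]
    rw [hς 1]
    simp only [Finset.Ico_self, Finset.sum_empty, zero_add]
    calc lam 0 * ∑ i, |dv 0 i| ≤ lam 0 * C := by
          exact mul_le_mul_of_nonneg_left (hd 0) (hlam 0)
      _ = C * lam 0 := mul_comm _ _
  | succ k hk ih =>
    have hbound : ∑ i, |e (k+1) i| ≤ ρ k * (∑ i, |e k i|) + lam k * C := by
      have : ∑ i, |e (k+1) i| ≤ ρ k * (∑ i, |e k i|) + lam k * (∑ i, |dv k i|) := by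
        rw [hrec k, Finset.mul_sum, Finset.mul_sum, ← Finset.sum_add_distrib]
        apply Finset.sum_le_sum
        intro i _
        simp only [Pi.sub_apply, Pi.smul_apply, smul_eq_mul]
        calc |ρ k * e k i - lam k * dv k i| ≤ |ρ k * e k i| + |lam k * dv k i| :=
              abs_sub _ _
          _ = ρ k * |e k i| + lam k * |dv k i| := by
              rw [abs_mul, abs_mul, abs_of_nonneg (hρ0 k), abs_of_nonneg (hlam k)]
      exact this.trans (by nlinarith [hd k, hlam k])
    have h1 : ρ k * (∑ i, |e k i|) ≤ (1 - wbar * γ k) * (C * ς k) := by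
      calc ρ k * (∑ i, |e k i|) ≤ (1 - wbar * γ k) * (∑ i, |e k i|) :=
            mul_le_mul_of_nonneg_right (hρ1 k) (hN k)
        _ ≤ (1 - wbar * γ k) * (C * ς k) :=
            mul_le_mul_of_nonneg_left ih (hfac k)
    rw [hstep k hk]
    nlinarith [hlam k]
end

section
/- Fix w̄ > 0 and C ≥ 0, set γ^k = a(k+1)^{−s} and λ^k = b(k+1)^{−t} with a, b > 0, 0 < s < 1, t > s, and w̄γ^k ≤ 1 for all k. Let ρ^k ∈ [0, 1 − w̄γ^k] and let e^k, d^k ∈ ℝ^d satisfy e^0 = 0, ‖d^k‖₁ ≤ C γ^k, and e^{k+1} = ρ^k e^k − λ^k d^k for all k ≥ 0. Then there exists a constant C̄ such that ‖e^k‖₁ ≤ C̄ λ^k for all k ≥ 0; consequently, for any positive sequence {ν^k}, if Σ_{k=1}^∞ λ^k/ν^k < ∞ then Σ_{k=1}^∞ ‖e^k‖₁/ν^k < ∞. (This is the key estimate behind the finite cumulative privacy budget of Algorithm 1 over an infinite time horizon in Theorem 2: ‖e^k‖₁ is the sensitivity Δ^k of Algorithm 1 and ν^k the Laplace noise parameter.)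 -/
lemma rpow_diff_le (t : ℝ) (ht : 0 < t) (x : ℝ) (hx : 1 ≤ x) :
    x ^ (-t) - (x + 1) ^ (-t) ≤ t * x ^ (-t) / x := by
  have hx0 : (0:ℝ) < x := by linarith
  have hy0 : (0:ℝ) < 1 + 1/x := by positivity
  have hmul : (x + 1) ^ (-t) = x ^ (-t) * (1 + 1/x) ^ (-t) := by
    rw [← Real.mul_rpow hx0.le hy0.le]
    congr 1
    field_simp
  have hlog : Real.log (1 + 1/x) ≤ 1/x := by
    have := Real.log_le_sub_one_of_pos hy0
    linarith
  have hexp : 1 + (-t * Real.log (1 + 1/x)) ≤ (1 + 1/x) ^ (-t) := by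
    rw [Real.rpow_def_of_pos hy0]
    have := Real.add_one_le_exp (Real.log (1 + 1/x) * (-t))
    nlinarith
  have h1 : 1 - t / x ≤ (1 + 1/x) ^ (-t) := by
    have : -t * Real.log (1 + 1/x) ≥ -t * (1/x) := by
      apply mul_le_mul_of_nonpos_left hlog (by linarith)
    have ht' : -t * (1/x) = -(t/x) := by ring
    linarith
  have hxp : (0:ℝ) < x ^ (-t) := Real.rpow_pos_of_pos hx0 _
  have : x ^ (-t) - (x+1) ^ (-t) ≤ x ^ (-t) * (t / x) := by
    rw [hmul]
    nlinarith [hxp]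
  calc x ^ (-t) - (x+1) ^ (-t) ≤ x ^ (-t) * (t/x) := this
    _ = t * x ^ (-t) / x := by ring


/-- The infinite-horizon sensitivity estimate of Theorem 2 (Algorithm 1): with
polynomially decaying `γ^k = a(k+1)^{−s}`, `λ^k = b(k+1)^{−t}` (`0 < s < 1`,
`t > s`), if `e^0 = 0`, `‖d^k‖₁ ≤ C γ^k` and `e^{k+1} = ρ^k e^k − λ^k d^k` with
`0 ≤ ρ^k ≤ 1 − w̄γ^k`, then `‖e^k‖₁ ≤ C̄ λ^k` for some constant `C̄`; hence
summability of `λ^k/ν^k` implies summability of `‖e^k‖₁/ν^k`. -/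
theorem stmt14 {d : ℕ} (wbar C : ℝ) (hwbar : 0 < wbar) (hC : 0 ≤ C)
    (a b s t : ℝ) (ha : 0 < a) (hb : 0 < b) (hs0 : 0 < s) (hs1 : s < 1) (hts : s < t)
    (γ lam : ℕ → ℝ)
    (hγ : ∀ k, γ k = a * ((k : ℝ) + 1) ^ (-s))
    (hlam : ∀ k, lam k = b * ((k : ℝ) + 1) ^ (-t))
    (hwγ : ∀ k, wbar * γ k ≤ 1)
    (ρ : ℕ → ℝ) (hρ0 : ∀ k, 0 ≤ ρ k) (hρ1 : ∀ k, ρ k ≤ 1 - wbar * γ k)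
    (e dv : ℕ → Fin d → ℝ)
    (he0 : e 0 = 0)
    (hd : ∀ k, ∑ i, |dv k i| ≤ C * γ k)
    (hrec : ∀ k, e (k+1) = ρ k • e k - lam k • dv k) :
    (∃ Cbar : ℝ, ∀ k, ∑ i, |e k i| ≤ Cbar * lam k) ∧
    ∀ ν : ℕ → ℝ, (∀ k, 0 < ν k) → Summable (fun k => lam k / ν k) →
      Summable (fun k => (∑ i, |e k i|) / ν k) := by
  have ht0 : 0 < t := lt_trans hs0 hts
  set L : ℕ → ℝ := fun k => ∑ i, |e k i| with hLdef
  have hLnn : ∀ k, 0 ≤ L k := fun k => Finset.sum_nonneg (fun i _ => abs_nonneg _)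
  have hx1 : ∀ k : ℕ, (1:ℝ) ≤ (k:ℝ) + 1 := by
    intro k; have : (0:ℝ) ≤ (k:ℝ) := Nat.cast_nonneg k; linarith
  have hlpos : ∀ k, 0 < lam k := by
    intro k; rw [hlam k]
    exact mul_pos hb (Real.rpow_pos_of_pos (by linarith [hx1 k]) _)
  have hγpos : ∀ k, 0 < γ k := by
    intro k; rw [hγ k]
    exact mul_pos ha (Real.rpow_pos_of_pos (by linarith [hx1 k]) _)
  -- recursive bound on L
  have hstep : ∀ k, L (k+1) ≤ ρ k * L k + C * γ k * lam k := by
    intro k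
    have h1 : L (k+1) ≤ ρ k * L k + lam k * ∑ i, |dv k i| := by
      have : L (k+1) = ∑ i, |ρ k * e k i - lam k * dv k i| := by
        simp only [hLdef, hrec k, Pi.sub_apply, Pi.smul_apply, smul_eq_mul]
      rw [this]
      calc ∑ i, |ρ k * e k i - lam k * dv k i|
          ≤ ∑ i, (ρ k * |e k i| + lam k * |dv k i|) := by
            apply Finset.sum_le_sum
            intro i _
            calc |ρ k * e k i - lam k * dv k i| ≤ |ρ k * e k i| + |lam k * dv k i| :=
                  abs_sub _ _
              _ = ρ k * |e k i| + lam k * |dv k i| := by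
                  rw [abs_mul, abs_mul, abs_of_nonneg (hρ0 k), abs_of_nonneg (hlpos k).le]
        _ = ρ k * L k + lam k * ∑ i, |dv k i| := by
            rw [Finset.sum_add_distrib, ← Finset.mul_sum, ← Finset.mul_sum]
    have h2 : lam k * ∑ i, |dv k i| ≤ lam k * (C * γ k) :=
      mul_le_mul_of_nonneg_left (hd k) (hlpos k).le
    nlinarith
  -- tail estimate
  have hkey : ∃ K : ℕ, ∀ k, K ≤ k → lam k - lam (k+1) ≤ wbar / 2 * (γ k * lam k) := by
    have htend : Filter.Tendsto (fun k : ℕ => ((k:ℝ) + 1) ^ (1 - s)) Filter.atTop Filter.atTop := by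
      apply (tendsto_rpow_atTop (by linarith : (0:ℝ) < 1 - s)).comp
      exact Filter.tendsto_atTop_add_const_right _ 1 tendsto_natCast_atTop_atTop
    obtain ⟨K, hK⟩ := (Filter.tendsto_atTop.mp htend (2 * t / (wbar * a))).exists_forall_of_atTop
    refine ⟨K, fun k hk => ?_⟩
    have hKk := hK k hk
    set x : ℝ := (k:ℝ) + 1 with hxdef
    have hx : (1:ℝ) ≤ x := hx1 k
    have hx0 : (0:ℝ) < x := by linarith
    have hdiff : lam k - lam (k+1) ≤ b * (t * x ^ (-t) / x) := by
      have h := rpow_diff_le t ht0 x hx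
      have hl1 : lam k = b * x ^ (-t) := hlam k
      have hl2 : lam (k+1) = b * (x + 1) ^ (-t) := by
        rw [hlam (k+1)]; push_cast; ring_nf; simp only [hxdef]; ring_nf
      rw [hl1, hl2]
      nlinarith
    -- need b * t * x^{-t} / x ≤ (wbar/2) * a x^{-s} * b x^{-t}
    have hxp : (0:ℝ) < x ^ (-t) := Real.rpow_pos_of_pos hx0 _
    have hxs : (0:ℝ) < x ^ (-s) := Real.rpow_pos_of_pos hx0 _
    have hineq : t / x ≤ wbar / 2 * (a * x ^ (-s)) := by
      have hpow : x ^ (-s) * x = x ^ (1 - s) := by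
        rw [show (1:ℝ) - s = -s + 1 by ring, Real.rpow_add hx0, Real.rpow_one]
      have h2 : 2 * t / (wbar * a) ≤ x ^ (1 - s) := hKk
      have h5 : t ≤ wbar * a / 2 * x ^ (1 - s) := by
        have hmul := mul_le_mul_of_nonneg_left h2
          (le_of_lt (by positivity : (0:ℝ) < wbar * a / 2))
        have hteq : wbar * a / 2 * (2 * t / (wbar * a)) = t := by
          field_simp
        linarith
      have heq : wbar / 2 * (a * x ^ (-s)) * x = wbar * a / 2 * x ^ (1 - s) := by
        rw [← hpow]; ring
      rw [div_le_iff₀ hx0, heq]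
      exact h5
    have hγl : γ k * lam k = a * x ^ (-s) * (b * x ^ (-t)) := by
      rw [hγ k, hlam k]
    rw [hγl]
    calc lam k - lam (k+1) ≤ b * (t * x ^ (-t) / x) := hdiff
      _ = (t / x) * (b * x ^ (-t)) := by ring
      _ ≤ (wbar / 2 * (a * x ^ (-s))) * (b * x ^ (-t)) := by
          apply mul_le_mul_of_nonneg_right hineq; positivity
      _ = wbar / 2 * (a * x ^ (-s) * (b * x ^ (-t))) := by ring
  obtain ⟨K, hK⟩ := hkey
  -- constant
  set C0 : ℝ := 2 * C / wbar with hC0def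
  have hC0nn : 0 ≤ C0 := by positivity
  set Cbar : ℝ := max C0 ((Finset.range (K+1)).sup' (by simp) (fun k => L k / lam k)) with hCbardef
  have hCbar0 : C0 ≤ Cbar := le_max_left _ _
  have hCbarnn : 0 ≤ Cbar := le_trans hC0nn hCbar0
  have hbase : ∀ k, k ≤ K → L k ≤ Cbar * lam k := by
    intro k hk
    have hmem : k ∈ Finset.range (K+1) := Finset.mem_range.mpr (by omega)
    have := Finset.le_sup' (fun k => L k / lam k) hmem
    have h2 : L k / lam k ≤ Cbar := le_trans this (le_max_right _ _)
    rw [div_le_iff₀ (hlpos k)] at h2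
    linarith [h2]
  have hmain : ∀ k, L k ≤ Cbar * lam k := by
    intro k
    induction k with
    | zero =>
      have : L 0 = 0 := by simp [hLdef, he0]
      rw [this]; exact mul_nonneg hCbarnn (hlpos 0).le
    | succ n ih =>
      by_cases hn : n + 1 ≤ K
      · exact hbase _ hn
      · have hnK : K ≤ n := by omega
        have h1 := hstep n
        have h2 : ρ n * L n ≤ ρ n * (Cbar * lam n) :=
          mul_le_mul_of_nonneg_left ih (hρ0 n)
        have h3 := hρ1 n
        have h4 := hK n hnK
        have h5 : C * γ n ≤ wbar / 2 * Cbar * γ n := by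
          have : C ≤ wbar / 2 * Cbar := by
            have : wbar / 2 * C0 = C := by rw [hC0def, mul_div_assoc', div_eq_iff (by positivity)]; ring
            nlinarith
          exact mul_le_mul_of_nonneg_right this (hγpos n).le
        have hρub : ρ n * (Cbar * lam n) ≤ (1 - wbar * γ n) * (Cbar * lam n) := by
          exact mul_le_mul_of_nonneg_right h3 (mul_nonneg hCbarnn (hlpos n).le)
        have hγl : 0 < γ n * lam n := mul_pos (hγpos n) (hlpos n)
        nlinarith [mul_le_mul_of_nonneg_right h4 hCbarnn, hγl, hlpos n]
  refine ⟨⟨Cbar, hmain⟩, ?_⟩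
  intro ν hν hsum
  refine Summable.of_nonneg_of_le (g := fun k => L k / ν k)
    (f := fun k => Cbar * (lam k / ν k))
    (fun k => div_nonneg (hLnn k) (hν k).le) (fun k => ?_) (hsum.mul_left Cbar)
  show L k / ν k ≤ Cbar * (lam k / ν k)
  rw [mul_div_assoc']
  exact (div_le_div_iff_of_pos_right (hν k)).mpr (hmain k)
end

section
/- Let {e^k} ⊂ ℝ^d be an adapted random sequence with E[‖e^0‖²] < ∞, and let {n^k} be random vectors in ℝ^d with E[n^k | 𝓕^k] = 0 and E[‖n^k‖² | 𝓕^k] ≤ (s^k)² almost surely, where {s^k} is deterministic. Let {α^k} be a deterministic sequence with α^k ∈ (0,1] and Σ_{k=0}^∞ α^k = ∞, and let {γ₂^k} be a deterministic nonnegative sequence with Σ_{k=0}^∞ (γ₂^k)² (s^k)² < ∞. If e^{k+1} = (1 − α^k) e^k + γ₂^k n^k for all k ≥ 0, then almost surely lim_{k→∞} e^k = 0 and Σ_{k=0}^∞ α^k ‖e^k‖² < ∞. (In the analysis of Algorithm 2, e^k = ȳ^k − ḡ^k is the gradient-tracking error between the average auxiliary variable and the average gradient, and n^k is the averaged injected noise.)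 -/
open MeasureTheory Filter Topology Finset

/-- Coordinates are bounded by the Euclidean norm. -/
lemma stmt15_coord_abs_le {d : ℕ} (x : EuclideanSpace ℝ (Fin d)) (i : Fin d) :
    |x i| ≤ ‖x‖ := by
  rw [EuclideanSpace.norm_eq, ← Real.sqrt_sq_eq_abs]
  apply Real.sqrt_le_sqrt
  simpa using Finset.single_le_sum (f := fun j => x j ^ 2)
    (fun j _ => sq_nonneg _) (Finset.mem_univ i)

/-- If a vector-valued conditional expectation vanishes, so does each coordinate's. -/
lemma stmt15_condexp_coord_zero {Ω : Type*} {m : MeasurableSpace Ω}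
    {m0 : MeasurableSpace Ω} {μ : Measure Ω}
    [IsProbabilityMeasure μ] (hm : m ≤ m0) {d : ℕ}
    {f : Ω → EuclideanSpace ℝ (Fin d)} (hf : Integrable f μ)
    (h : μ[f|m] =ᵐ[μ] 0) (i : Fin d) :
    μ[fun ω => f ω i|m] =ᵐ[μ] 0 := by
  haveI : SigmaFinite (μ.trim hm) := by infer_instance
  have hfi : Integrable (fun ω => f ω i) μ := by
    have := (EuclideanSpace.proj (𝕜 := ℝ) i).integrable_comp hf
    simpa using this
  refine (ae_eq_condExp_of_forall_setIntegral_eq hm hfi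
    (fun s _ _ => (integrable_zero Ω ℝ μ).integrableOn)
    (fun s hs hμs => ?_) ?_).symm
  · have h1 : ∫ x in s, f x ∂μ = 0 := by
      have h2 : ∫ x in s, (μ[f|m]) x ∂μ = ∫ x in s, f x ∂μ :=
        setIntegral_condExp hm hf hs
      rw [← h2]
      rw [setIntegral_congr_ae (hm s hs) (h.mono fun ω hω _ => hω)]
      simp
    have h3 : ∫ x in s, f x i ∂μ = (EuclideanSpace.proj (𝕜 := ℝ) i) (∫ x in s, f x ∂μ) := by
      rw [← ContinuousLinearMap.integral_comp_comm _ hf.integrableOn]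
      simp
    simp [h3, h1]
  · exact stronglyMeasurable_const.aestronglyMeasurable

/-- Deterministic pointwise argument. -/
lemma stmt15_pointwise {α : ℕ → ℝ} (hα_pos : ∀ k, 0 < α k) (hα_div : ¬ Summable α)
    {E : ℕ → ℝ} (hE : ∀ k, 0 ≤ E k) {T : ℕ → ℝ} (hT : Tendsto T atTop (𝓝 0))
    {c : ℝ} (hconv : Tendsto (fun k => E k + ∑ j ∈ Finset.range k, α j * E j + T k)
      atTop (𝓝 c)) :
    Tendsto E atTop (𝓝 0) ∧ Summable (fun k => α k * E k) := by
  set S : ℕ → ℝ := fun k => ∑ j ∈ Finset.range k, α j * E j with hS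
  have hY : Tendsto (fun k => E k + S k) atTop (𝓝 c) := by
    have := hconv.sub hT
    simpa using this
  obtain ⟨B, hB⟩ := hY.bddAbove_range
  have hSle : ∀ k, S k ≤ B := fun k =>
    le_trans (le_add_of_nonneg_left (hE k)) (hB ⟨k, rfl⟩)
  have hsum : Summable (fun k => α k * E k) :=
    summable_of_sum_range_le (fun k => mul_nonneg (hα_pos k).le (hE k)) hSle
  have hStend : Tendsto S atTop (𝓝 (∑' k, α k * E k)) := hsum.hasSum.tendsto_sum_nat
  have hEtend : Tendsto E atTop (𝓝 (c - ∑' k, α k * E k)) := by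
    have := hY.sub hStend
    simpa using this
  set L := c - ∑' k, α k * E k with hL
  have hL0 : 0 ≤ L := ge_of_tendsto hEtend (Eventually.of_forall hE)
  rcases eq_or_lt_of_le hL0 with h | h
  · exact ⟨by rwa [← h] at hEtend, hsum⟩
  · exfalso
    have hev : ∀ᶠ k in atTop, L / 2 ≤ E k :=
      hEtend.eventually (eventually_ge_nhds (by linarith : L/2 < L))
    obtain ⟨N, hN⟩ := eventually_atTop.1 hev
    apply hα_div
    rw [← summable_nat_add_iff N]
    have hsum' : Summable (fun k => (2 / L) * (α (k + N) * E (k + N))) :=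
      (((summable_nat_add_iff N).2 hsum)).mul_left _
    refine Summable.of_nonneg_of_le (fun k => (hα_pos _).le) (fun k => ?_) hsum'
    have h1 : L / 2 ≤ E (k + N) := hN _ (Nat.le_add_left _ _)
    have h2 : 0 < α (k + N) := hα_pos _
    rw [div_mul_eq_mul_div, le_div_iff₀ (by linarith : (0:ℝ) < L)]
    calc α (k+N) * L = α (k+N) * (2 * (L/2)) := by ring
      _ ≤ α (k+N) * (2 * E (k+N)) := by nlinarith
      _ = 2 * (α (k+N) * E (k+N)) := by ring

/-- The gradient-tracking-error estimate used in the proof of Theorem 3 of the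
paper: if `e^{k+1} = (1 − α^k) e^k + γ₂^k n^k` with conditionally centered noise
of conditional second moment at most `(s^k)²`, `α^k ∈ (0,1]` non-summable and
`Σ (γ₂^k)²(s^k)² < ∞`, then a.s. `e^k → 0` and `Σ α^k ‖e^k‖² < ∞`. -/
theorem stmt15 {d : ℕ}
    {Ω : Type*} {m0 : MeasurableSpace Ω} {μ : Measure Ω} [IsProbabilityMeasure μ]
    (𝓕 : Filtration ℕ m0)
    (e n : ℕ → Ω → EuclideanSpace ℝ (Fin d))
    (he_adapted : Adapted 𝓕 e)
    (he0 : Integrable (fun ω => ‖e 0 ω‖ ^ 2) μ)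
    (he_int : ∀ k, Integrable (fun ω => ‖e k ω‖ ^ 2) μ)
    (hn_int : ∀ k, Integrable (n k) μ)
    (s : ℕ → ℝ)
    (hn_mean : ∀ k, μ[n k | 𝓕 k] =ᵐ[μ] 0)
    (hn_var : ∀ k, ∀ᵐ ω ∂μ,
      (μ[(fun ω' => ‖n k ω'‖ ^ 2) | 𝓕 k]) ω ≤ (s k) ^ 2)
    (α γ2 : ℕ → ℝ)
    (hα_pos : ∀ k, 0 < α k) (hα_le : ∀ k, α k ≤ 1) (hα_div : ¬ Summable α)
    (hγ2 : ∀ k, 0 ≤ γ2 k)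
    (hsum : Summable (fun k => (γ2 k) ^ 2 * (s k) ^ 2))
    (hrec : ∀ k ω, e (k+1) ω = (1 - α k) • e k ω + γ2 k • n k ω) :
    ∀ᵐ ω ∂μ, Tendsto (fun k => e k ω) atTop (𝓝 (0 : EuclideanSpace ℝ (Fin d))) ∧
      Summable (fun k => α k * ‖e k ω‖ ^ 2) := by
  classical
  -- strongly measurable squares
  have hesm : ∀ k, StronglyMeasurable[𝓕 k] (fun ω => ‖e k ω‖ ^ 2) :=
    fun k => (show StronglyMeasurable[𝓕 k] (e k) from (he_adapted k).stronglyMeasurable).norm.pow 2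
  -- Step 1: key one-step conditional inequality
  have hkey : ∀ k, μ[(fun ω => ‖e (k+1) ω‖ ^ 2)|𝓕 k] ≤ᵐ[μ]
      (fun ω => (1 - α k) * ‖e k ω‖ ^ 2 + (γ2 k) ^ 2 * (s k) ^ 2) := by
    intro k
    have hα1 : 0 ≤ 1 - α k := by linarith [hα_le k]
    have hsqle : (1 - α k) ^ 2 ≤ 1 - α k := by nlinarith [hα_pos k, hα_le k]
    by_cases h0 : γ2 k = 0
    · have heq : (fun ω => ‖e (k+1) ω‖ ^ 2)
          = fun ω => (1 - α k) ^ 2 * ‖e k ω‖ ^ 2 := by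
        funext ω
        rw [hrec k ω, h0, zero_smul, add_zero, norm_smul, Real.norm_eq_abs,
          abs_of_nonneg hα1, mul_pow]
      rw [heq, condExp_of_stronglyMeasurable (𝓕.le k) ((hesm k).const_mul _)
        ((he_int k).const_mul _)]
      refine Eventually.of_forall (fun ω => ?_)
      simp only []
      have h1 : 0 ≤ ‖e k ω‖ ^ 2 := sq_nonneg _
      have h2 : 0 ≤ (γ2 k) ^ 2 * (s k) ^ 2 := mul_nonneg (sq_nonneg _) (sq_nonneg _)
      nlinarith [mul_le_mul_of_nonneg_right hsqle h1]
    · have hγpos : 0 < γ2 k := (hγ2 k).lt_of_ne (Ne.symm h0)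
      have hnm : AEStronglyMeasurable (n k) μ := (hn_int k).aestronglyMeasurable
      have hesm0 : AEStronglyMeasurable (e k) μ :=
        ((he_adapted k).mono (𝓕.le k) le_rfl).aestronglyMeasurable
      -- integrability of ‖n k‖²
      have hnsq_int : Integrable (fun ω => ‖n k ω‖ ^ 2) μ := by
        refine Integrable.mono
          ((((he_int (k+1)).const_mul 2).add ((he_int k).const_mul 2)).const_mul
            ((γ2 k)⁻¹ ^ 2)) (hnm.norm.pow 2) (Eventually.of_forall fun ω => ?_)
        have h1 : γ2 k * ‖n k ω‖ ≤ ‖e (k+1) ω‖ + ‖e k ω‖ := by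
          have he1 : γ2 k • n k ω = e (k+1) ω - (1 - α k) • e k ω := by
            rw [hrec k ω]; abel
          have h2 : ‖γ2 k • n k ω‖ ≤ ‖e (k+1) ω‖ + ‖(1 - α k) • e k ω‖ := by
            rw [he1]; exact norm_sub_le _ _
          have h3 : ‖(1 - α k) • e k ω‖ ≤ ‖e k ω‖ := by
            rw [norm_smul, Real.norm_eq_abs, abs_of_nonneg hα1]
            nlinarith [norm_nonneg (e k ω), hα_pos k]
          have h4 : ‖γ2 k • n k ω‖ = γ2 k * ‖n k ω‖ := by
            rw [norm_smul, Real.norm_eq_abs, abs_of_nonneg (hγ2 k)]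
          linarith
        have h5 : ‖n k ω‖ ≤ (‖e (k+1) ω‖ + ‖e k ω‖) / γ2 k := by
          rw [le_div_iff₀ hγpos]
          linarith [h1, mul_comm (γ2 k) ‖n k ω‖]
        have h6 : 0 ≤ (γ2 k)⁻¹ := inv_nonneg.2 (hγ2 k)
        have h7 : ‖n k ω‖ ^ 2 ≤ ((‖e (k+1) ω‖ + ‖e k ω‖) / γ2 k) ^ 2 :=
          pow_le_pow_left₀ (norm_nonneg _) h5 2
        have h8 : ((‖e (k+1) ω‖ + ‖e k ω‖) / γ2 k) ^ 2
            = (γ2 k)⁻¹ ^ 2 * (‖e (k+1) ω‖ + ‖e k ω‖) ^ 2 := by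
          rw [div_pow]; ring
        have h9 : (‖e (k+1) ω‖ + ‖e k ω‖) ^ 2 ≤ 2 * ‖e (k+1) ω‖ ^ 2 + 2 * ‖e k ω‖ ^ 2 := by
          nlinarith [sq_nonneg (‖e (k+1) ω‖ - ‖e k ω‖)]
        have h10 : (γ2 k)⁻¹ ^ 2 * (‖e (k+1) ω‖ + ‖e k ω‖) ^ 2
            ≤ (γ2 k)⁻¹ ^ 2 * (2 * ‖e (k+1) ω‖ ^ 2 + 2 * ‖e k ω‖ ^ 2) :=
          mul_le_mul_of_nonneg_left h9 (sq_nonneg _)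
        simp only [Pi.add_apply]
        rw [Real.norm_of_nonneg (sq_nonneg _), Real.norm_of_nonneg (by positivity)]
        linarith
      -- integrability of the inner product
      have hip_int : Integrable (fun ω => (inner ℝ (e k ω) (n k ω) : ℝ)) μ := by
        refine Integrable.mono ((he_int k).add hnsq_int) (hesm0.inner hnm)
          (Eventually.of_forall fun ω => ?_)
        simp only [Pi.add_apply]
        rw [Real.norm_eq_abs, Real.norm_of_nonneg (by positivity)]
        have h1 := abs_real_inner_le_norm (e k ω) (n k ω)
        nlinarith [sq_nonneg (‖e k ω‖ - ‖n k ω‖)]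
      -- coordinate products are integrable
      have hcoord_int : ∀ i : Fin d, Integrable (fun ω => e k ω i * n k ω i) μ := by
        intro i
        refine Integrable.mono ((he_int k).add hnsq_int)
          (((EuclideanSpace.proj (𝕜 := ℝ) i).continuous.comp_aestronglyMeasurable
              hesm0).mul
            ((EuclideanSpace.proj (𝕜 := ℝ) i).continuous.comp_aestronglyMeasurable hnm))
          (Eventually.of_forall fun ω => ?_)
        simp only [Pi.add_apply]
        rw [Real.norm_eq_abs, abs_mul, Real.norm_of_nonneg (by positivity)]
        have h1 := stmt15_coord_abs_le (e k ω) i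
        have h2 := stmt15_coord_abs_le (n k ω) i
        have h3 : |e k ω i| * |n k ω i| ≤ ‖e k ω‖ * ‖n k ω‖ :=
          mul_le_mul h1 h2 (abs_nonneg _) (norm_nonneg _)
        nlinarith [sq_nonneg (‖e k ω‖ - ‖n k ω‖)]
      -- conditional expectation of the inner product is zero
      have hip_zero : μ[(fun ω => (inner ℝ (e k ω) (n k ω) : ℝ))|𝓕 k] =ᵐ[μ] 0 := by
        have hipeq : (fun ω => (inner ℝ (e k ω) (n k ω) : ℝ))
            = ∑ i : Fin d, (fun ω => e k ω i * n k ω i) := by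
          funext ω
          simp [PiLp.inner_apply, RCLike.inner_apply, Finset.sum_apply, mul_comm]
        rw [hipeq]
        refine (condExp_finset_sum (fun i _ => hcoord_int i) (𝓕 k)).trans ?_
        have hzero : ∀ i : Fin d,
            μ[(fun ω => e k ω i * n k ω i)|𝓕 k] =ᵐ[μ] 0 := by
          intro i
          have hni_int : Integrable (fun ω => n k ω i) μ := by
            have := (EuclideanSpace.proj (𝕜 := ℝ) i).integrable_comp (hn_int k)
            simpa using this
          have hei_sm : StronglyMeasurable[𝓕 k] (fun ω => e k ω i) :=
            (EuclideanSpace.proj (𝕜 := ℝ) i).continuous.comp_stronglyMeasurable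
              (show StronglyMeasurable[𝓕 k] (e k) from (he_adapted k).stronglyMeasurable)
          have hmul := condExp_mul_of_stronglyMeasurable_left hei_sm
            (show Integrable ((fun ω => e k ω i) * fun ω => n k ω i) μ from
              hcoord_int i) hni_int
          have hzi := stmt15_condexp_coord_zero (𝓕.le k) (hn_int k) (hn_mean k) i
          refine hmul.trans ?_
          filter_upwards [hzi] with ω hω
          simp [hω]
        have hall : ∀ᵐ ω ∂μ, ∀ i : Fin d,
            (μ[(fun ω' => e k ω' i * n k ω' i)|𝓕 k]) ω = 0 :=
          (ae_all_iff).2 fun i => (hzero i).mono fun ω hω => hω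
        filter_upwards [hall] with ω hω
        simp [Finset.sum_apply, hω]
      -- expansion of the squared norm
      have hexp : (fun ω => ‖e (k+1) ω‖ ^ 2)
          = ((fun ω => (1 - α k) ^ 2 * ‖e k ω‖ ^ 2)
              + (2 * (1 - α k) * γ2 k) • (fun ω => (inner ℝ (e k ω) (n k ω) : ℝ)))
            + (γ2 k) ^ 2 • (fun ω => ‖n k ω‖ ^ 2) := by
        funext ω
        simp only [Pi.add_apply, Pi.smul_apply, smul_eq_mul]
        rw [hrec k ω, norm_add_sq_real, norm_smul, norm_smul,
          real_inner_smul_left, real_inner_smul_right, Real.norm_eq_abs,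
          Real.norm_eq_abs, abs_of_nonneg hα1, abs_of_nonneg (hγ2 k)]
        ring
      rw [hexp]
      have hA_int : Integrable (fun ω => (1 - α k) ^ 2 * ‖e k ω‖ ^ 2) μ :=
        (he_int k).const_mul _
      have hB_int : Integrable
          ((2 * (1 - α k) * γ2 k) • (fun ω => (inner ℝ (e k ω) (n k ω) : ℝ))) μ :=
        hip_int.smul _
      have hC_int : Integrable ((γ2 k) ^ 2 • (fun ω => ‖n k ω‖ ^ 2)) μ :=
        hnsq_int.smul _
      have h1 := condExp_add (hA_int.add hB_int) hC_int (m := 𝓕 k)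
      have h2 := condExp_add hA_int hB_int (m := 𝓕 k)
      have hA_eq : μ[(fun ω => (1 - α k) ^ 2 * ‖e k ω‖ ^ 2)|𝓕 k]
          = fun ω => (1 - α k) ^ 2 * ‖e k ω‖ ^ 2 :=
        condExp_of_stronglyMeasurable (𝓕.le k) ((hesm k).const_mul _) hA_int
      have hB_eq := (condExp_smul (μ := μ) (m := 𝓕 k) (2 * (1 - α k) * γ2 k)
        (fun ω => (inner ℝ (e k ω) (n k ω) : ℝ)))
      have hC_eq := (condExp_smul (μ := μ) (m := 𝓕 k) ((γ2 k) ^ 2)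
        (fun ω => ‖n k ω‖ ^ 2))
      filter_upwards [h1, h2, hB_eq, hC_eq, hip_zero, hn_var k] with ω hω1 hω2 hωB
        hωC hωip hωvar
      simp only [Pi.add_apply] at hω1 hω2
      rw [hω1, hω2, hA_eq, hωB, hωC]
      simp only [Pi.smul_apply, smul_eq_mul, hωip]
      have h3 : (γ2 k) ^ 2 * (μ[(fun ω' => ‖n k ω'‖ ^ 2)|𝓕 k]) ω
          ≤ (γ2 k) ^ 2 * (s k) ^ 2 :=
        mul_le_mul_of_nonneg_left hωvar (sq_nonneg _)
      have h4 : 0 ≤ ‖e k ω‖ ^ 2 := sq_nonneg _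
      simp only [Pi.zero_apply, mul_zero]
      nlinarith
  -- Step 2: construct the nonnegative supermartingale
  set u : ℕ → ℝ := fun k => (γ2 k) ^ 2 * (s k) ^ 2 with hu_def
  have hu0 : ∀ k, 0 ≤ u k := fun k => mul_nonneg (sq_nonneg _) (sq_nonneg _)
  set T : ℕ → ℝ := fun k => ∑' j, u (j + k) with hT_def
  have hT0 : ∀ k, 0 ≤ T k := fun k => tsum_nonneg (fun j => hu0 _)
  have hTsplit : ∀ k, T k = u k + T (k+1) := by
    intro k
    have hs' : Summable (fun j => u (j + k)) := (summable_nat_add_iff k).2 hsum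
    have h := Summable.tsum_eq_zero_add hs'
    simp only [zero_add] at h
    rw [hT_def]
    simp only []
    rw [h]
    congr 1
    apply tsum_congr
    intro b
    congr 1
    omega
  set S : ℕ → Ω → ℝ := fun k ω => ∑ j ∈ Finset.range k, α j * ‖e j ω‖ ^ 2 with hS_def
  have hS0 : ∀ k ω, 0 ≤ S k ω := fun k ω =>
    Finset.sum_nonneg fun j _ => mul_nonneg (hα_pos j).le (sq_nonneg _)
  have hSsm : ∀ k l, l ≤ k + 1 → StronglyMeasurable[𝓕 k] (S l) := by
    intro k l hl
    refine Finset.stronglyMeasurable_fun_sum _ fun j hj => ?_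
    have hjk : j ≤ k := by
      have := Finset.mem_range.1 hj; omega
    exact ((hesm j).mono (𝓕.mono hjk)).const_mul _
  have hS_int : ∀ k, Integrable (S k) μ := by
    intro k
    exact integrable_finset_sum _ fun j _ => (he_int j).const_mul _
  set X : ℕ → Ω → ℝ := fun k ω => ‖e k ω‖ ^ 2 + S k ω + T k with hX_def
  have hX0 : ∀ k ω, 0 ≤ X k ω := fun k ω => by
    have := sq_nonneg (‖e k ω‖); have := hS0 k ω; have := hT0 k
    simp only [hX_def]; positivity
  have hX_adapted : StronglyAdapted 𝓕 X := by
    intro k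
    exact ((hesm k).add (hSsm k k k.le_succ)).add stronglyMeasurable_const
  have hX_int : ∀ k, Integrable (X k) μ := fun k =>
    ((he_int k).add (hS_int k)).add (integrable_const _)
  have hX_step : ∀ k, μ[X (k+1)|𝓕 k] ≤ᵐ[μ] X k := by
    intro k
    have hXsplit : X (k+1) = (fun ω => ‖e (k+1) ω‖ ^ 2)
        + fun ω => S (k+1) ω + T (k+1) := by
      funext ω; simp only [hX_def, Pi.add_apply]; ring
    have hrest_int : Integrable (fun ω => S (k+1) ω + T (k+1)) μ :=
      (hS_int (k+1)).add (integrable_const _)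
    have hrest_sm : StronglyMeasurable[𝓕 k] (fun ω => S (k+1) ω + T (k+1)) :=
      (hSsm k (k+1) le_rfl).add stronglyMeasurable_const
    have h1 : μ[X (k+1)|𝓕 k] =ᵐ[μ]
        μ[(fun ω => ‖e (k+1) ω‖ ^ 2)|𝓕 k] + fun ω => S (k+1) ω + T (k+1) := by
      rw [hXsplit]
      refine (condExp_add (he_int (k+1)) hrest_int (𝓕 k)).trans ?_
      rw [condExp_of_stronglyMeasurable (𝓕.le k) hrest_sm hrest_int]
    filter_upwards [h1, hkey k] with ω hω1 hω2
    rw [hω1]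
    simp only [Pi.add_apply]
    have hSrec : S (k+1) ω = S k ω + α k * ‖e k ω‖ ^ 2 := by
      simp only [hS_def]; rw [Finset.sum_range_succ]
    have hTs := hTsplit k
    simp only [hX_def]
    calc (μ[(fun ω' => ‖e (k+1) ω'‖ ^ 2)|𝓕 k]) ω + (S (k+1) ω + T (k+1))
        ≤ ((1 - α k) * ‖e k ω‖ ^ 2 + u k) + (S (k+1) ω + T (k+1)) := by
          have := hω2; simp only [hu_def]; linarith [hω2]
      _ = ‖e k ω‖ ^ 2 + S k ω + T k := by
          rw [hSrec, hTs]; ring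
  have hsuper : Supermartingale X 𝓕 μ := supermartingale_nat hX_adapted hX_int hX_step
  -- Step 3: L¹ boundedness and a.s. convergence
  have hEX : ∀ k, ∫ ω, X k ω ∂μ ≤ ∫ ω, X 0 ω ∂μ := by
    intro k
    have h := hsuper.2.1 0 k (Nat.zero_le k)
    have h2 : ∫ ω, (μ[X k|𝓕 0]) ω ∂μ = ∫ ω, X k ω ∂μ := integral_condExp (𝓕.le 0)
    rw [← h2]
    exact integral_mono_ae integrable_condExp (hX_int 0) h
  have hEX0 : 0 ≤ ∫ ω, X 0 ω ∂μ := integral_nonneg (hX0 0)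
  set R : NNReal := (∫ ω, X 0 ω ∂μ).toNNReal with hR_def
  have hbdd : ∀ k, eLpNorm ((-X) k) 1 μ ≤ (R : ENNReal) := by
    intro k
    have h1 : (-X) k = -(X k) := rfl
    rw [h1, eLpNorm_neg, eLpNorm_one_eq_lintegral_enorm,
      ← ofReal_integral_norm_eq_lintegral_enorm (hX_int k)]
    have h2 : ∫ ω, ‖X k ω‖ ∂μ = ∫ ω, X k ω ∂μ :=
      integral_congr_ae (Eventually.of_forall fun ω => Real.norm_of_nonneg (hX0 k ω))
    rw [h2]
    have h3 : (R : ENNReal) = ENNReal.ofReal (∫ ω, X 0 ω ∂μ) := by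
      rw [hR_def, ENNReal.ofReal]
    rw [h3]
    exact ENNReal.ofReal_le_ofReal (hEX k)
  have hconvX := (hsuper.neg.ae_tendsto_limitProcess hbdd)
  -- Step 4: pointwise conclusion
  filter_upwards [hconvX] with ω hω
  have hXconv : Tendsto (fun k => X k ω) atTop
      (𝓝 (-(𝓕.limitProcess (-X) μ ω))) := by
    have := hω.neg
    simp only [Pi.neg_apply, neg_neg] at this
    exact this
  have hTtend : Tendsto T atTop (𝓝 0) := tendsto_sum_nat_add u
  have hpt := stmt15_pointwise hα_pos hα_div (fun k => sq_nonneg (‖e k ω‖)) hTtend hXconv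
  obtain ⟨h1, h2⟩ := hpt
  refine ⟨?_, h2⟩
  rw [tendsto_zero_iff_norm_tendsto_zero]
  have h3 : Tendsto (fun k => Real.sqrt (‖e k ω‖ ^ 2)) atTop (𝓝 (Real.sqrt 0)) :=
    (Real.continuous_sqrt.tendsto 0).comp h1
  simp only [Real.sqrt_zero] at h3
  refine h3.congr fun k => ?_
  rw [Real.sqrt_sq (norm_nonneg _)]
end
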